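/- arXiv:2403.05134 — 13 statements merged into one kernel-verified Lean document; each statement's English description precedes it below -/
import Mathlib

section
/- For every real α > 0 and every real x > 0, the lower incomplete gamma function satisfies γ(1 + 1/α, x) ≤ Γ(1 + 1/α) · (1 − e^{−x}). -/
open Real MeasureTheory Set

lemma aux_int (x : ℝ) (f : ℝ → ℝ) (hf : IntegrableOn f (Ioi x)) :
    IntegrableOn (fun s => f (s + x)) (Ioi 0) := by
  have hmp : MeasurePreserving (fun s : ℝ => s + x)
      (volume.restrict (Ioi 0)) (volume.restrict (Ioi x)) := by
    have h := (measurePreserving_add_right (volume : Measure ℝ) x).restrict_preimage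
      (measurableSet_Ioi (a := x))
    have hpre : (fun s : ℝ => s + x) ⁻¹' Ioi x = Ioi 0 := by
      ext s; simp [lt_add_iff_pos_left]
    rwa [hpre] at h
  exact (hmp.integrable_comp_emb (measurableEmbedding_addRight x)).mpr hf

lemma aux_shift (x : ℝ) (f : ℝ → ℝ) :
    ∫ t in Ioi x, f t = ∫ s in Ioi 0, f (s + x) := by
  have h := (measurePreserving_add_right (volume : Measure ℝ) x).setIntegral_preimage_emb
    (measurableEmbedding_addRight x) f (Ioi x)
  have : (fun s => s + x) ⁻¹' Ioi x = Ioi 0 := by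
    ext s; simp [lt_add_iff_pos_left]
  rw [this] at h
  exact h.symm

/-- For `α > 0` and `x > 0`, `γ(1 + 1/α, x) ≤ Γ(1 + 1/α) * (1 - e^(-x))`,
where `γ` is the lower incomplete gamma function. -/
theorem stmt_1 (α x : ℝ) (hα : 0 < α) (hx : 0 < x) :
    (∫ t in (0:ℝ)..x, t ^ (1 + 1/α - 1) * Real.exp (-t)) ≤
      Real.Gamma (1 + 1/α) * (1 - Real.exp (-x)) := by
  set a : ℝ := 1 + 1/α with ha
  have ha0 : 0 < a := by positivity
  have ham1 : 0 ≤ a - 1 := by simp [ha]; positivity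
  set f : ℝ → ℝ := fun t => t ^ (a - 1) * Real.exp (-t) with hf
  have hfint : IntegrableOn f (Ioi 0) := by
    have := Real.GammaIntegral_convergent ha0
    exact this.congr_fun (fun t ht => by simp [hf, mul_comm]) measurableSet_Ioi
  have hGamma : Real.Gamma a = ∫ t in Ioi 0, f t := by
    rw [Real.Gamma_eq_integral ha0]
    exact setIntegral_congr_fun measurableSet_Ioi fun t ht => by simp [hf, mul_comm]
  -- split Ioi 0 = Ioc 0 x ∪ Ioi x
  have hsplit : (∫ t in Ioi 0, f t) = (∫ t in Ioc 0 x, f t) + ∫ t in Ioi x, f t := by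
    rw [← setIntegral_union (Ioc_disjoint_Ioi le_rfl) measurableSet_Ioi
      (hfint.mono_set Ioc_subset_Ioi_self) (hfint.mono_set (Ioi_subset_Ioi hx.le)),
      Ioc_union_Ioi_eq_Ioi hx.le]
  have hineq : Real.exp (-x) * Real.Gamma a ≤ ∫ t in Ioi x, f t := by
    rw [aux_shift x f, hGamma, ← integral_const_mul]
    apply setIntegral_mono_on
    · exact (hfint.const_mul _)
    · exact aux_int x f (hfint.mono_set (Ioi_subset_Ioi hx.le))
    · exact measurableSet_Ioi
    · intro s hs
      simp only [hf]
      rw [neg_add, Real.exp_add]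
      have h1 : s ^ (a - 1) ≤ (s + x) ^ (a - 1) :=
        Real.rpow_le_rpow (le_of_lt hs) (by linarith [(show (0:ℝ) < s from hs).le]) ham1
      have h2 : 0 < Real.exp (-s) := Real.exp_pos _
      calc Real.exp (-x) * (s ^ (a - 1) * Real.exp (-s))
          ≤ Real.exp (-x) * ((s + x) ^ (a - 1) * Real.exp (-s)) := by
            apply mul_le_mul_of_nonneg_left _ (Real.exp_pos _).le
            exact mul_le_mul_of_nonneg_right h1 h2.le
        _ = (s + x) ^ (a - 1) * (Real.exp (-s) * Real.exp (-x)) := by ring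
  have hIoc : (∫ t in (0:ℝ)..x, t ^ (1 + 1/α - 1) * Real.exp (-t)) = ∫ t in Ioc 0 x, f t := by
    rw [intervalIntegral.integral_of_le hx.le]
  have : (∫ t in Ioc 0 x, f t) = Real.Gamma a - ∫ t in Ioi x, f t := by
    rw [hGamma, hsplit]; ring
  rw [hIoc, this]
  have : Real.Gamma a * (1 - Real.exp (-x)) = Real.Gamma a - Real.exp (-x) * Real.Gamma a := by
    ring
  rw [this]
  linarith [hineq]
end

section
/- For every real α > 1 and every positive integer i, the function x ↦ B(x; 1 + 1/α, i) / B(x; 1, i) is monotonically increasing on the interval (0, 1]. -/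
open Real MeasureTheory

/-- For `α > 1` and a positive integer `i`, the map
`x ↦ B(x; 1 + 1/α, i) / B(x; 1, i)` is monotonically increasing on `(0, 1]`,
where `B(x; a, b) = ∫₀ˣ t^(a-1) (1-t)^(b-1) dt` is the incomplete Beta function. -/
theorem stmt_3 (α : ℝ) (hα : 1 < α) (i : ℕ) (hi : 0 < i) :
    MonotoneOn (fun x : ℝ =>
      (∫ t in (0:ℝ)..x, t ^ (1/α) * (1 - t) ^ (i - 1)) /
      (∫ t in (0:ℝ)..x, (1 - t) ^ (i - 1)))
      (Set.Ioc (0:ℝ) 1) := by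
  have hc : 0 < 1/α := by positivity
  have hgcont : Continuous fun t : ℝ => (1 - t) ^ (i - 1) := by continuity
  have hfcont : Continuous fun t : ℝ => t ^ (1/α) * (1 - t) ^ (i - 1) := by
    refine Continuous.mul ?_ hgcont
    exact continuous_iff_continuousAt.2 fun x =>
      Real.continuousAt_rpow_const x (1/α) (Or.inr hc.le)
  intro x hx y hy hxy
  obtain ⟨hx0, hx1⟩ := hx
  obtain ⟨hy0, hy1⟩ := hy
  set N : ℝ → ℝ := fun z => ∫ t in (0:ℝ)..z, t ^ (1/α) * (1 - t) ^ (i - 1)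
    with hN
  set D : ℝ → ℝ := fun z => ∫ t in (0:ℝ)..z, (1 - t) ^ (i - 1) with hD
  have hDx : 0 < D x := by
    refine intervalIntegral.intervalIntegral_pos_of_pos_on
      (hgcont.intervalIntegrable 0 x) (fun t ht => ?_) hx0
    have h1 : (0:ℝ) < 1 - t := by
      have := ht.2; linarith
    positivity
  have hDy : 0 < D y := by
    refine intervalIntegral.intervalIntegral_pos_of_pos_on
      (hgcont.intervalIntegrable 0 y) (fun t ht => ?_) hy0
    have h1 : (0:ℝ) < 1 - t := by
      have := ht.2; linarith
    positivity
  have hsplitD : D x + (∫ t in x..y, (1 - t) ^ (i - 1)) = D y :=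
    intervalIntegral.integral_add_adjacent_intervals
      (hgcont.intervalIntegrable 0 x) (hgcont.intervalIntegrable x y)
  have hsplitN :
      N x + (∫ t in x..y, t ^ (1/α) * (1 - t) ^ (i - 1)) = N y :=
    intervalIntegral.integral_add_adjacent_intervals
      (hfcont.intervalIntegrable 0 x) (hfcont.intervalIntegrable x y)
  have hDI : 0 ≤ ∫ t in x..y, (1 - t) ^ (i - 1) := by
    refine intervalIntegral.integral_nonneg hxy fun t ht => ?_
    exact pow_nonneg (by linarith [ht.2]) _
  have hNx0 : 0 ≤ N x := by
    refine intervalIntegral.integral_nonneg hx0.le fun t ht => ?_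
    exact mul_nonneg (Real.rpow_nonneg ht.1 _)
      (pow_nonneg (by linarith [ht.2]) _)
  -- Inequality A : N x ≤ x^(1/α) * D x
  have hA : N x ≤ x ^ (1/α) * D x := by
    have h1 : N x ≤ ∫ t in (0:ℝ)..x, x ^ (1/α) * (1 - t) ^ (i - 1) := by
      refine intervalIntegral.integral_mono_on hx0.le
        (hfcont.intervalIntegrable 0 x)
        ((continuous_const.mul hgcont).intervalIntegrable 0 x)
        (fun t ht => ?_)
      exact mul_le_mul_of_nonneg_right
        (Real.rpow_le_rpow ht.1 ht.2 hc.le)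
        (pow_nonneg (by linarith [ht.2]) _)
    rwa [intervalIntegral.integral_const_mul] at h1
  -- Inequality B : x^(1/α) * ∫_x^y g ≤ ∫_x^y f
  have hB : x ^ (1/α) * (∫ t in x..y, (1 - t) ^ (i - 1))
      ≤ ∫ t in x..y, t ^ (1/α) * (1 - t) ^ (i - 1) := by
    rw [← intervalIntegral.integral_const_mul]
    refine intervalIntegral.integral_mono_on hxy
      ((continuous_const.mul hgcont).intervalIntegrable x y)
      (hfcont.intervalIntegrable x y)
      (fun t ht => ?_)
    exact mul_le_mul_of_nonneg_right
      (Real.rpow_le_rpow hx0.le ht.1 hc.le)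
      (pow_nonneg (by linarith [ht.2]) _)
  rw [div_le_div_iff₀ hDx hDy]
  nlinarith [mul_le_mul_of_nonneg_right hA hDI,
    mul_le_mul_of_nonneg_right hB hDx.le]
end

section
/- Fix a positive integer K ≥ 2, a real α > 0, and distinct indices i, j ∈ {1, …, K}. If λ, λ′ ∈ [0, ∞)^K agree in every coordinate except possibly the j-th, and λ_j ≤ λ′_j, then I_{i,α+2}(λ; α) / I_{i,α+1}(λ; α) ≤ I_{i,α+2}(λ′; α) / I_{i,α+1}(λ′; α); that is, the ratio I_{i,α+2}/I_{i,α+1} is monotonically increasing with respect to λ_j for every j ≠ i. -/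
open Real MeasureTheory
open Set

lemma chebyshev_fkg (f g w : ℝ → ℝ)
    (hf : AntitoneOn f (Ioi 0)) (hg : AntitoneOn g (Ioi 0))
    (hw : ∀ x ∈ Ioi (0:ℝ), 0 ≤ w x)
    (hW : IntegrableOn w (Ioi 0))
    (hFW : IntegrableOn (fun x => f x * w x) (Ioi 0))
    (hGW : IntegrableOn (fun x => g x * w x) (Ioi 0))
    (hFGW : IntegrableOn (fun x => f x * g x * w x) (Ioi 0)) :
    (∫ x in Ioi (0:ℝ), f x * w x) * (∫ x in Ioi (0:ℝ), g x * w x) ≤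
      (∫ x in Ioi (0:ℝ), f x * g x * w x) * (∫ x in Ioi (0:ℝ), w x) := by
  set ν := volume.restrict (Ioi (0:ℝ)) with hν
  have key : 0 ≤ ∫ p : ℝ × ℝ, (f p.1 - f p.2) * (g p.1 - g p.2) * (w p.1 * w p.2) ∂(ν.prod ν) := by
    apply integral_nonneg_of_ae
    have hmem : ∀ᵐ p : ℝ × ℝ ∂(ν.prod ν), p ∈ (Ioi (0:ℝ)) ×ˢ (Ioi (0:ℝ)) := by
      rw [hν, Measure.prod_restrict]
      exact ae_restrict_mem (measurableSet_Ioi.prod measurableSet_Ioi)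
    filter_upwards [hmem] with p hp
    obtain ⟨h1, h2⟩ := hp
    have : 0 ≤ (f p.1 - f p.2) * (g p.1 - g p.2) := by
      rcases le_total p.1 p.2 with h | h
      · nlinarith [hf h1 h2 h, hg h1 h2 h]
      · nlinarith [hf h2 h1 h, hg h2 h1 h]
    exact mul_nonneg this (mul_nonneg (hw _ h1) (hw _ h2))
  have expand : ∀ p : ℝ × ℝ, (f p.1 - f p.2) * (g p.1 - g p.2) * (w p.1 * w p.2)
      = (f p.1 * g p.1 * w p.1) * w p.2 + w p.1 * (f p.2 * g p.2 * w p.2)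
        - ((f p.1 * w p.1) * (g p.2 * w p.2) + (g p.1 * w p.1) * (f p.2 * w p.2)) := by
    intro p; ring
  have i1 := hFGW.mul_prod hW
  have i2 := hW.mul_prod hFGW
  have i3 := hFW.mul_prod hGW
  have i4 := hGW.mul_prod hFW
  simp only [expand] at key
  have esub := integral_sub (μ := ν.prod ν) (i1.add i2) (i3.add i4)
  simp only [Pi.add_apply] at esub
  have e1 : ∫ a : ℝ × ℝ, (f a.1 * g a.1 * w a.1) * w a.2 ∂ν.prod ν
      = (∫ x, f x * g x * w x ∂ν) * ∫ x, w x ∂ν :=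
    integral_prod_mul (fun x => f x * g x * w x) w
  have e2 : ∫ a : ℝ × ℝ, w a.1 * (f a.2 * g a.2 * w a.2) ∂ν.prod ν
      = (∫ x, w x ∂ν) * ∫ x, f x * g x * w x ∂ν :=
    integral_prod_mul w (fun x => f x * g x * w x)
  have e3 : ∫ a : ℝ × ℝ, (f a.1 * w a.1) * (g a.2 * w a.2) ∂ν.prod ν
      = (∫ x, f x * w x ∂ν) * ∫ x, g x * w x ∂ν :=
    integral_prod_mul (fun x => f x * w x) (fun x => g x * w x)
  have e4 : ∫ a : ℝ × ℝ, (g a.1 * w a.1) * (f a.2 * w a.2) ∂ν.prod ν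
      = (∫ x, g x * w x ∂ν) * ∫ x, f x * w x ∂ν :=
    integral_prod_mul (fun x => g x * w x) (fun x => f x * w x)
  rw [esub, integral_add i1 i2, integral_add i3 i4, e1, e2, e3, e4] at key
  nlinarith [key]

lemma rpow_mul_exp_neg_le (p : ℝ) (hp : 0 ≤ p) (u : ℝ) (hu : 0 ≤ u) :
    u ^ p * Real.exp (-u) ≤ (Nat.ceil p).factorial + 1 := by
  set m := Nat.ceil p
  have hexp : Real.exp (-u) ≤ 1 := by
    rw [Real.exp_le_one_iff]; linarith
  have hpow : u ^ p ≤ u ^ m + 1 := by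
    rcases le_total u 1 with h | h
    · have := Real.rpow_le_one hu h hp
      have : (0:ℝ) ≤ u ^ m := pow_nonneg hu m
      nlinarith [Real.rpow_le_one hu h hp]
    · have h1 : u ^ p ≤ u ^ (m:ℝ) := Real.rpow_le_rpow_of_exponent_le h (Nat.le_ceil p)
      rw [Real.rpow_natCast] at h1
      linarith
  have hfac : u ^ m * Real.exp (-u) ≤ m.factorial := by
    have h1 : u ^ m / m.factorial ≤ Real.exp u := by
      calc u ^ m / m.factorial ≤ ∑ i ∈ Finset.range (m+1), u ^ i / i.factorial := by
            exact Finset.single_le_sum (f := fun i => u ^ i / (i.factorial:ℝ))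
              (fun i _ => by positivity) (Finset.self_mem_range_succ m)
        _ ≤ Real.exp u := Real.sum_le_exp_of_nonneg hu _
    have h2 : u ^ m ≤ m.factorial * Real.exp u := by
      rw [div_le_iff₀ (by positivity)] at h1; linarith [h1]
    calc u ^ m * Real.exp (-u) ≤ m.factorial * Real.exp u * Real.exp (-u) :=
          mul_le_mul_of_nonneg_right h2 (Real.exp_nonneg _)
      _ = m.factorial := by rw [mul_assoc, ← Real.exp_add]; simp
  calc u ^ p * Real.exp (-u) ≤ (u ^ m + 1) * Real.exp (-u) :=
        mul_le_mul_of_nonneg_right hpow (Real.exp_nonneg _)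
    _ = u ^ m * Real.exp (-u) + Real.exp (-u) := by ring
    _ ≤ m.factorial + 1 := by linarith

lemma key_pointwise_bound (n α : ℝ) (hn : 0 ≤ n) (hα : 0 < α) (t : ℝ) (ht : 0 < t) :
    t ^ (-n) * Real.exp (-t ^ (-α)) ≤ (Nat.ceil (n / α)).factorial + 1 := by
  have hu : 0 ≤ t ^ (-α) := Real.rpow_nonneg ht.le _
  have he : (-α) * (n / α) = -n := by field_simp
  have hrw : t ^ (-n) = (t ^ (-α)) ^ (n / α) := by
    rw [← he, Real.rpow_mul ht.le]
  rw [hrw]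
  exact rpow_mul_exp_neg_le (n / α) (div_nonneg hn hα.le) _ hu

lemma contOn_integrand (K : ℕ) (i : Fin K) (n α : ℝ) (L : Fin K → ℝ) (hL : ∀ l, 0 ≤ L l) :
    ContinuousOn (fun z => (z + L i) ^ (-n) * Real.exp (-∑ l : Fin K, (z + L l) ^ (-α)))
      (Ioi (0:ℝ)) := by
  have hb : ∀ c : ℝ, 0 ≤ c → ∀ p : ℝ, ContinuousOn (fun z : ℝ => (z + c) ^ p) (Ioi 0) := by
    intro c hc p
    apply ContinuousOn.rpow_const (by fun_prop)
    intro x hx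
    have hx' : (0:ℝ) < x := hx
    exact Or.inl (by positivity)
  apply (hb (L i) (hL i) (-n)).mul
  apply Real.continuous_exp.comp_continuousOn
  apply ContinuousOn.neg
  exact continuousOn_finset_sum _ (fun l _ => hb (L l) (hL l) (-α))

lemma integrableOn_integrand (K : ℕ) (i : Fin K) (n α : ℝ) (hα : 0 < α) (hn : 1 < n)
    (L : Fin K → ℝ) (hL : ∀ l, 0 ≤ L l) :
    IntegrableOn (fun z => (z + L i) ^ (-n) * Real.exp (-∑ l : Fin K, (z + L l) ^ (-α)))
      (Ioi (0:ℝ)) := by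
  set F := fun z => (z + L i) ^ (-n) * Real.exp (-∑ l : Fin K, (z + L l) ^ (-α)) with hF
  have hcont := contOn_integrand K i n α L hL
  have hFnn : ∀ z ∈ Ioi (0:ℝ), 0 ≤ F z := by
    intro z hz
    have : (0:ℝ) < z + L i := by have := hL i; simp only [mem_Ioi] at hz; linarith
    exact mul_nonneg (Real.rpow_nonneg this.le _) (Real.exp_nonneg _)
  have hbound : ∀ z ∈ Ioi (0:ℝ), F z ≤ (z + L i) ^ (-n) * Real.exp (-(z + L i) ^ (-α)) := by
    intro z hz
    simp only [mem_Ioi] at hz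
    have hzi : (0:ℝ) < z + L i := by have := hL i; linarith
    apply mul_le_mul_of_nonneg_left _ (Real.rpow_nonneg hzi.le _)
    apply Real.exp_le_exp.2
    simp only [neg_le_neg_iff]
    exact Finset.single_le_sum
      (f := fun l => (z + L l) ^ (-α))
      (fun l _ => Real.rpow_nonneg (by have := hL l; linarith) _) (Finset.mem_univ i)
  have h1 : IntegrableOn F (Ioc (0:ℝ) 1) := by
    apply Integrable.mono' (g := fun _ => ((Nat.ceil (n / α)).factorial : ℝ) + 1)
    · exact integrableOn_const measure_Ioc_lt_top.ne enorm_ne_top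
    · exact (hcont.mono Ioc_subset_Ioi_self).aestronglyMeasurable measurableSet_Ioc
    · filter_upwards [ae_restrict_mem measurableSet_Ioc] with z hz
      have hz' : z ∈ Ioi (0:ℝ) := hz.1
      rw [Real.norm_of_nonneg (hFnn z hz')]
      calc F z ≤ (z + L i) ^ (-n) * Real.exp (-(z + L i) ^ (-α)) := hbound z hz'
        _ ≤ _ := key_pointwise_bound n α (by linarith) hα _
              (by have h1 := hL i; have h2 : (0:ℝ) < z := hz'; linarith)
  have h2 : IntegrableOn F (Ioi (1:ℝ)) := by
    apply Integrable.mono' (g := fun z => z ^ (-n))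
    · exact integrableOn_Ioi_rpow_of_lt (by linarith) one_pos
    · exact (hcont.mono (fun x (hx : x ∈ Ioi (1:ℝ)) => mem_Ioi.2 (lt_trans one_pos hx))).aestronglyMeasurable measurableSet_Ioi
    · filter_upwards [ae_restrict_mem measurableSet_Ioi] with z hz
      have hz1 : (1:ℝ) < z := hz
      have hz' : z ∈ Ioi (0:ℝ) := lt_trans one_pos hz1
      rw [Real.norm_of_nonneg (hFnn z hz')]
      calc F z ≤ (z + L i) ^ (-n) * Real.exp (-(z + L i) ^ (-α)) := hbound z hz'
        _ ≤ (z + L i) ^ (-n) * 1 := by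
              apply mul_le_mul_of_nonneg_left _ (Real.rpow_nonneg (by have := hL i; linarith) _)
              rw [Real.exp_le_one_iff, neg_nonpos]
              exact Real.rpow_nonneg (by have := hL i; linarith) _
        _ = (z + L i) ^ (-n) := mul_one _
        _ ≤ z ^ (-n) := Real.rpow_le_rpow_of_nonpos (by linarith) (by have := hL i; linarith)
              (by linarith)
  have := h1.union h2
  rwa [Ioc_union_Ioi_eq_Ioi (by norm_num : (0:ℝ) ≤ 1)] at this

lemma integral_Ioi_pos (F : ℝ → ℝ) (hpos : ∀ x ∈ Ioi (0:ℝ), 0 < F x)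
    (hint : IntegrableOn F (Ioi 0)) : 0 < ∫ x in Ioi (0:ℝ), F x := by
  rw [setIntegral_pos_iff_support_of_nonneg_ae _ hint]
  · refine lt_of_lt_of_le ?_ (measure_mono (fun x hx => ⟨ne_of_gt (hpos x hx), hx⟩))
    simp [Real.volume_Ioi]
  · filter_upwards [ae_restrict_mem measurableSet_Ioi] with x hx
    exact (hpos x hx).le

lemma antitone_diff_rpow (α a b : ℝ) (hα : 0 < α) (ha : 0 ≤ a) (hb : a ≤ b) :
    AntitoneOn (fun z : ℝ => (z + a) ^ (-α) - (z + b) ^ (-α)) (Ioi 0) := by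
  have hd : ∀ c : ℝ, 0 ≤ c → ∀ x ∈ Ioi (0:ℝ),
      HasDerivAt (fun z : ℝ => (z + c) ^ (-α)) (-α * (x + c) ^ (-α - 1)) x := by
    intro c hc x hx
    have hxc : (0:ℝ) < x + c := by have := hx.out; linarith
    have h1 : HasDerivAt (fun z : ℝ => z + c) 1 x := (hasDerivAt_id x).add_const c
    have h2 := Real.hasDerivAt_rpow_const (x := x + c) (p := -α) (Or.inl (ne_of_gt hxc))
    have := h2.comp x h1
    simpa [Function.comp_def] using this
  apply antitoneOn_of_deriv_nonpos (convex_Ioi 0)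
  · apply ContinuousOn.sub
    · intro x hx
      exact ((hd a ha x hx).differentiableAt).continuousAt.continuousWithinAt
    · intro x hx
      exact ((hd b (le_trans ha hb) x hx).differentiableAt).continuousAt.continuousWithinAt
  · rw [interior_Ioi]
    intro x hx
    exact ((hd a ha x hx).sub (hd b (le_trans ha hb) x hx)).differentiableAt.differentiableWithinAt
  · rw [interior_Ioi]
    intro x hx
    have hder := ((hd a ha x hx).sub (hd b (le_trans ha hb) x hx)).deriv
    rw [show deriv (fun z : ℝ => (z + a) ^ (-α) - (z + b) ^ (-α)) x = _ from hder]
    have : (x + b) ^ (-α - 1) ≤ (x + a) ^ (-α - 1) :=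
      Real.rpow_le_rpow_of_nonpos (by have := hx.out; linarith) (by linarith) (by linarith)
    nlinarith

/-- `I_{i,n}(λ; α) = ∫₀^∞ (z + λ_i)^(-n) exp(-Σ_l (z + λ_l)^(-α)) dz`. -/
noncomputable def Ifun (K : ℕ) (i : Fin K) (n α : ℝ) (L : Fin K → ℝ) : ℝ :=
  ∫ z in Set.Ioi (0:ℝ), (z + L i) ^ (-n) * Real.exp (-∑ l : Fin K, (z + L l) ^ (-α))

/-- The ratio `I_{i,α+2}/I_{i,α+1}` is monotonically increasing in the coordinate
`λ_j` for every `j ≠ i`. -/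
theorem stmt_5 (K : ℕ) (hK : 2 ≤ K) (α : ℝ) (hα : 0 < α) (i j : Fin K) (hij : i ≠ j)
    (L L' : Fin K → ℝ) (hL : ∀ l, 0 ≤ L l) (hL' : ∀ l, 0 ≤ L' l)
    (hagree : ∀ l, l ≠ j → L l = L' l) (hj : L j ≤ L' j) :
    Ifun K i (α + 2) α L / Ifun K i (α + 1) α L ≤
      Ifun K i (α + 2) α L' / Ifun K i (α + 1) α L' := by
  have hLi : L i = L' i := hagree i hij
  set f : ℝ → ℝ := fun z => (z + L i) ^ (-(1:ℝ)) with hf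
  set g : ℝ → ℝ := fun z => Real.exp ((z + L j) ^ (-α) - (z + L' j) ^ (-α)) with hg
  set w : ℝ → ℝ := fun z => (z + L i) ^ (-(α+1)) * Real.exp (-∑ l : Fin K, (z + L l) ^ (-α))
    with hw
  have hzipos : ∀ z ∈ Set.Ioi (0:ℝ), (0:ℝ) < z + L i := by
    intro z hz
    have h1 : (0:ℝ) < z := hz
    have h2 := hL i
    linarith
  -- sum identity
  have hsum : ∀ z : ℝ, ∑ l : Fin K, (z + L' l) ^ (-α)
      = (∑ l : Fin K, (z + L l) ^ (-α)) + ((z + L' j) ^ (-α) - (z + L j) ^ (-α)) := by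
    intro z
    have h1 : ∑ l : Fin K, ((z + L' l) ^ (-α) - (z + L l) ^ (-α))
        = (z + L' j) ^ (-α) - (z + L j) ^ (-α) := by
      rw [Finset.sum_eq_single j]
      · intro l _ hl; rw [hagree l hl]; ring
      · intro h; exact absurd (Finset.mem_univ j) h
    rw [Finset.sum_sub_distrib] at h1
    linarith
  -- pointwise integrand identities
  have hsplit : ∀ z ∈ Set.Ioi (0:ℝ),
      (z + L i) ^ (-(α+2)) = (z + L i) ^ (-(1:ℝ)) * (z + L i) ^ (-(α+1)) := by
    intro z hz
    rw [← Real.rpow_add (hzipos z hz)]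
    congr 1
    ring
  have hexpsplit : ∀ z : ℝ,
      Real.exp (-∑ l : Fin K, (z + L' l) ^ (-α))
        = Real.exp ((z + L j) ^ (-α) - (z + L' j) ^ (-α))
          * Real.exp (-∑ l : Fin K, (z + L l) ^ (-α)) := by
    intro z
    rw [← Real.exp_add]
    congr 1
    rw [hsum z]
    ring
  have pe3 : ∀ z ∈ Set.Ioi (0:ℝ),
      (z + L' i) ^ (-(α+1)) * Real.exp (-∑ l : Fin K, (z + L' l) ^ (-α)) = g z * w z := by
    intro z hz
    rw [← hLi, hexpsplit z]
    simp only [hg, hw]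
    ring
  have pe4 : ∀ z ∈ Set.Ioi (0:ℝ),
      (z + L' i) ^ (-(α+2)) * Real.exp (-∑ l : Fin K, (z + L' l) ^ (-α))
        = f z * (g z * w z) := by
    intro z hz
    rw [← hLi, hexpsplit z, hsplit z hz]
    simp only [hf, hg, hw]
    ring
  have pe2 : ∀ z ∈ Set.Ioi (0:ℝ),
      (z + L i) ^ (-(α+2)) * Real.exp (-∑ l : Fin K, (z + L l) ^ (-α)) = f z * w z := by
    intro z hz
    rw [hsplit z hz]
    simp only [hf, hw]
    ring
  -- integral identities
  have e1 : Ifun K i (α + 1) α L = ∫ z in Set.Ioi (0:ℝ), w z := rfl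
  have e2 : Ifun K i (α + 2) α L = ∫ z in Set.Ioi (0:ℝ), f z * w z :=
    setIntegral_congr_fun measurableSet_Ioi pe2
  have e3 : Ifun K i (α + 1) α L' = ∫ z in Set.Ioi (0:ℝ), g z * w z :=
    setIntegral_congr_fun measurableSet_Ioi pe3
  have e4 : Ifun K i (α + 2) α L' = ∫ z in Set.Ioi (0:ℝ), f z * (g z * w z) :=
    setIntegral_congr_fun measurableSet_Ioi pe4
  -- integrability
  have iW : IntegrableOn w (Set.Ioi (0:ℝ)) :=
    integrableOn_integrand K i (α+1) α hα (by linarith) L hL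
  have iFW : IntegrableOn (fun z => f z * w z) (Set.Ioi (0:ℝ)) :=
    (integrableOn_integrand K i (α+2) α hα (by linarith) L hL).congr_fun pe2 measurableSet_Ioi
  have iGW : IntegrableOn (fun z => g z * w z) (Set.Ioi (0:ℝ)) :=
    (integrableOn_integrand K i (α+1) α hα (by linarith) L' hL').congr_fun pe3 measurableSet_Ioi
  have iFGW : IntegrableOn (fun z => f z * (g z * w z)) (Set.Ioi (0:ℝ)) :=
    (integrableOn_integrand K i (α+2) α hα (by linarith) L' hL').congr_fun pe4 measurableSet_Ioi
  -- positivity of denominators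
  have posW : 0 < ∫ z in Set.Ioi (0:ℝ), w z := by
    apply integral_Ioi_pos _ _ iW
    intro z hz
    exact mul_pos (Real.rpow_pos_of_pos (hzipos z hz) _) (Real.exp_pos _)
  have posGW : 0 < ∫ z in Set.Ioi (0:ℝ), g z * w z := by
    apply integral_Ioi_pos _ _ iGW
    intro z hz
    exact mul_pos (Real.exp_pos _)
      (mul_pos (Real.rpow_pos_of_pos (hzipos z hz) _) (Real.exp_pos _))
  -- monotonicity
  have hfA : AntitoneOn f (Set.Ioi 0) := by
    intro x hx y hy hxy
    exact Real.rpow_le_rpow_of_nonpos (hzipos x hx) (by linarith) (by norm_num)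
  have hgA : AntitoneOn g (Set.Ioi 0) := by
    intro x hx y hy hxy
    exact Real.exp_le_exp.2 (antitone_diff_rpow α (L j) (L' j) hα (hL j) hj hx hy hxy)
  have hwnn : ∀ x ∈ Set.Ioi (0:ℝ), 0 ≤ w x := by
    intro z hz
    exact mul_nonneg (Real.rpow_nonneg (hzipos z hz).le _) (Real.exp_nonneg _)
  have key := chebyshev_fkg f g w hfA hgA hwnn iW iFW iGW
    (iFGW.congr_fun (fun z hz => by ring) measurableSet_Ioi)
  rw [e1, e2, e3, e4, div_le_div_iff₀ posW posGW]
  calc (∫ z in Set.Ioi (0:ℝ), f z * w z) * ∫ z in Set.Ioi (0:ℝ), g z * w z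
      ≤ (∫ z in Set.Ioi (0:ℝ), f z * g z * w z) * ∫ z in Set.Ioi (0:ℝ), w z := key
    _ = (∫ z in Set.Ioi (0:ℝ), f z * (g z * w z)) * ∫ z in Set.Ioi (0:ℝ), w z := by
        rw [setIntegral_congr_fun measurableSet_Ioi (g := fun z => f z * (g z * w z))
          (fun z hz => by ring)]
end

section
/- Let F : ℝ → [0, 1] be nondecreasing and differentiable with derivative f ≥ 0, and suppose the ratio f(x)/F(x) is monotonically nonincreasing on [1, ∞) (where F > 0 there). Fix a positive integer K ≥ 2 and for λ ∈ [0, ∞)^K and i ∈ {1, …, K} define φ_i(λ) = ∫₁^∞ f(z + λ_i) · Π_{j≠i} F(z + λ_j) dz and J_i(λ) = ∫₁^∞ (f(z + λ_i)/(z + λ_i)) · Π_{j≠i} F(z + λ_j) dz, and assume φ_i(λ) > 0. Then for every j ≠ i the ratio J_i(λ)/φ_i(λ) is monotonically nondecreasing with respect to λ_j: if λ, λ′ ∈ [0, ∞)^K agree in every coordinate except possibly the j-th and λ_j ≤ λ′_j, then J_i(λ)/φ_i(λ) ≤ J_i(λ′)/φ_i(λ′). -/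
open Real MeasureTheory

/-- Arm-selection probability `φ_i(λ) = ∫₁^∞ f(z + λ_i) Π_{j ≠ i} F(z + λ_j) dz`. -/
noncomputable def phi (K : ℕ) (F f : ℝ → ℝ) (i : Fin K) (L : Fin K → ℝ) : ℝ :=
  ∫ z in Set.Ioi (1:ℝ), f (z + L i) * ∏ j ∈ Finset.univ.erase i, F (z + L j)

/-- `J_i(λ) = ∫₁^∞ (f(z + λ_i)/(z + λ_i)) Π_{j ≠ i} F(z + λ_j) dz`. -/
noncomputable def Jfun (K : ℕ) (F f : ℝ → ℝ) (i : Fin K) (L : Fin K → ℝ) : ℝ :=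
  ∫ z in Set.Ioi (1:ℝ), f (z + L i) / (z + L i) * ∏ j ∈ Finset.univ.erase i, F (z + L j)

/- ### Auxiliary lemmas -/

/-- Linearity of the integral for a four-term combination. -/
lemma integral_lincomb {μ : Measure ℝ} {f g h k : ℝ → ℝ} (A B C D : ℝ)
    (hf : Integrable f μ) (hg : Integrable g μ) (hh : Integrable h μ)
    (hk : Integrable k μ) :
    ∫ x, (A * f x - B * g x - C * h x + D * k x) ∂μ
      = A * ∫ x, f x ∂μ - B * ∫ x, g x ∂μ - C * ∫ x, h x ∂μ + D * ∫ x, k x ∂μ := by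
  have h3 : Integrable (fun x => A * f x - B * g x) μ :=
    (hf.const_mul A).sub (hg.const_mul B)
  have h2 : Integrable (fun x => A * f x - B * g x - C * h x) μ :=
    h3.sub (hh.const_mul C)
  have e1 : ∫ x, (A * f x - B * g x - C * h x + D * k x) ∂μ
      = (∫ x, (A * f x - B * g x - C * h x) ∂μ) + ∫ x, D * k x ∂μ :=
    integral_add h2 (hk.const_mul D)
  have e2 : ∫ x, (A * f x - B * g x - C * h x) ∂μ
      = (∫ x, (A * f x - B * g x) ∂μ) - ∫ x, C * h x ∂μ :=
    integral_sub h3 (hh.const_mul C)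
  have e3 : ∫ x, (A * f x - B * g x) ∂μ
      = (∫ x, A * f x ∂μ) - ∫ x, B * g x ∂μ :=
    integral_sub (hf.const_mul A) (hg.const_mul B)
  rw [e1, e2, e3, integral_const_mul _ _, integral_const_mul _ _, integral_const_mul _ _,
    integral_const_mul _ _]

/-- Chebyshev integral (FKG-type) correlation inequality for similarly ordered
functions `u`, `h` with respect to the weight `w`. -/
lemma cheb_integral (s : Set ℝ) (hs : MeasurableSet s) (u h w : ℝ → ℝ)
    (hw : ∀ x ∈ s, 0 ≤ w x)
    (hmono : ∀ x ∈ s, ∀ y ∈ s, 0 ≤ (u x - u y) * (h x - h y))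
    (hW : IntegrableOn w s) (hU : IntegrableOn (fun x => u x * w x) s)
    (hH : IntegrableOn (fun x => h x * w x) s)
    (hI : IntegrableOn (fun x => u x * h x * w x) s) :
    (∫ x in s, u x * w x) * (∫ x in s, h x * w x) ≤
      (∫ x in s, u x * h x * w x) * (∫ x in s, w x) := by
  set W := ∫ x in s, w x with hWdef
  set U := ∫ x in s, u x * w x with hUdef
  set H := ∫ x in s, h x * w x with hHdef
  set I := ∫ x in s, u x * h x * w x with hIdef
  have key : 0 ≤ ∫ x in s,
      (W * (u x * h x * w x) - H * (u x * w x) - U * (h x * w x) + I * w x) := by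
    apply setIntegral_nonneg hs
    intro x hx
    have heq : W * (u x * h x * w x) - H * (u x * w x) - U * (h x * w x) + I * w x
        = ∫ y in s, (u x - u y) * (h x - h y) * (w x * w y) := by
      have e0 : ∀ y : ℝ, (u x - u y) * (h x - h y) * (w x * w y)
          = (u x * h x * w x) * w y - (u x * w x) * (h y * w y)
            - (h x * w x) * (u y * w y) + w x * (u y * h y * w y) := by
        intro y; ring
      rw [integral_congr_ae (Filter.Eventually.of_forall e0),
        integral_lincomb (u x * h x * w x) (u x * w x) (h x * w x) (w x) hW hH hU hI]
      rw [hWdef, hUdef, hHdef, hIdef]; ring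
    rw [heq]
    apply setIntegral_nonneg hs
    intro y hy
    exact mul_nonneg (hmono x hx y hy) (mul_nonneg (hw x hx) (hw y hy))
  have hexp : (∫ x in s,
      (W * (u x * h x * w x) - H * (u x * w x) - U * (h x * w x) + I * w x))
      = W * I - H * U - U * H + I * W :=
    integral_lincomb W H U I hI hU hH hW
  rw [hexp] at key
  nlinarith [key]

/-- If `f/F` is nonincreasing on `[1,∞)`, then `F(·+δ)/F(·)` is nonincreasing there. -/
lemma shift_ratio_antitone (F f : ℝ → ℝ)
    (hderiv : ∀ x, HasDerivAt F (f x) x)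
    (hFpos : ∀ x, 1 ≤ x → 0 < F x)
    (hratio : AntitoneOn (fun x => f x / F x) (Set.Ici (1:ℝ)))
    (δ : ℝ) (hδ : 0 ≤ δ) :
    AntitoneOn (fun t => F (t + δ) / F t) (Set.Ici (1:ℝ)) := by
  have hFc : Continuous F := by
    rw [continuous_iff_continuousAt]; exact fun x => (hderiv x).continuousAt
  have hg : ∀ t : ℝ, 1 ≤ t → HasDerivAt (fun t => F (t + δ) / F t)
      ((f (t + δ) * F t - F (t + δ) * f t) / F t ^ 2) t := by
    intro t ht
    have h1 : HasDerivAt (fun t => F (t + δ)) (f (t + δ)) t :=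
      (hderiv (t + δ)).comp_add_const t δ
    exact h1.div (hderiv t) (ne_of_gt (hFpos t ht))
  apply antitoneOn_of_deriv_nonpos (convex_Ici 1)
  · exact (hFc.comp (continuous_id.add continuous_const)).continuousOn.div
      hFc.continuousOn (fun t ht => ne_of_gt (hFpos t ht))
  · intro t ht
    rw [interior_Ici] at ht
    exact (hg t (le_of_lt ht)).differentiableAt.differentiableWithinAt
  · intro t ht
    rw [interior_Ici] at ht
    have ht1 : (1:ℝ) ≤ t := le_of_lt ht
    rw [(hg t ht1).deriv]
    have hFt : 0 < F t := hFpos t ht1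
    have hFtδ : 0 < F (t + δ) := hFpos _ (le_trans ht1 (by linarith))
    have hr : f (t + δ) / F (t + δ) ≤ f t / F t :=
      hratio (Set.mem_Ici.2 ht1) (Set.mem_Ici.2 (by linarith)) (by linarith)
    rw [div_le_div_iff₀ hFtδ hFt] at hr
    apply div_nonpos_of_nonpos_of_nonneg
    · linarith [hr]
    · positivity

/-- If `F : ℝ → [0,1]` is nondecreasing and differentiable with derivative `f ≥ 0`,
`F > 0` on `[1, ∞)` and `f/F` is nonincreasing there, then the ratio `J_i/φ_i` is
monotonically nondecreasing with respect to the coordinate `λ_j` for every `j ≠ i`. -/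
theorem stmt_6 (F f : ℝ → ℝ)
    (hF0 : ∀ x, 0 ≤ F x) (hF1 : ∀ x, F x ≤ 1) (hFmono : Monotone F)
    (hderiv : ∀ x, HasDerivAt F (f x) x) (hf : ∀ x, 0 ≤ f x)
    (hFpos : ∀ x, 1 ≤ x → 0 < F x)
    (hratio : AntitoneOn (fun x => f x / F x) (Set.Ici (1:ℝ)))
    (K : ℕ) (hK : 2 ≤ K) (i j : Fin K) (hij : j ≠ i)
    (L L' : Fin K → ℝ) (hL : ∀ l, 0 ≤ L l) (hL' : ∀ l, 0 ≤ L' l)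
    (hagree : ∀ l, l ≠ j → L l = L' l) (hj : L j ≤ L' j)
    (hphi : 0 < phi K F f i L) (hphi' : 0 < phi K F f i L') :
    Jfun K F f i L / phi K F f i L ≤ Jfun K F f i L' / phi K F f i L' := by
  classical
  -- notation
  set c := L i with hc
  set a := L j with ha
  set b := L' j with hb
  have hci : L' i = c := (hagree i (Ne.symm hij)).symm
  have hjmem : j ∈ Finset.univ.erase i := Finset.mem_erase.2 ⟨hij, Finset.mem_univ j⟩
  set T := (Finset.univ.erase i).erase j with hT
  set P : ℝ → ℝ := fun z => ∏ l ∈ T, F (z + L l) with hP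
  set w : ℝ → ℝ := fun z => f (z + c) * (F (z + a) * P z) with hw
  set u : ℝ → ℝ := fun z => (z + c)⁻¹ with hu
  set h : ℝ → ℝ := fun z => F (z + b) / F (z + a) with hh
  have hc0 : 0 ≤ c := hL i
  have ha0 : 0 ≤ a := hL j
  have hb0 : 0 ≤ b := hL' j
  have hP' : ∀ z : ℝ, (∏ l ∈ T, F (z + L' l)) = P z := by
    intro z
    apply Finset.prod_congr rfl
    intro l hl
    rw [hagree l (Finset.ne_of_mem_erase hl)]
  have hFc : Continuous F := by
    rw [continuous_iff_continuousAt]; exact fun x => (hderiv x).continuousAt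
  have hfm : Measurable f := by
    have : f = deriv F := funext fun x => ((hderiv x).deriv).symm
    rw [this]; exact measurable_deriv F
  have hPm : Measurable P := by
    apply Finset.measurable_prod
    intro l _
    exact hFc.measurable.comp (measurable_id.add_const (L l))
  have hwm : Measurable w :=
    (hfm.comp (measurable_id.add_const c)).mul
      ((hFc.measurable.comp (measurable_id.add_const a)).mul hPm)
  have hum : Measurable u := (measurable_id.add_const c).inv
  have hhm : Measurable h :=
    (hFc.measurable.comp (measurable_id.add_const b)).div
      (hFc.measurable.comp (measurable_id.add_const a))
  have hPnn : ∀ z : ℝ, 0 ≤ P z := fun z => Finset.prod_nonneg fun l _ => hF0 _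
  have hwnn : ∀ z : ℝ, 0 ≤ w z := fun z =>
    mul_nonneg (hf _) (mul_nonneg (hF0 _) (hPnn z))
  -- the four integrals
  have hprod : ∀ (M : Fin K → ℝ), ∀ z : ℝ,
      (∏ l ∈ Finset.univ.erase i, F (z + M l)) =
        F (z + M j) * ∏ l ∈ T, F (z + M l) := by
    intro M z
    exact (Finset.mul_prod_erase _ (fun l => F (z + M l)) hjmem).symm
  have hphiL : phi K F f i L = ∫ z in Set.Ioi (1:ℝ), w z := by
    unfold phi
    apply integral_congr_ae (Filter.Eventually.of_forall _)
    intro z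
    rw [hprod L z]
  have hJL : Jfun K F f i L = ∫ z in Set.Ioi (1:ℝ), u z * w z := by
    unfold Jfun
    apply integral_congr_ae (Filter.Eventually.of_forall _)
    intro z
    rw [hprod L z]
    simp only [hu, hw, div_eq_mul_inv]
    ring
  have hphiL' : phi K F f i L' = ∫ z in Set.Ioi (1:ℝ), h z * w z := by
    unfold phi
    apply setIntegral_congr_fun measurableSet_Ioi
    intro z hz
    dsimp only
    have hz1 : (1:ℝ) < z := hz
    have hFa : 0 < F (z + a) := hFpos _ (by linarith)
    rw [hprod L' z, hP' z, hci]
    simp only [hh, hw, ← hb]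
    field_simp
  have hJL' : Jfun K F f i L' = ∫ z in Set.Ioi (1:ℝ), u z * h z * w z := by
    unfold Jfun
    apply setIntegral_congr_fun measurableSet_Ioi
    intro z hz
    have hz1 : (1:ℝ) < z := hz
    have hFa : 0 < F (z + a) := hFpos _ (by linarith)
    have hzc : (0:ℝ) < z + c := by linarith
    dsimp only
    rw [hprod L' z, hP' z, hci]
    simp only [hu, hh, hw, ← hb]
    field_simp
  -- integrability
  have hW : IntegrableOn w (Set.Ioi (1:ℝ)) := by
    by_contra hcon
    rw [hphiL, integral_undef hcon] at hphi
    exact lt_irrefl 0 hphi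
  have hH : IntegrableOn (fun z => h z * w z) (Set.Ioi (1:ℝ)) := by
    by_contra hcon
    rw [hphiL', integral_undef hcon] at hphi'
    exact lt_irrefl 0 hphi'
  have hubd : ∀ z : ℝ, z ∈ Set.Ioi (1:ℝ) → 0 ≤ u z ∧ u z ≤ 1 := by
    intro z hz
    have hz1 : (1:ℝ) < z := hz
    have hzc : (1:ℝ) ≤ z + c := by linarith
    constructor
    · exact inv_nonneg.2 (by linarith)
    · rw [hu]
      exact inv_le_one_of_one_le₀ hzc
  have hU : IntegrableOn (fun z => u z * w z) (Set.Ioi (1:ℝ)) := by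
    apply Integrable.mono hW ((hum.mul hwm).aestronglyMeasurable.restrict)
    rw [ae_restrict_iff' measurableSet_Ioi]
    apply Filter.Eventually.of_forall
    intro z hz
    show ‖u z * w z‖ ≤ ‖w z‖
    rw [norm_mul]
    calc ‖u z‖ * ‖w z‖ ≤ 1 * ‖w z‖ := by
          apply mul_le_mul_of_nonneg_right _ (norm_nonneg _)
          rw [Real.norm_eq_abs, abs_of_nonneg (hubd z hz).1]
          exact (hubd z hz).2
      _ = ‖w z‖ := one_mul _
  have hI : IntegrableOn (fun z => u z * h z * w z) (Set.Ioi (1:ℝ)) := by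
    apply Integrable.mono hH ((hum.mul (hhm.mul hwm)).aestronglyMeasurable.restrict.congr _)
    · rw [ae_restrict_iff' measurableSet_Ioi]
      apply Filter.Eventually.of_forall
      intro z hz
      rw [show u z * h z * w z = u z * (h z * w z) by ring, norm_mul]
      calc ‖u z‖ * ‖h z * w z‖ ≤ 1 * ‖h z * w z‖ := by
            apply mul_le_mul_of_nonneg_right _ (norm_nonneg _)
            rw [Real.norm_eq_abs, abs_of_nonneg (hubd z hz).1]
            exact (hubd z hz).2
        _ = ‖h z * w z‖ := one_mul _
    · apply Filter.Eventually.of_forall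
      intro z; simp only [Pi.mul_apply]; ring
  -- monotonicity ( monovariance ) of u and h
  have hant : AntitoneOn (fun t => F (t + (b - a)) / F t) (Set.Ici (1:ℝ)) :=
    shift_ratio_antitone F f hderiv hFpos hratio (b - a) (by rw [ha, hb]; linarith)
  have hmono : ∀ x ∈ Set.Ioi (1:ℝ), ∀ y ∈ Set.Ioi (1:ℝ),
      0 ≤ (u x - u y) * (h x - h y) := by
    have key : ∀ x ∈ Set.Ioi (1:ℝ), ∀ y ∈ Set.Ioi (1:ℝ), x ≤ y →
        u y ≤ u x ∧ h y ≤ h x := by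
      intro x hx y hy hxy
      have hx1 : (1:ℝ) < x := hx
      have hy1 : (1:ℝ) < y := hy
      constructor
      · apply inv_anti₀ (by linarith) (by linarith)
      · have h1 : x + a ∈ Set.Ici (1:ℝ) := Set.mem_Ici.2 (by linarith)
        have h2 : y + a ∈ Set.Ici (1:ℝ) := Set.mem_Ici.2 (by linarith)
        have := hant h1 h2 (by linarith)
        simpa [show x + a + (b - a) = x + b by ring,
          show y + a + (b - a) = y + b by ring, hh] using this
    intro x hx y hy
    rcases le_total x y with hxy | hxy
    · have := key x hx y hy hxy
      exact mul_nonneg (by linarith [this.1]) (by linarith [this.2])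
    · have := key y hy x hx hxy
      nlinarith [this.1, this.2]
  -- conclude
  rw [div_le_div_iff₀ hphi hphi', hJL, hphiL, hJL', hphiL']
  exact cheb_integral (Set.Ioi 1) measurableSet_Ioi u h w
    (fun z _ => hwnn z) hmono hW hU hH hI
end

section
/- Fix a positive integer K, a real α > 0, and λ ∈ [0, ∞)^K with min_{j} λ_j = 0. For an index i, let s be the number of indices j ∈ {1, …, K} with λ_j ≤ λ_i. Then I_{i,α+2}(λ; α) / I_{i,α+1}(λ; α) ≤ Γ(1 + 1/α) · s^{−1/α}; moreover, if λ_i > 0, then also I_{i,α+2}(λ; α) / I_{i,α+1}(λ; α) ≤ α / ((α + 1) λ_i). -/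
open Real MeasureTheory Set Filter

namespace Stmt7Aux

lemma contOn_r (b c : ℝ) (hb : 0 ≤ b) :
    ContinuousOn (fun z : ℝ => (z + b) ^ (-c)) (Ioi (0:ℝ)) := by
  apply ContinuousOn.rpow_const ((continuous_id.add continuous_const).continuousOn)
  intro x hx
  have : (0:ℝ) < x + b := by have := hx.out; linarith
  exact Or.inl this.ne'

lemma contOn_e (b σ α : ℝ) (hb : 0 ≤ b) :
    ContinuousOn (fun z : ℝ => Real.exp (-(σ * (z + b) ^ (-α)))) (Ioi (0:ℝ)) := by
  exact Real.continuous_exp.comp_continuousOn (((contOn_r b α hb).const_smul σ).neg)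

lemma rpow_exp_bound {α σ c : ℝ} (hα : 0 < α) (hσ : 0 < σ) (hc : 0 < c) :
    ∀ t : ℝ, 0 < t → t ^ (c / α) * Real.exp (-(σ * t)) ≤
      max 1 (((⌈c / α⌉₊ : ℝ) / σ) ^ (⌈c / α⌉₊ : ℕ)) := by
  intro t ht
  set n : ℕ := ⌈c / α⌉₊ with hn
  have hca : 0 < c / α := by positivity
  have hn1 : 1 ≤ n := Nat.one_le_iff_ne_zero.mpr (by
    simp only [hn, ne_eq, Nat.ceil_eq_zero, not_le]
    exact hca)
  rcases le_total t 1 with h | h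
  · have h1 : t ^ (c / α) ≤ 1 := Real.rpow_le_one ht.le h hca.le
    have h2 : Real.exp (-(σ * t)) ≤ 1 := by
      rw [Real.exp_le_one_iff]
      nlinarith
    calc t ^ (c / α) * Real.exp (-(σ * t)) ≤ 1 * 1 :=
          mul_le_mul h1 h2 (Real.exp_pos _).le zero_le_one
      _ ≤ _ := by simp
  · have h2 : t ^ (c / α) ≤ t ^ (n : ℝ) :=
      Real.rpow_le_rpow_of_exponent_le h (Nat.le_ceil _)
    have h3 : (σ * t / n) ^ n ≤ Real.exp (σ * t) := by
      have hx : σ * t / n ≤ Real.exp (σ * t / n) := by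
        have := Real.add_one_le_exp (σ * t / n)
        linarith
      calc (σ * t / n) ^ n ≤ (Real.exp (σ * t / n)) ^ n :=
            pow_le_pow_left₀ (by positivity) hx n
        _ = Real.exp (σ * t) := by
            rw [← Real.exp_nat_mul]
            congr 1
            field_simp
    have hnn : (0:ℝ) < n := by exact_mod_cast hn1
    have h4 : t ^ n ≤ ((n : ℝ) / σ) ^ n * Real.exp (σ * t) := by
      have : t ^ n = ((n : ℝ) / σ) ^ n * (σ * t / n) ^ n := by
        rw [← mul_pow]
        congr 1
        field_simp
      rw [this]
      exact mul_le_mul_of_nonneg_left h3 (by positivity)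
    have h5 : t ^ (c / α) * Real.exp (-(σ * t)) ≤ (((n:ℝ) / σ) ^ n) := by
      have := mul_le_mul_of_nonneg_right h2 (Real.exp_pos (-(σ * t))).le
      rw [Real.rpow_natCast] at this
      calc t ^ (c / α) * Real.exp (-(σ * t)) ≤ t ^ n * Real.exp (-(σ * t)) := this
        _ ≤ ((n : ℝ) / σ) ^ n * Real.exp (σ * t) * Real.exp (-(σ * t)) :=
            mul_le_mul_of_nonneg_right h4 (Real.exp_pos _).le
        _ = ((n : ℝ) / σ) ^ n := by
            rw [mul_assoc, ← Real.exp_add]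
            simp
    exact h5.trans (le_max_right _ _)

lemma intOn_master {α a σ c : ℝ} (hα : 0 < α) (ha : 0 ≤ a) (hσ : 0 < σ) (hc : 1 < c) :
    IntegrableOn (fun z : ℝ => (z + a) ^ (-c) * Real.exp (-(σ * (z + a) ^ (-α))))
      (Ioi (0:ℝ)) := by
  set f : ℝ → ℝ := fun z => (z + a) ^ (-c) * Real.exp (-(σ * (z + a) ^ (-α))) with hf
  have hcont : ContinuousOn f (Ioi (0:ℝ)) := (contOn_r a c ha).mul (contOn_e a σ α ha)
  have hfnonneg : ∀ z ∈ Ioi (0:ℝ), 0 ≤ f z := by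
    intro z hz
    have : (0:ℝ) < z + a := by have := hz.out; linarith
    positivity
  have hIoc : IntegrableOn f (Ioc (0:ℝ) 1) := by
    set M : ℝ := max 1 (((⌈c / α⌉₊ : ℝ) / σ) ^ (⌈c / α⌉₊ : ℕ)) with hM
    apply Integrable.mono' (g := fun _ => M)
    · exact integrableOn_const measure_Ioc_lt_top.ne
    · exact (hcont.mono Ioc_subset_Ioi_self).aestronglyMeasurable measurableSet_Ioc
    · refine (ae_restrict_iff' measurableSet_Ioc).2 (ae_of_all _ ?_)
      intro z hz
      have hz0 : (0:ℝ) < z + a := by have := hz.1; linarith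
      have ht : (0:ℝ) < (z + a) ^ (-α) := Real.rpow_pos_of_pos hz0 _
      have key := rpow_exp_bound hα hσ (lt_trans one_pos hc) ((z + a) ^ (-α)) ht
      have hrw : ((z + a) ^ (-α)) ^ (c / α) = (z + a) ^ (-c) := by
        rw [← Real.rpow_mul hz0.le]
        congr 1
        field_simp
      rw [hrw] at key
      have : f z ≤ M := key
      have hfz : 0 ≤ f z := hfnonneg z hz.1
      simpa [Real.norm_eq_abs, abs_of_nonneg hfz] using this
  have hIoi : IntegrableOn f (Ioi (1:ℝ)) := by
    apply Integrable.mono' (g := fun z => z ^ (-c))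
    · exact integrableOn_Ioi_rpow_of_lt (by linarith) one_pos
    · exact (hcont.mono (Ioi_subset_Ioi zero_le_one)).aestronglyMeasurable measurableSet_Ioi
    · refine (ae_restrict_iff' measurableSet_Ioi).2 (ae_of_all _ ?_)
      intro z hz
      have hz1 : (1:ℝ) < z := hz
      have hz0 : (0:ℝ) < z := lt_trans one_pos hz1
      have hza : (0:ℝ) < z + a := by linarith
      have h1 : (z + a) ^ (-c) ≤ z ^ (-c) :=
        Real.rpow_le_rpow_of_nonpos hz0 (by linarith) (by linarith)
      have h2 : Real.exp (-(σ * (z + a) ^ (-α))) ≤ 1 := by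
        rw [Real.exp_le_one_iff]
        have : (0:ℝ) ≤ (z + a) ^ (-α) := Real.rpow_nonneg hza.le _
        nlinarith
      have hfz : 0 ≤ f z := hfnonneg z (by simp [Set.mem_Ioi]; linarith)
      rw [Real.norm_eq_abs, abs_of_nonneg hfz]
      calc f z ≤ (z + a) ^ (-c) * 1 :=
            mul_le_mul_of_nonneg_left h2 (Real.rpow_nonneg hza.le _)
        _ ≤ z ^ (-c) := by rw [mul_one]; exact h1
  have : Ioc (0:ℝ) 1 ∪ Ioi 1 = Ioi (0:ℝ) := Ioc_union_Ioi_eq_Ioi zero_le_one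
  rw [← this]
  exact hIoc.union hIoi

lemma intPos_master {α a σ c : ℝ} (hα : 0 < α) (ha : 0 ≤ a) (hσ : 0 < σ) (hc : 1 < c) :
    0 < ∫ z in Ioi (0:ℝ), (z + a) ^ (-c) * Real.exp (-(σ * (z + a) ^ (-α))) := by
  set f : ℝ → ℝ := fun z => (z + a) ^ (-c) * Real.exp (-(σ * (z + a) ^ (-α))) with hf
  have hfnonneg : ∀ z ∈ Ioi (0:ℝ), 0 ≤ f z := by
    intro z hz
    have : (0:ℝ) < z + a := by have := hz.out; linarith
    positivity
  rw [setIntegral_pos_iff_support_of_nonneg_ae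
    ((ae_restrict_iff' measurableSet_Ioi).2 (ae_of_all _ hfnonneg))
    (intOn_master hα ha hσ hc)]
  have hsub : Ioi (0:ℝ) ⊆ Function.support f ∩ Ioi 0 := by
    intro z hz
    refine ⟨?_, hz⟩
    have hz0 : (0:ℝ) < z + a := by have := hz.out; linarith
    have : 0 < f z := by positivity
    exact this.ne'
    
  calc (0:ENNReal) < volume (Ioi (0:ℝ)) := by simp [Real.volume_Ioi]
    _ ≤ volume (Function.support f ∩ Ioi 0) := measure_mono hsub

lemma cheby {g φ p : ℝ → ℝ}
    (hg : AntitoneOn g (Ioi (0:ℝ))) (hφ : MonotoneOn φ (Ioi (0:ℝ)))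
    (hp : ∀ x ∈ Ioi (0:ℝ), 0 ≤ p x)
    (h1 : IntegrableOn p (Ioi (0:ℝ)))
    (h2 : IntegrableOn (fun z => g z * p z) (Ioi (0:ℝ)))
    (h3 : IntegrableOn (fun z => φ z * p z) (Ioi (0:ℝ)))
    (h4 : IntegrableOn (fun z => g z * φ z * p z) (Ioi (0:ℝ))) :
    (∫ z in Ioi (0:ℝ), g z * φ z * p z) * ∫ z in Ioi (0:ℝ), p z ≤
      (∫ z in Ioi (0:ℝ), g z * p z) * ∫ z in Ioi (0:ℝ), φ z * p z := by
  set μ : Measure ℝ := volume.restrict (Ioi (0:ℝ)) with hμ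
  set F : ℝ × ℝ → ℝ :=
    fun x => (g x.1 - g x.2) * (φ x.2 - φ x.1) * (p x.1 * p x.2) with hF
  have e1 : Integrable (fun x : ℝ × ℝ => (g x.1 * p x.1) * (φ x.2 * p x.2)) (μ.prod μ) :=
    h2.mul_prod h3
  have e2 : Integrable (fun x : ℝ × ℝ => (g x.1 * φ x.1 * p x.1) * p x.2) (μ.prod μ) :=
    h4.mul_prod h1
  have e3 : Integrable (fun x : ℝ × ℝ => p x.1 * (g x.2 * φ x.2 * p x.2)) (μ.prod μ) :=
    h1.mul_prod h4
  have e4 : Integrable (fun x : ℝ × ℝ => (φ x.1 * p x.1) * (g x.2 * p x.2)) (μ.prod μ) :=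
    h3.mul_prod h2
  have hFeq : F = fun x : ℝ × ℝ =>
      (g x.1 * p x.1) * (φ x.2 * p x.2) - (g x.1 * φ x.1 * p x.1) * p x.2
        - p x.1 * (g x.2 * φ x.2 * p x.2) + (φ x.1 * p x.1) * (g x.2 * p x.2) := by
    funext x
    simp only [hF]
    ring
  have hFint : Integrable F (μ.prod μ) := by
    rw [hFeq]
    exact ((e1.sub e2).sub e3).add e4
  have h0 : 0 ≤ ∫ x, F x ∂(μ.prod μ) := by
    apply integral_nonneg_of_ae
    have hprod : μ.prod μ = (volume.prod volume).restrict ((Ioi (0:ℝ)) ×ˢ (Ioi (0:ℝ))) := by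
      rw [hμ, Measure.prod_restrict]
    rw [hprod]
    refine (ae_restrict_iff' (measurableSet_Ioi.prod measurableSet_Ioi)).2 (ae_of_all _ ?_)
    rintro ⟨x, y⟩ ⟨hx, hy⟩
    simp only [hF]
    have hpx := hp x hx
    have hpy := hp y hy
    rcases le_total x y with hxy | hxy
    · have a1 : g y ≤ g x := hg hx hy hxy
      have a2 : φ x ≤ φ y := hφ hx hy hxy
      have : 0 ≤ (g x - g y) * (φ y - φ x) := mul_nonneg (by linarith) (by linarith)
      exact mul_nonneg this (mul_nonneg hpx hpy)
    · have a1 : g x ≤ g y := hg hy hx hxy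
      have a2 : φ y ≤ φ x := hφ hy hx hxy
      have : 0 ≤ (g x - g y) * (φ y - φ x) := by nlinarith
      exact mul_nonneg this (mul_nonneg hpx hpy)
  have hval : ∫ x, F x ∂(μ.prod μ) =
      (∫ z in Ioi (0:ℝ), g z * p z) * (∫ z in Ioi (0:ℝ), φ z * p z)
      - (∫ z in Ioi (0:ℝ), g z * φ z * p z) * (∫ z in Ioi (0:ℝ), p z)
      - (∫ z in Ioi (0:ℝ), p z) * (∫ z in Ioi (0:ℝ), g z * φ z * p z)
      + (∫ z in Ioi (0:ℝ), φ z * p z) * (∫ z in Ioi (0:ℝ), g z * p z) := by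
    have i12 : Integrable (fun x : ℝ × ℝ =>
        (g x.1 * p x.1) * (φ x.2 * p x.2) - (g x.1 * φ x.1 * p x.1) * p x.2) (μ.prod μ) :=
      e1.sub e2
    have i123 : Integrable (fun x : ℝ × ℝ =>
        (g x.1 * p x.1) * (φ x.2 * p x.2) - (g x.1 * φ x.1 * p x.1) * p x.2
          - p x.1 * (g x.2 * φ x.2 * p x.2)) (μ.prod μ) := i12.sub e3
    rw [hFeq]
    rw [integral_add i123 e4, integral_sub i12 e3, integral_sub e1 e2]
    rw [integral_prod_mul (fun z => g z * p z) (fun z => φ z * p z),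
      integral_prod_mul (fun z => g z * φ z * p z) p,
      integral_prod_mul p (fun z => g z * φ z * p z),
      integral_prod_mul (fun z => φ z * p z) (fun z => g z * p z)]
  rw [hval] at h0
  nlinarith [h0]

lemma subst_aux {α σ : ℝ} (hα : 0 < α) (hσ : 0 < σ) {d : ℝ} (hd : 0 ≤ d) :
    ∫ u in Ioi (0:ℝ), u ^ (-(α + 1 + d)) * Real.exp (-(σ * u ^ (-α)))
      = σ ^ (-((α + d) / α)) * (1 / α) * Real.Gamma ((α + d) / α) := by
  rw [← integral_comp_rpow_Ioi (fun u => u ^ (-(α + 1 + d)) * Real.exp (-(σ * u ^ (-α))))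
      (p := -1) (by norm_num)]
  rw [setIntegral_congr_fun measurableSet_Ioi (g := fun x : ℝ => x ^ (α - 1 + d) * Real.exp (-σ * x ^ α)) ?_]
  · rw [integral_rpow_mul_exp_neg_mul_rpow hα (by linarith) hσ]
    have h1 : (α - 1 + d + 1) / α = (α + d) / α := by ring_nf
    have h1' : -(α - 1 + d + 1) / α = -((α + d) / α) := by ring_nf
    rw [h1, h1']
  · intro x hx
    have hx0 : (0:ℝ) < x := hx
    have hinv : x ^ ((-1:ℝ)) = x⁻¹ := Real.rpow_neg_one x
    simp only [smul_eq_mul]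
    rw [hinv]
    have h2 : (x⁻¹) ^ (-(α + 1 + d)) = x ^ (α + 1 + d) := by
      rw [← Real.rpow_neg_one x, ← Real.rpow_mul hx0.le]
      congr 1
      ring
    have h3 : (x⁻¹) ^ (-α) = x ^ α := by
      rw [← Real.rpow_neg_one x, ← Real.rpow_mul hx0.le]
      congr 1
      ring
    rw [h2, h3]
    have h4 : |(-1:ℝ)| * x ^ ((-1:ℝ) - 1) = x ^ ((-2):ℝ) := by
      norm_num
    rw [h4]
    have h5 : x ^ ((-2):ℝ) * (x ^ (α + 1 + d) * Real.exp (-(σ * x ^ α)))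
        = x ^ (α - 1 + d) * Real.exp (-(σ * x ^ α)) := by
      rw [← mul_assoc, ← Real.rpow_add hx0]
      congr 2
      ring
    rw [h5, neg_mul]

lemma intOn_master0 {α σ c : ℝ} (hα : 0 < α) (hσ : 0 < σ) (hc : 1 < c) :
    IntegrableOn (fun u : ℝ => u ^ (-c) * Real.exp (-(σ * u ^ (-α)))) (Ioi (0:ℝ)) := by
  apply (intOn_master (a := 0) hα le_rfl hσ hc).congr_fun ?_ measurableSet_Ioi
  intro x _
  simp

lemma full_zero {α σ : ℝ} (hα : 0 < α) (hσ : 0 < σ) :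
    ∫ u in Ioi (0:ℝ),
      ((Real.Gamma (1 + 1/α) * σ ^ (-(1/α))) * u ^ (-(α + 1)) - u ^ (-(α + 2))) *
        Real.exp (-(σ * u ^ (-α))) = 0 := by
  set C1 : ℝ := Real.Gamma (1 + 1/α) * σ ^ (-(1/α)) with hC1
  have heq : ∀ u : ℝ,
      (C1 * u ^ (-(α + 1)) - u ^ (-(α + 2))) * Real.exp (-(σ * u ^ (-α)))
        = C1 * (u ^ (-(α + 1)) * Real.exp (-(σ * u ^ (-α))))
          - u ^ (-(α + 2)) * Real.exp (-(σ * u ^ (-α))) := by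
    intro u; ring
  simp only [heq]
  rw [integral_sub ((intOn_master0 hα hσ (by linarith)).const_mul C1)
    (intOn_master0 hα hσ (by linarith)), integral_const_mul]
  have d0 : ∫ u in Ioi (0:ℝ), u ^ (-(α + 1)) * Real.exp (-(σ * u ^ (-α)))
      = σ ^ (-((α + 0) / α)) * (1 / α) * Real.Gamma ((α + 0) / α) := by
    have h := subst_aux hα hσ (le_refl 0) (σ := σ)
    simp only [show -(α + 1 + (0:ℝ)) = -(α + 1) from by norm_num] at h
    exact h
  have d1 : ∫ u in Ioi (0:ℝ), u ^ (-(α + 2)) * Real.exp (-(σ * u ^ (-α)))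
      = σ ^ (-((α + 1) / α)) * (1 / α) * Real.Gamma ((α + 1) / α) := by
    have h := subst_aux hα hσ zero_le_one (σ := σ)
    simp only [show -(α + 1 + (1:ℝ)) = -(α + 2) from by ring] at h
    exact h
  rw [d0, d1]
  have e1 : (α + 0) / α = 1 := by rw [add_zero, div_self hα.ne']
  have e2 : (α + 1) / α = 1 + 1/α := by rw [add_div, div_self hα.ne']
  have e3 : σ ^ (-((α + 1) / α)) = σ⁻¹ * σ ^ (-(1/α)) := by
    rw [show -((α + 1) / α) = (-1) + (-(1/α)) by rw [add_div, div_self hα.ne']; ring, Real.rpow_add hσ,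
      Real.rpow_neg_one]
  have e4 : σ ^ (-((α + 0) / α)) = σ⁻¹ := by
    rw [show -((α + 0) / α) = (-1 : ℝ) by rw [add_zero, div_self hα.ne'], Real.rpow_neg_one]
  rw [e3, e4, e1, e2, Real.Gamma_one]
  simp only [hC1]
  ring

lemma shift_Ioi (q : ℝ → ℝ) (a : ℝ) :
    ∫ z in Ioi (0:ℝ), q (z + a) = ∫ u in Ioi a, q u := by
  rw [← integral_indicator measurableSet_Ioi, ← integral_indicator measurableSet_Ioi]
  rw [← integral_add_right_eq_self (fun u => (Ioi a).indicator q u) a]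
  congr 1
  funext x
  by_cases h : x ∈ Ioi (0:ℝ)
  · have hx : x + a ∈ Ioi a := by simp only [mem_Ioi] at *; linarith
    simp [indicator_of_mem h, indicator_of_mem hx]
  · have hx : x + a ∉ Ioi a := by simp only [mem_Ioi] at *; linarith
    simp [indicator_of_notMem h, indicator_of_notMem hx]

lemma hd_r (b c z : ℝ) (h : 0 < z + b) :
    HasDerivAt (fun z : ℝ => (z + b) ^ (-c)) (-c * (z + b) ^ (-c - 1)) z := by
  have h1 : HasDerivAt (fun z : ℝ => z + b) 1 z := (hasDerivAt_id z).add_const b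
  have h2 := Real.hasDerivAt_rpow_const (x := z + b) (p := -c) (Or.inl h.ne')
  simpa [Function.comp_def] using h2.comp z h1

lemma hd_e (b σ α z : ℝ) (h : 0 < z + b) :
    HasDerivAt (fun z : ℝ => Real.exp (-(σ * (z + b) ^ (-α))))
      (Real.exp (-(σ * (z + b) ^ (-α))) * (σ * α * (z + b) ^ (-α - 1))) z := by
  have h1 : HasDerivAt (fun z : ℝ => -(σ * (z + b) ^ (-α))) (σ * α * (z + b) ^ (-α - 1)) z := by
    have := ((hd_r b α z h).const_mul σ).neg
    refine this.congr_deriv ?_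
    ring
  exact h1.exp

/-- limits at infinity -/
lemma tendsto_rexp_aux (b σ α : ℝ) (hα : 0 < α) :
    Tendsto (fun z : ℝ => Real.exp (-(σ * (z + b) ^ (-α)))) atTop (nhds 1) := by
  have h1 : Tendsto (fun z : ℝ => z + b) atTop atTop := tendsto_atTop_add_const_right _ b tendsto_id
  have h2 : Tendsto (fun z : ℝ => (z + b) ^ (-α)) atTop (nhds 0) :=
    (tendsto_rpow_neg_atTop hα).comp h1
  have h3 : Tendsto (fun z : ℝ => -(σ * (z + b) ^ (-α))) atTop (nhds 0) := by
    have := (h2.const_mul σ).neg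
    simpa using this
  have := (Real.continuous_exp.tendsto 0).comp h3
  simpa [Function.comp_def] using this

lemma tendsto_rpow_shift (b c : ℝ) (hc : 0 < c) :
    Tendsto (fun z : ℝ => (z + b) ^ (-c)) atTop (nhds 0) :=
  (tendsto_rpow_neg_atTop hc).comp (tendsto_atTop_add_const_right _ b tendsto_id)

/-- FTC identity for the pure integrals: for `a > 0`, `m > 1`:
`∫ (z+a)^(-m) e = (1/(m-1)) a^(-(m-1)) E + (σα/(m-1)) ∫ (z+a)^(-(m-1)-α-1) e`. -/
lemma ftc_aux {α a σ m : ℝ} (hα : 0 < α) (ha : 0 < a) (hσ : 0 < σ) (hm : 1 < m) :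
    ∫ z in Ioi (0:ℝ), (z + a) ^ (-m) * Real.exp (-(σ * (z + a) ^ (-α)))
      = (1 / (m - 1)) * (a ^ (-(m - 1)) * Real.exp (-(σ * a ^ (-α))))
        + (σ * α / (m - 1)) *
          ∫ z in Ioi (0:ℝ), (z + a) ^ (-(m + α)) * Real.exp (-(σ * (z + a) ^ (-α))) := by
  set E : ℝ → ℝ := fun z => Real.exp (-(σ * (z + a) ^ (-α))) with hE
  set W : ℝ → ℝ := fun z => (-(1 / (m - 1))) * ((z + a) ^ (-(m - 1)) * E z) with hW
  have hderiv : ∀ z ∈ Ici (0:ℝ), HasDerivAt W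
      ((z + a) ^ (-m) * E z - (σ * α / (m - 1)) * ((z + a) ^ (-(m + α)) * E z)) z := by
    intro z hz
    have hz0 : 0 < z + a := by have := hz.out; linarith
    have h1 := (hd_r a (m - 1) z hz0).mul (hd_e a σ α z hz0)
    have h2 := h1.const_mul (-(1 / (m - 1)))
    refine h2.congr_deriv ?_
    have e1 : (z + a) ^ (-(m - 1) - 1) = (z + a) ^ (-m) := by
      congr 1; ring
    have e2 : (z + a) ^ (-(m - 1)) * (z + a) ^ (-α - 1) = (z + a) ^ (-(m + α)) := by
      rw [← Real.rpow_add hz0]; congr 1; ring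
    rw [e1] at h2 ⊢
    simp only [hE]
    rw [show (z + a) ^ (-(m + α)) = (z + a) ^ (-(m - 1)) * ((z + a) ^ (-α - 1)) from by
      rw [← Real.rpow_add hz0]; congr 1; ring]
    set P := (z + a) ^ (-m) with hP
    set Q := (z + a) ^ (-(m - 1)) with hQ
    set R := (z + a) ^ (-α - 1) with hR
    set Ex := Real.exp (-(σ * (z + a) ^ (-α))) with hEx
    have hm1 : m - 1 ≠ 0 := by linarith
    field_simp
    ring
  have hint : IntegrableOn (fun z =>
      (z + a) ^ (-m) * E z - (σ * α / (m - 1)) * ((z + a) ^ (-(m + α)) * E z)) (Ioi (0:ℝ)) := by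
    exact (intOn_master hα ha.le hσ hm).sub
      ((intOn_master hα ha.le hσ (by linarith)).const_mul _)
  have htend : Tendsto W atTop (nhds 0) := by
    have h0 : (-(1 / (m - 1))) * ((0:ℝ) * 1) = 0 := by ring
    exact h0 ▸ (((tendsto_rpow_shift a (m - 1) (by linarith)).mul
      (tendsto_rexp_aux a σ α hα)).const_mul (-(1 / (m - 1))))
  have key := integral_Ioi_of_hasDerivAt_of_tendsto' hderiv hint htend
  have hW0 : W 0 = (-(1 / (m - 1))) * (a ^ (-(m - 1)) * Real.exp (-(σ * a ^ (-α)))) := by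
    simp [hW, hE]
  rw [hW0] at key
  have hsub : ∫ z in Ioi (0:ℝ), ((z + a) ^ (-m) * E z
      - (σ * α / (m - 1)) * ((z + a) ^ (-(m + α)) * E z))
      = (∫ z in Ioi (0:ℝ), (z + a) ^ (-m) * E z)
        - (σ * α / (m - 1)) * ∫ z in Ioi (0:ℝ), (z + a) ^ (-(m + α)) * E z := by
    rw [integral_sub (intOn_master hα ha.le hσ hm)
      ((intOn_master hα ha.le hσ (by linarith)).const_mul _), integral_const_mul]
  rw [hsub] at key
  linarith [key]

lemma pure_bound2 {α a σ : ℝ} (hα : 0 < α) (ha : 0 < a) (hσ : 0 < σ) :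
    ∫ z in Ioi (0:ℝ), (z + a) ^ (-(α + 2)) * Real.exp (-(σ * (z + a) ^ (-α)))
      ≤ (α / ((α + 1) * a)) *
        ∫ z in Ioi (0:ℝ), (z + a) ^ (-(α + 1)) * Real.exp (-(σ * (z + a) ^ (-α))) := by
  have hA := ftc_aux (m := α + 2) hα ha hσ (by linarith)
  have hB := ftc_aux (m := α + 1) hα ha hσ (by linarith)
  set J2 : ℝ := ∫ z in Ioi (0:ℝ), (z + a) ^ (-(α + 2 + α)) * Real.exp (-(σ * (z + a) ^ (-α)))
    with hJ2
  set J1 : ℝ := ∫ z in Ioi (0:ℝ), (z + a) ^ (-(α + 1 + α)) * Real.exp (-(σ * (z + a) ^ (-α)))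
    with hJ1
  have hJcomp : J2 ≤ a⁻¹ * J1 := by
    rw [← integral_const_mul]
    apply setIntegral_mono_on (intOn_master hα ha.le hσ (by linarith))
      ((intOn_master hα ha.le hσ (by linarith)).const_mul _) measurableSet_Ioi
    intro z hz
    have hz0 : (0:ℝ) < z + a := by have := hz.out; linarith
    have h1 : (z + a) ^ (-(α + 2 + α)) ≤ a⁻¹ * (z + a) ^ (-(α + 1 + α)) := by
      have h2 : (z + a) ^ (-(α + 2 + α)) = (z + a)⁻¹ * (z + a) ^ (-(α + 1 + α)) := by
        rw [← Real.rpow_neg_one (z + a), ← Real.rpow_add hz0]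
        congr 1; ring
      rw [h2]
      apply mul_le_mul_of_nonneg_right ?_ (Real.rpow_nonneg hz0.le _)
      have := hz.out
      exact (inv_le_inv₀ (by linarith) ha).mpr (by linarith)
    calc (z + a) ^ (-(α + 2 + α)) * Real.exp (-(σ * (z + a) ^ (-α)))
        ≤ (a⁻¹ * (z + a) ^ (-(α + 1 + α))) * Real.exp (-(σ * (z + a) ^ (-α))) :=
          mul_le_mul_of_nonneg_right h1 (Real.exp_pos _).le
      _ = a⁻¹ * ((z + a) ^ (-(α + 1 + α)) * Real.exp (-(σ * (z + a) ^ (-α)))) := by ring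
  -- exponent normalizations inside hA hB
  have eA : α + 2 - 1 = α + 1 := by ring
  have eB : α + 1 - 1 = α := by ring
  rw [eA] at hA
  rw [eB] at hB
  -- now combine
  have haimp : a ^ (-(α + 1)) = a⁻¹ * a ^ (-α) := by
    rw [← Real.rpow_neg_one a, ← Real.rpow_add ha]
    congr 1; ring
  have hEpos : 0 ≤ Real.exp (-(σ * a ^ (-α))) := (Real.exp_pos _).le
  have hapos' : 0 < (α + 1) * a := by positivity
  rw [hA, hB]
  rw [haimp]
  have hfrac1 : (1 / (α + 2 - 1)) = 1 / (α + 1) := by rw [eA]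
  -- goal: algebra
  rw [mul_add]
  have hgoal1 : (1 / (α + 1)) * (a⁻¹ * a ^ (-α) * Real.exp (-(σ * a ^ (-α))))
      = α / ((α + 1) * a) * ((1 / α) * (a ^ (-α) * Real.exp (-(σ * a ^ (-α))))) := by
    field_simp
  have hgoal2 : (σ * α / (α + 1)) * J2 ≤ α / ((α + 1) * a) * ((σ * α / α) * J1) := by
    have hσα : σ * α / α = σ := by field_simp
    rw [hσα]
    have : α / ((α + 1) * a) * (σ * J1) = (σ * α / (α + 1)) * (a⁻¹ * J1) := by
      field_simp
    rw [this]
    apply mul_le_mul_of_nonneg_left hJcomp (by positivity)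
  linarith [hgoal1, hgoal2]

lemma pure_bound1 {α a σ : ℝ} (hα : 0 < α) (ha : 0 ≤ a) (hσ : 0 < σ) :
    ∫ z in Ioi (0:ℝ), (z + a) ^ (-(α + 2)) * Real.exp (-(σ * (z + a) ^ (-α)))
      ≤ (Real.Gamma (1 + 1/α) * σ ^ (-(1/α))) *
        ∫ z in Ioi (0:ℝ), (z + a) ^ (-(α + 1)) * Real.exp (-(σ * (z + a) ^ (-α))) := by
  set C1 : ℝ := Real.Gamma (1 + 1/α) * σ ^ (-(1/α)) with hC1
  have hC1pos : 0 < C1 := by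
    apply mul_pos (Real.Gamma_pos_of_pos (by positivity)) (Real.rpow_pos_of_pos hσ _)
  by_cases hcase : 1 ≤ C1 * a
  · -- pointwise comparison
    have hapos : 0 < a := by
      rcases (lt_or_ge 0 a) with h | h
      · exact h
      · exfalso; nlinarith
    rw [← integral_const_mul]
    apply setIntegral_mono_on (intOn_master hα ha hσ (by linarith))
      ((intOn_master hα ha hσ (by linarith)).const_mul C1) measurableSet_Ioi
    intro z hz
    have hz0 : (0:ℝ) < z + a := by have := hz.out; linarith
    have key : (z + a) ^ (-(α + 2)) ≤ C1 * (z + a) ^ (-(α + 1)) := by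
      have h1 : (z + a) ^ (-(α + 2)) = (z + a)⁻¹ * (z + a) ^ (-(α + 1)) := by
        rw [← Real.rpow_neg_one (z + a), ← Real.rpow_add hz0]
        congr 1
        ring
      rw [h1]
      apply mul_le_mul_of_nonneg_right ?_ (Real.rpow_nonneg hz0.le _)
      have h2 : (z + a)⁻¹ < a⁻¹ := by
        apply inv_strictAnti₀ hapos
        have := hz.out; linarith
      have h3 : a⁻¹ ≤ C1 := by
        rw [inv_le_iff_one_le_mul₀ hapos]
        linarith [hcase]
      linarith
    calc (z + a) ^ (-(α + 2)) * Real.exp (-(σ * (z + a) ^ (-α)))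
        ≤ (C1 * (z + a) ^ (-(α + 1))) * Real.exp (-(σ * (z + a) ^ (-α))) :=
          mul_le_mul_of_nonneg_right key (Real.exp_pos _).le
      _ = C1 * ((z + a) ^ (-(α + 1)) * Real.exp (-(σ * (z + a) ^ (-α)))) := by ring
  · push_neg at hcase
    set q : ℝ → ℝ := fun u =>
      (C1 * u ^ (-(α + 1)) - u ^ (-(α + 2))) * Real.exp (-(σ * u ^ (-α))) with hq
    have hqint : IntegrableOn q (Ioi (0:ℝ)) := by
      have : q = fun u => C1 * (u ^ (-(α + 1)) * Real.exp (-(σ * u ^ (-α))))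
          - u ^ (-(α + 2)) * Real.exp (-(σ * u ^ (-α))) := by
        funext u; simp only [hq]; ring
      rw [this]
      exact ((intOn_master0 hα hσ (by linarith)).const_mul C1).sub
        (intOn_master0 hα hσ (by linarith))
    have hsplit : (∫ u in Ioc (0:ℝ) a, q u) + (∫ u in Ioi a, q u) = ∫ u in Ioi (0:ℝ), q u := by
      rw [← setIntegral_union (Ioc_disjoint_Ioi le_rfl) measurableSet_Ioi
        (hqint.mono_set Ioc_subset_Ioi_self) (hqint.mono_set (Ioi_subset_Ioi ha))]
      rw [Ioc_union_Ioi_eq_Ioi ha]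
    have hIoc : (∫ u in Ioc (0:ℝ) a, q u) ≤ 0 := by
      apply setIntegral_nonpos measurableSet_Ioc
      intro u hu
      have hu0 : 0 < u := hu.1
      have hua : u ≤ a := hu.2
      have h1 : C1 * u ^ (-(α + 1)) ≤ u ^ (-(α + 2)) := by
        have h2 : u ^ (-(α + 2)) = u⁻¹ * u ^ (-(α + 1)) := by
          rw [← Real.rpow_neg_one u, ← Real.rpow_add hu0]
          congr 1
          ring
        rw [h2]
        apply mul_le_mul_of_nonneg_right ?_ (Real.rpow_nonneg hu0.le _)
        have : C1 * u < 1 := by nlinarith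
        rw [← inv_inv C1]
        rw [inv_inv]
        nlinarith [mul_pos hC1pos hu0, inv_pos.mpr hu0, mul_inv_cancel₀ hu0.ne']
      apply mul_nonpos_of_nonpos_of_nonneg (by linarith) (Real.exp_pos _).le
    have hfull : ∫ u in Ioi (0:ℝ), q u = 0 := full_zero hα hσ
    have hshift : ∫ z in Ioi (0:ℝ), q (z + a) = ∫ u in Ioi a, q u := shift_Ioi q a
    have hIoiA : 0 ≤ ∫ z in Ioi (0:ℝ), q (z + a) := by
      rw [hshift]
      linarith [hsplit, hIoc, hfull]
    have hexpand : ∫ z in Ioi (0:ℝ), q (z + a)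
        = C1 * (∫ z in Ioi (0:ℝ), (z + a) ^ (-(α + 1)) * Real.exp (-(σ * (z + a) ^ (-α))))
          - ∫ z in Ioi (0:ℝ), (z + a) ^ (-(α + 2)) * Real.exp (-(σ * (z + a) ^ (-α))) := by
      have : (fun z : ℝ => q (z + a)) = fun z =>
          C1 * ((z + a) ^ (-(α + 1)) * Real.exp (-(σ * (z + a) ^ (-α))))
            - (z + a) ^ (-(α + 2)) * Real.exp (-(σ * (z + a) ^ (-α))) := by
        funext z; simp only [hq]; ring
      rw [this]
      rw [integral_sub ((intOn_master hα ha hσ (by linarith)).const_mul C1)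
        (intOn_master hα ha hσ (by linarith)), integral_const_mul]
    linarith [hIoiA, hexpand.symm ▸ hIoiA]

end Stmt7Aux

open Stmt7Aux

/-- If `λ ∈ [0,∞)^K` has minimum `0` and `s` is the number of indices `j` with
`λ_j ≤ λ_i`, then `I_{i,α+2}(λ)/I_{i,α+1}(λ) ≤ Γ(1 + 1/α) s^(-1/α)`, and moreover
if `λ_i > 0` then it is also at most `α/((α+1) λ_i)`. -/
theorem stmt_7 (K : ℕ) (hK : 0 < K) (α : ℝ) (hα : 0 < α)
    (L : Fin K → ℝ) (hL : ∀ l, 0 ≤ L l) (hmin : ∃ l, L l = 0)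
    (i : Fin K) (s : ℕ)
    (hs : s = (Finset.univ.filter (fun j : Fin K => L j ≤ L i)).card) :
    Ifun K i (α + 2) α L / Ifun K i (α + 1) α L ≤
      Real.Gamma (1 + 1/α) * (s : ℝ) ^ (-(1/α)) ∧
    (0 < L i →
      Ifun K i (α + 2) α L / Ifun K i (α + 1) α L ≤ α / ((α + 1) * L i)) := by
  set a : ℝ := L i with ha_def
  have ha : 0 ≤ a := hL i
  set σ : ℝ := (s : ℝ) with hσ_def
  set F : Finset (Fin K) := Finset.univ.filter (fun j : Fin K => L j ≤ L i) with hF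
  have hiF : i ∈ F := Finset.mem_filter.mpr ⟨Finset.mem_univ i, le_refl _⟩
  have hσpos : 0 < σ := by
    have h : 0 < s := hs ▸ Finset.card_pos.mpr ⟨i, hiF⟩
    simp only [hσ_def]
    exact_mod_cast h
  have hσsum : ∀ x : ℝ, σ * x = ∑ _l ∈ F, x := by
    intro x
    rw [Finset.sum_const, nsmul_eq_mul, hσ_def, hs]
  -- positivity of bases
  have hbase : ∀ (z : ℝ), z ∈ Ioi (0:ℝ) → ∀ l : Fin K, (0:ℝ) < z + L l := by
    intro z hz l
    have := hz.out
    have := hL l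
    linarith
  -- the functions
  set D : ℝ → ℝ := fun z => (∑ l : Fin K, (z + L l) ^ (-α)) - σ * (z + a) ^ (-α) with hD
  set φ : ℝ → ℝ := fun z => Real.exp (-(D z)) with hφ
  set p : ℝ → ℝ := fun z => (z + a) ^ (-(α + 1)) * Real.exp (-(σ * (z + a) ^ (-α))) with hp
  set g : ℝ → ℝ := fun z => (z + a)⁻¹ with hg
  -- sums comparison
  have hsum_le : ∀ (c : ℝ), 0 < c → ∀ z ∈ Ioi (0:ℝ),
      σ * (z + a) ^ (-c) ≤ ∑ l : Fin K, (z + L l) ^ (-c) := by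
    intro c hc z hz
    rw [hσsum]
    calc (∑ _l ∈ F, (z + a) ^ (-c)) ≤ ∑ l ∈ F, (z + L l) ^ (-c) := by
          apply Finset.sum_le_sum
          intro l hl
          have hLl : L l ≤ L i := (Finset.mem_filter.mp hl).2
          exact Real.rpow_le_rpow_of_nonpos (hbase z hz l) (by rw [ha_def]; linarith)
            (by linarith)
      _ ≤ ∑ l : Fin K, (z + L l) ^ (-c) := by
          apply Finset.sum_le_sum_of_subset_of_nonneg (Finset.filter_subset _ _)
          intro l _ _
          exact Real.rpow_nonneg (hbase z hz l).le _
  have hD0 : ∀ z ∈ Ioi (0:ℝ), 0 ≤ D z := by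
    intro z hz
    have := hsum_le α hα z hz
    simp only [hD]
    linarith
  -- derivative of D
  have hDder : ∀ z ∈ Ioi (0:ℝ), HasDerivAt D
      ((∑ l : Fin K, -α * (z + L l) ^ (-α - 1)) - σ * (-α * (z + a) ^ (-α - 1))) z := by
    intro z hz
    apply HasDerivAt.sub
    · exact HasDerivAt.fun_sum (fun l _ => hd_r (L l) α z (hbase z hz l))
    · exact (hd_r a α z (by have := hz.out; linarith)).const_mul σ
  have hDanti : AntitoneOn D (Ioi (0:ℝ)) := by
    apply antitoneOn_of_deriv_nonpos (convex_Ioi 0)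
    · exact fun z hz => (hDder z hz).continuousAt.continuousWithinAt
    · rw [interior_Ioi]
      exact fun z hz => (hDder z hz).differentiableAt.differentiableWithinAt
    · rw [interior_Ioi]
      intro z hz
      rw [(hDder z hz).deriv]
      have hkey := hsum_le (α + 1) (by linarith) z hz
      have hrw : ∀ w : ℝ, 0 < w → w ^ (-(α + 1)) = w ^ (-α - 1) := by
        intro w hw; congr 1; ring
      have h1 : σ * (z + a) ^ (-α - 1) ≤ ∑ l : Fin K, (z + L l) ^ (-α - 1) := by
        rw [← hrw _ (by have := hz.out; linarith)]
        calc σ * (z + a) ^ (-(α + 1)) ≤ ∑ l : Fin K, (z + L l) ^ (-(α + 1)) := hkey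
          _ = ∑ l : Fin K, (z + L l) ^ (-α - 1) := by
              apply Finset.sum_congr rfl
              intro l _
              rw [hrw _ (hbase z hz l)]
      have h2 : ∑ l : Fin K, -α * (z + L l) ^ (-α - 1)
          = -α * ∑ l : Fin K, (z + L l) ^ (-α - 1) := by
        rw [Finset.mul_sum]
      rw [h2]
      nlinarith [mul_le_mul_of_nonneg_left h1 hα.le]
  have hφmono : MonotoneOn φ (Ioi (0:ℝ)) := by
    intro x hx y hy hxy
    simp only [hφ]
    exact Real.exp_le_exp.mpr (neg_le_neg (hDanti hx hy hxy))
  have hφ_le_one : ∀ z ∈ Ioi (0:ℝ), φ z ≤ 1 := by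
    intro z hz
    simp only [hφ]
    rw [Real.exp_le_one_iff]
    linarith [hD0 z hz]
  have hφ_nonneg : ∀ z : ℝ, 0 ≤ φ z := fun z => (Real.exp_pos _).le
  have hganti : AntitoneOn g (Ioi (0:ℝ)) := by
    intro x hx y hy hxy
    simp only [hg]
    have hx0 : 0 < x + a := by have := hx.out; linarith
    exact (inv_le_inv₀ (by linarith) hx0).mpr (by linarith)
  have hp_nonneg : ∀ z ∈ Ioi (0:ℝ), 0 ≤ p z := by
    intro z hz
    have : 0 < z + a := by have := hz.out; linarith
    simp only [hp]
    positivity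
  -- continuity facts
  have hDcont : ContinuousOn D (Ioi (0:ℝ)) :=
    fun z hz => (hDder z hz).continuousAt.continuousWithinAt
  have hφcont : ContinuousOn φ (Ioi (0:ℝ)) :=
    Real.continuous_exp.comp_continuousOn hDcont.neg
  have hpcont : ContinuousOn p (Ioi (0:ℝ)) := (contOn_r a (α + 1) ha).mul (contOn_e a σ α ha)
  have hgcont : ContinuousOn g (Ioi (0:ℝ)) := by
    apply ContinuousOn.inv₀ ((continuous_id.add continuous_const).continuousOn)
    intro z hz
    have : 0 < z + a := by have := hz.out; linarith
    exact this.ne'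
  -- the pointwise identity for g * p
  have hgp_eq : EqOn (fun z : ℝ => (z + a) ^ (-(α + 2)) * Real.exp (-(σ * (z + a) ^ (-α))))
      (fun z => g z * p z) (Ioi (0:ℝ)) := by
    intro z hz
    have hz0 : 0 < z + a := by have := hz.out; linarith
    simp only [hg, hp]
    rw [show (z + a) ^ (-(α + 2)) = (z + a)⁻¹ * (z + a) ^ (-(α + 1)) from by
      rw [← Real.rpow_neg_one (z + a), ← Real.rpow_add hz0]; congr 1; ring]
    ring
  -- integrability
  have hIp : IntegrableOn p (Ioi (0:ℝ)) := intOn_master hα ha hσpos (by linarith)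
  have hIgp : IntegrableOn (fun z => g z * p z) (Ioi (0:ℝ)) :=
    (intOn_master hα ha hσpos (by linarith : (1:ℝ) < α + 2)).congr_fun hgp_eq measurableSet_Ioi
  have hIφp : IntegrableOn (fun z => φ z * p z) (Ioi (0:ℝ)) := by
    apply Integrable.mono' hIp ((hφcont.mul hpcont).aestronglyMeasurable measurableSet_Ioi)
    refine (ae_restrict_iff' measurableSet_Ioi).2 (ae_of_all _ ?_)
    intro z hz
    have h1 := hp_nonneg z hz
    have h2 := hφ_le_one z hz
    have h3 := hφ_nonneg z
    rw [Real.norm_eq_abs, Pi.mul_apply, abs_of_nonneg (mul_nonneg h3 h1)]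
    nlinarith
  have hIgφp : IntegrableOn (fun z => g z * φ z * p z) (Ioi (0:ℝ)) := by
    apply Integrable.mono' hIgp
      (((hgcont.mul hφcont).mul hpcont).aestronglyMeasurable measurableSet_Ioi)
    refine (ae_restrict_iff' measurableSet_Ioi).2 (ae_of_all _ ?_)
    intro z hz
    have hz0 : 0 < z + a := by have := hz.out; linarith
    have h1 := hp_nonneg z hz
    have h2 := hφ_le_one z hz
    have h3 := hφ_nonneg z
    have hgz : 0 ≤ g z := by simp only [hg]; positivity
    rw [Real.norm_eq_abs, Pi.mul_apply, Pi.mul_apply, abs_of_nonneg (mul_nonneg (mul_nonneg hgz h3) h1)]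
    calc g z * φ z * p z = φ z * (g z * p z) := by ring
      _ ≤ 1 * (g z * p z) := mul_le_mul_of_nonneg_right h2 (mul_nonneg hgz h1)
      _ = g z * p z := one_mul _
  -- identities for Ifun
  have hAeq : Ifun K i (α + 2) α L = ∫ z in Ioi (0:ℝ), g z * φ z * p z := by
    apply setIntegral_congr_fun measurableSet_Ioi
    intro z hz
    have hz0 : 0 < z + a := by have := hz.out; linarith
    have hexp : Real.exp (-(D z)) * Real.exp (-(σ * (z + a) ^ (-α)))
        = Real.exp (-∑ l : Fin K, (z + L l) ^ (-α)) := by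
      rw [← Real.exp_add]
      congr 1
      simp only [hD]
      ring
    simp only [hg, hφ, hp]
    rw [show (z + L i) ^ (-(α + 2)) = (z + a)⁻¹ * (z + a) ^ (-(α + 1)) from by
      rw [← ha_def, ← Real.rpow_neg_one (z + a), ← Real.rpow_add hz0]; congr 1; ring]
    rw [← hexp]
    ring
  have hBeq : Ifun K i (α + 1) α L = ∫ z in Ioi (0:ℝ), φ z * p z := by
    apply setIntegral_congr_fun measurableSet_Ioi
    intro z hz
    have hexp : Real.exp (-(D z)) * Real.exp (-(σ * (z + a) ^ (-α)))
        = Real.exp (-∑ l : Fin K, (z + L l) ^ (-α)) := by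
      rw [← Real.exp_add]
      congr 1
      simp only [hD]
      ring
    simp only [hφ, hp]
    rw [← ha_def, ← hexp]
    ring
  -- Chebyshev
  have hcheb := cheby hganti hφmono hp_nonneg hIp hIgp hIφp hIgφp
  -- pure integral identities
  have hA0eq : (∫ z in Ioi (0:ℝ), g z * p z)
      = ∫ z in Ioi (0:ℝ), (z + a) ^ (-(α + 2)) * Real.exp (-(σ * (z + a) ^ (-α))) :=
    (setIntegral_congr_fun measurableSet_Ioi hgp_eq).symm
  have hB0pos : 0 < ∫ z in Ioi (0:ℝ), p z := intPos_master hα ha hσpos (by linarith)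
  have hIBnonneg : 0 ≤ ∫ z in Ioi (0:ℝ), φ z * p z := by
    apply setIntegral_nonneg measurableSet_Ioi
    intro z hz
    exact mul_nonneg (hφ_nonneg z) (hp_nonneg z hz)
  -- the generic conclusion
  have main : ∀ C : ℝ, 0 ≤ C →
      (∫ z in Ioi (0:ℝ), (z + a) ^ (-(α + 2)) * Real.exp (-(σ * (z + a) ^ (-α))))
        ≤ C * ∫ z in Ioi (0:ℝ), (z + a) ^ (-(α + 1)) * Real.exp (-(σ * (z + a) ^ (-α))) →
      Ifun K i (α + 2) α L / Ifun K i (α + 1) α L ≤ C := by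
    intro C hC hpure
    rw [hAeq, hBeq]
    rcases hIBnonneg.eq_or_lt with hzero | hposB
    · rw [← hzero, div_zero]
      exact hC
    · rw [div_le_iff₀ hposB]
      have h1 : (∫ z in Ioi (0:ℝ), g z * p z) ≤ C * ∫ z in Ioi (0:ℝ), p z := by
        rw [hA0eq]
        exact hpure
      nlinarith [hcheb, mul_le_mul_of_nonneg_right h1 hIBnonneg, hB0pos]
  constructor
  · exact main _ (by positivity) (pure_bound1 hα ha hσpos)
  · intro hLi
    have hapos : 0 < a := hLi
    exact main _ (by positivity) (pure_bound2 hα hapos hσpos)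
end

section
/- For every real α > 1 and every positive integer i, one has Γ(1 + 1/α) · Γ(i + 1) / Γ(i + 1 + 1/α) ≤ 2 Γ(1 + 1/α) · i^{−1/α}; equivalently, B(1 + 1/α, i) / B(1, i) ≤ 2 Γ(1 + 1/α) i^{−1/α}. -/
open Real

lemma gamma_interp (x s : ℝ) (hx : 0 < x) (hs : 0 < s) (hs1 : s < 1) :
    Real.Gamma (x + 1) ≤ Real.Gamma (x + 1 + s) * (x + s) ^ (-s) := by
  have hxs : 0 < x + s := by linarith
  have hxs1 : 0 < x + 1 + s := by linarith
  have h1 : (0:ℝ) < Real.Gamma (x + s) := Real.Gamma_pos_of_pos hxs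
  have h2 : (0:ℝ) < Real.Gamma (x + 1 + s) := Real.Gamma_pos_of_pos hxs1
  have hc := Real.convexOn_log_Gamma.2 (Set.mem_Ioi.2 hxs) (Set.mem_Ioi.2 hxs1)
    hs.le (by linarith : (0:ℝ) ≤ 1 - s) (by ring)
  have hcomb : s • (x + s) + (1 - s) • (x + 1 + s) = x + 1 := by
    simp only [smul_eq_mul]; ring
  rw [hcomb] at hc
  simp only [Function.comp_apply, smul_eq_mul] at hc
  -- Γ(x+1+s) = (x+s) Γ(x+s)
  have hadd : Real.Gamma (x + 1 + s) = (x + s) * Real.Gamma (x + s) := by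
    have := Real.Gamma_add_one (ne_of_gt hxs)
    rw [show x + 1 + s = (x + s) + 1 by ring, this]
  have hlog : Real.log (Real.Gamma (x + 1)) ≤
      Real.log (Real.Gamma (x + 1 + s) * (x + s) ^ (-s)) := by
    rw [Real.log_mul (ne_of_gt h2) (ne_of_gt (Real.rpow_pos_of_pos hxs _)),
      Real.log_rpow hxs]
    have : Real.log (Real.Gamma (x + s)) = Real.log (Real.Gamma (x + 1 + s)) - Real.log (x + s) := by
      rw [hadd, Real.log_mul (ne_of_gt hxs) (ne_of_gt h1)]; ring
    rw [this] at hc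
    nlinarith [hc]
  have h3 : (0:ℝ) < Real.Gamma (x + 1) := Real.Gamma_pos_of_pos (by linarith)
  have h4 : (0:ℝ) < Real.Gamma (x + 1 + s) * (x + s) ^ (-s) :=
    mul_pos h2 (Real.rpow_pos_of_pos hxs _)
  exact (Real.log_le_log_iff h3 h4).mp hlog

/-- For `α > 1` and a positive integer `i`,
`Γ(1 + 1/α) Γ(i + 1) / Γ(i + 1 + 1/α) ≤ 2 Γ(1 + 1/α) i^(-1/α)`,
i.e. `B(1 + 1/α, i)/B(1, i) ≤ 2 Γ(1 + 1/α) i^(-1/α)`. -/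
theorem stmt_8 (α : ℝ) (hα : 1 < α) (i : ℕ) (hi : 0 < i) :
    Real.Gamma (1 + 1/α) * Real.Gamma ((i : ℝ) + 1) / Real.Gamma ((i : ℝ) + 1 + 1/α) ≤
      2 * Real.Gamma (1 + 1/α) * (i : ℝ) ^ (-(1/α)) := by
  set s := 1/α with hs_def
  have hs : 0 < s := by positivity
  have hs1 : s < 1 := by rw [hs_def, div_lt_one (by linarith)]; exact hα
  have hi' : (1:ℝ) ≤ (i:ℝ) := by exact_mod_cast hi
  have hx : (0:ℝ) < (i:ℝ) := by linarith
  have key := gamma_interp (i:ℝ) s hx hs hs1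
  have hmono : ((i:ℝ) + s) ^ (-s) ≤ (i:ℝ) ^ (-s) :=
    Real.rpow_le_rpow_of_nonpos hx (by linarith) (by linarith)
  have h2 : (0:ℝ) < Real.Gamma ((i:ℝ) + 1 + s) := Real.Gamma_pos_of_pos (by linarith)
  have hG : (0:ℝ) < Real.Gamma (1 + s) := Real.Gamma_pos_of_pos (by linarith)
  have key2 : Real.Gamma ((i:ℝ) + 1) ≤ Real.Gamma ((i:ℝ) + 1 + s) * (i:ℝ) ^ (-s) := by
    calc Real.Gamma ((i:ℝ) + 1) ≤ Real.Gamma ((i:ℝ) + 1 + s) * ((i:ℝ) + s) ^ (-s) := key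
    _ ≤ Real.Gamma ((i:ℝ) + 1 + s) * (i:ℝ) ^ (-s) := by
        exact mul_le_mul_of_nonneg_left hmono h2.le
  rw [div_le_iff₀ h2]
  have hr : (0:ℝ) < (i:ℝ) ^ (-s) := Real.rpow_pos_of_pos hx _
  nlinarith [mul_le_mul_of_nonneg_left key2 hG.le, mul_pos hG (mul_pos hr h2)]
end

section
/- Fix a real α > 1, a positive integer K, and μ ∈ [0, ∞)^K, and define k(z) = Σ_{i=1}^K (z + μ_i)^{−α} for z > 0. Then α ∫₀^∞ k(z) e^{−k(z)} dz ≤ (α e^{−1} + γ(1 − 1/α, 1)) · K^{1/α}. -/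
open Real MeasureTheory

open Set in
/-- `x ↦ x e^{-x}` is bounded by `e⁻¹` on `[0,∞)`. -/
lemma aux_xexp_le (x : ℝ) (hx : 0 ≤ x) : x * Real.exp (-x) ≤ Real.exp (-1) := by
  have h1 : x ≤ Real.exp (x - 1) := by
    have := Real.add_one_le_exp (x - 1); linarith
  calc x * Real.exp (-x) ≤ Real.exp (x - 1) * Real.exp (-x) :=
        mul_le_mul_of_nonneg_right h1 (Real.exp_pos _).le
    _ = Real.exp (-1) := by rw [← Real.exp_add]; ring_nf

/-- `x ↦ x e^{-x}` is monotone on `[0,1]`. -/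
lemma aux_xexp_mono {a b : ℝ} (ha : 0 ≤ a) (hab : a ≤ b) (hb : b ≤ 1) :
    a * Real.exp (-a) ≤ b * Real.exp (-b) := by
  have h1 : a ≤ b * Real.exp (a - b) := by
    have h2 := Real.add_one_le_exp (a - b)
    nlinarith
  calc a * Real.exp (-a) ≤ (b * Real.exp (a - b)) * Real.exp (-a) :=
        mul_le_mul_of_nonneg_right h1 (Real.exp_pos _).le
    _ = b * Real.exp (-b) := by rw [mul_assoc, ← Real.exp_add]; ring_nf

open Set in
/-- Substitution `t = x^{-α}` in the tail integral. -/
lemma aux_subst (α : ℝ) (hα : 1 < α) :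
    ∫ x in Ioi (1:ℝ), α * (x ^ (-α) * Real.exp (-(x ^ (-α)))) =
      ∫ t in Ioo (0:ℝ) 1, t ^ ((1 - 1/α) - 1) * Real.exp (-t) := by
  have hα0 : (0:ℝ) < α := by linarith
  have hαne : -α ≠ 0 := by linarith
  have h := integral_comp_rpow_Ioi
    ((Ioo (0:ℝ) 1).indicator (fun t => t ^ ((1 - 1/α) - 1) * Real.exp (-t))) hαne
  rw [setIntegral_indicator measurableSet_Ioo,
    Set.inter_eq_right.mpr Set.Ioo_subset_Ioi_self] at h
  rw [← h]
  rw [show (∫ x in Ioi (1:ℝ), α * (x ^ (-α) * Real.exp (-(x ^ (-α)))))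
      = ∫ x in Ioi (0:ℝ),
          (Ioi (1:ℝ)).indicator (fun x => α * (x ^ (-α) * Real.exp (-(x ^ (-α))))) x from by
    rw [setIntegral_indicator measurableSet_Ioi,
      Set.inter_eq_right.mpr (Set.Ioi_subset_Ioi zero_le_one)]]
  refine setIntegral_congr_fun measurableSet_Ioi (fun x hx => ?_)
  have hx0 : (0:ℝ) < x := hx
  by_cases h1 : 1 < x
  · have hmem : x ^ (-α) ∈ Ioo (0:ℝ) 1 :=
      ⟨Real.rpow_pos_of_pos hx0 _, Real.rpow_lt_one_of_one_lt_of_neg h1 (by linarith)⟩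
    rw [Set.indicator_of_mem (show x ∈ Ioi 1 from h1), Set.indicator_of_mem hmem]
    have hxx : (x ^ (-α)) ^ ((1 - 1/α) - 1) = x := by
      rw [← Real.rpow_mul hx0.le, show -α * ((1 - 1/α) - 1) = 1 from by field_simp; ring,
        Real.rpow_one]
    rw [smul_eq_mul, hxx, abs_of_nonpos (by linarith : -α ≤ 0)]
    have hxp : x ^ (-α - 1) * x = x ^ (-α) := by
      nth_rw 2 [← Real.rpow_one x]
      rw [← Real.rpow_add hx0]; ring_nf
    linear_combination (-(α * Real.exp (-(x ^ (-α))))) * hxp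
  · push_neg at h1
    have hmem : x ^ (-α) ∉ Ioo (0:ℝ) 1 := by
      intro hm
      exact absurd hm.2 (not_lt.mpr
        (Real.one_le_rpow_of_pos_of_le_one_of_nonpos hx0 h1 (by linarith)))
    rw [Set.indicator_of_notMem (by simpa using h1), Set.indicator_of_notMem hmem,
      smul_zero]

open Set in
/-- Scaling `z = c x` with `c = K^{1/α}` in the tail integral. -/
lemma aux_scale (α : ℝ) (hα : 1 < α) (K : ℕ) (hK : 0 < K) :
    ∫ z in Ioi ((K:ℝ) ^ (1/α)), ((K:ℝ) * z ^ (-α)) * Real.exp (-((K:ℝ) * z ^ (-α))) =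
      (K:ℝ) ^ (1/α) * ∫ x in Ioi (1:ℝ), x ^ (-α) * Real.exp (-(x ^ (-α))) := by
  have hK0 : (0:ℝ) < K := by exact_mod_cast hK
  set c : ℝ := (K:ℝ) ^ (1/α) with hcdef
  have hc : 0 < c := Real.rpow_pos_of_pos hK0 _
  have hcK : c ^ α = (K:ℝ) := by
    rw [hcdef, ← Real.rpow_mul hK0.le, one_div_mul_cancel (by linarith : α ≠ 0),
      Real.rpow_one]
  have h := integral_comp_mul_left_Ioi
    (fun z => ((K:ℝ) * z ^ (-α)) * Real.exp (-((K:ℝ) * z ^ (-α)))) 1 hc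
  rw [mul_one] at h
  have h2 : (∫ x in Ioi (1:ℝ),
      ((K:ℝ) * (c * x) ^ (-α)) * Real.exp (-((K:ℝ) * (c * x) ^ (-α))))
      = ∫ x in Ioi (1:ℝ), x ^ (-α) * Real.exp (-(x ^ (-α))) := by
    refine setIntegral_congr_fun measurableSet_Ioi (fun x hx => ?_)
    have hx0 : (0:ℝ) < x := lt_trans one_pos hx
    have hKey : (K:ℝ) * (c * x) ^ (-α) = x ^ (-α) := by
      rw [Real.mul_rpow hc.le hx0.le, ← hcK, ← mul_assoc, ← Real.rpow_add hc,
        add_neg_cancel, Real.rpow_zero, one_mul]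
    rw [hKey]
  rw [h2, smul_eq_mul] at h
  rw [h, ← mul_assoc, mul_inv_cancel₀ hc.ne', one_mul]

/-- For `α > 1`, a positive integer `K`, and `μ ∈ [0,∞)^K`, with
`k(z) = Σ_i (z + μ_i)^(-α)`, one has
`α ∫₀^∞ k(z) e^(-k(z)) dz ≤ (α e⁻¹ + γ(1 - 1/α, 1)) K^(1/α)`. -/
theorem stmt_12 (α : ℝ) (hα : 1 < α) (K : ℕ) (hK : 0 < K)
    (μ : Fin K → ℝ) (hμ : ∀ i, 0 ≤ μ i) :
    α * ∫ z in Set.Ioi (0:ℝ),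
        (∑ i : Fin K, (z + μ i) ^ (-α)) *
          Real.exp (-(∑ i : Fin K, (z + μ i) ^ (-α))) ≤
      (α * Real.exp (-1) +
        ∫ t in (0:ℝ)..1, t ^ ((1 - 1/α) - 1) * Real.exp (-t)) * (K : ℝ) ^ (1/α) := by
  open Set in
  have hα0 : (0:ℝ) < α := by linarith
  have hK0 : (0:ℝ) < K := by exact_mod_cast hK
  set F : ℝ → ℝ := fun z => ∑ i : Fin K, (z + μ i) ^ (-α) with hF
  set G : ℝ → ℝ := fun z => F z * Real.exp (-(F z)) with hG
  set Φ : ℝ → ℝ := fun z => ((K:ℝ) * z ^ (-α)) * Real.exp (-((K:ℝ) * z ^ (-α))) with hΦ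
  set c : ℝ := (K:ℝ) ^ (1/α) with hcdef
  have hc : 0 < c := Real.rpow_pos_of_pos hK0 _
  have hcK : c ^ α = (K:ℝ) := by
    rw [hcdef, ← Real.rpow_mul hK0.le, one_div_mul_cancel (by linarith : α ≠ 0),
      Real.rpow_one]
  set C : ℝ := ∫ t in Set.Ioo (0:ℝ) 1, t ^ ((1 - 1/α) - 1) * Real.exp (-t) with hCdef
  -- basic pointwise facts
  have hF0 : ∀ z ∈ Set.Ioi (0:ℝ), 0 ≤ F z := by
    intro z hz
    exact Finset.sum_nonneg fun i _ =>
      Real.rpow_nonneg (by have := hμ i; have : (0:ℝ) < z := hz; linarith) _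
  have hFle : ∀ z ∈ Set.Ioi (0:ℝ), F z ≤ (K:ℝ) * z ^ (-α) := by
    intro z hz
    have hz0 : (0:ℝ) < z := hz
    calc F z ≤ ∑ _i : Fin K, z ^ (-α) :=
          Finset.sum_le_sum fun i _ =>
            Real.rpow_le_rpow_of_nonpos hz0 (le_add_of_nonneg_right (hμ i)) (by linarith)
      _ = (K:ℝ) * z ^ (-α) := by
          rw [Finset.sum_const, Finset.card_univ, Fintype.card_fin, nsmul_eq_mul]
  -- continuity
  have hFcont : ContinuousOn F (Set.Ioi 0) := by
    apply continuousOn_finset_sum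
    intro i _
    exact ContinuousOn.rpow_const (continuous_id.add continuous_const).continuousOn
      (fun z hz => Or.inl (ne_of_gt (add_pos_of_pos_of_nonneg hz (hμ i))))
  have hGcont : ContinuousOn G (Set.Ioi 0) :=
    hFcont.mul (Real.continuous_exp.comp_continuousOn hFcont.neg)
  have hΨcont : ContinuousOn (fun z : ℝ => (K:ℝ) * z ^ (-α)) (Set.Ioi 0) :=
    continuousOn_const.mul
      (ContinuousOn.rpow_const continuousOn_id (fun z hz => Or.inl (ne_of_gt hz)))
  have hΦcont : ContinuousOn Φ (Set.Ioi 0) :=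
    hΨcont.mul (Real.continuous_exp.comp_continuousOn hΨcont.neg)
  -- integrability
  have hmaj : IntegrableOn (fun z : ℝ => (K:ℝ) * z ^ (-α)) (Set.Ioi c) :=
    (integrableOn_Ioi_rpow_of_lt (by linarith) hc).const_mul _
  have hΨnonneg : ∀ z ∈ Set.Ioi c, 0 ≤ (K:ℝ) * z ^ (-α) := by
    intro z hz
    have hz0 : (0:ℝ) < z := lt_trans hc hz
    positivity
  have hGtail : IntegrableOn G (Set.Ioi c) := by
    refine hmaj.mono' ((hGcont.mono (Set.Ioi_subset_Ioi hc.le)).aestronglyMeasurable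
      measurableSet_Ioi) ?_
    refine (ae_restrict_iff' measurableSet_Ioi).mpr (Filter.Eventually.of_forall fun z hz => ?_)
    have hz0 : z ∈ Set.Ioi (0:ℝ) := lt_trans hc hz
    have h1 : 0 ≤ G z := mul_nonneg (hF0 z hz0) (Real.exp_pos _).le
    rw [Real.norm_eq_abs, abs_of_nonneg h1]
    calc G z = F z * Real.exp (-(F z)) := rfl
      _ ≤ F z * 1 := mul_le_mul_of_nonneg_left
          (Real.exp_le_one_iff.mpr (by linarith [hF0 z hz0])) (hF0 z hz0)
      _ = F z := mul_one _
      _ ≤ (K:ℝ) * z ^ (-α) := hFle z hz0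
  have hΦtail : IntegrableOn Φ (Set.Ioi c) := by
    refine hmaj.mono' ((hΦcont.mono (Set.Ioi_subset_Ioi hc.le)).aestronglyMeasurable
      measurableSet_Ioi) ?_
    refine (ae_restrict_iff' measurableSet_Ioi).mpr (Filter.Eventually.of_forall fun z hz => ?_)
    have h0 := hΨnonneg z hz
    have h1 : 0 ≤ Φ z := mul_nonneg h0 (Real.exp_pos _).le
    rw [Real.norm_eq_abs, abs_of_nonneg h1]
    calc Φ z ≤ ((K:ℝ) * z ^ (-α)) * 1 := mul_le_mul_of_nonneg_left
          (Real.exp_le_one_iff.mpr (by linarith)) h0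
      _ = (K:ℝ) * z ^ (-α) := mul_one _
  have hGIoc : IntegrableOn G (Set.Ioc 0 c) := by
    refine (integrableOn_const measure_Ioc_lt_top.ne :
        IntegrableOn (fun _ : ℝ => Real.exp (-1)) (Set.Ioc 0 c) volume).mono'
      ((hGcont.mono Set.Ioc_subset_Ioi_self).aestronglyMeasurable measurableSet_Ioc) ?_
    refine (ae_restrict_iff' measurableSet_Ioc).mpr (Filter.Eventually.of_forall fun z hz => ?_)
    have hz0 : z ∈ Set.Ioi (0:ℝ) := hz.1
    have h1 : 0 ≤ G z := mul_nonneg (hF0 z hz0) (Real.exp_pos _).le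
    rw [Real.norm_eq_abs, abs_of_nonneg h1]
    exact aux_xexp_le (F z) (hF0 z hz0)
  -- split the integral
  have hsplit : (∫ z in Set.Ioi (0:ℝ), G z)
      = (∫ z in Set.Ioc (0:ℝ) c, G z) + ∫ z in Set.Ioi c, G z := by
    rw [← setIntegral_union (Set.Ioc_disjoint_Ioi le_rfl) measurableSet_Ioi hGIoc hGtail,
      Set.Ioc_union_Ioi_eq_Ioi hc.le]
  -- bound on the head
  have hhead : (∫ z in Set.Ioc (0:ℝ) c, G z) ≤ c * Real.exp (-1) := by
    have h1 : (∫ z in Set.Ioc (0:ℝ) c, G z) ≤ ∫ _z in Set.Ioc (0:ℝ) c, Real.exp (-1) :=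
      setIntegral_mono_on hGIoc (integrableOn_const measure_Ioc_lt_top.ne :
        IntegrableOn (fun _ : ℝ => Real.exp (-1)) (Set.Ioc 0 c) volume)
        measurableSet_Ioc (fun z hz => aux_xexp_le (F z) (hF0 z hz.1))
    rwa [setIntegral_const, smul_eq_mul, Real.volume_real_Ioc_of_le hc.le, sub_zero] at h1
  -- bound on the tail
  have htail : (∫ z in Set.Ioi c, G z) ≤ ∫ z in Set.Ioi c, Φ z := by
    refine setIntegral_mono_on hGtail hΦtail measurableSet_Ioi (fun z hz => ?_)
    have hz0 : z ∈ Set.Ioi (0:ℝ) := lt_trans hc hz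
    refine aux_xexp_mono (hF0 z hz0) (hFle z hz0) ?_
    have h1 : z ^ (-α) ≤ c ^ (-α) :=
      Real.rpow_le_rpow_of_nonpos hc (le_of_lt hz) (by linarith)
    have h2 : (K:ℝ) * c ^ (-α) = 1 := by
      rw [← hcK, ← Real.rpow_add hc, add_neg_cancel, Real.rpow_zero]
    calc (K:ℝ) * z ^ (-α) ≤ (K:ℝ) * c ^ (-α) :=
          mul_le_mul_of_nonneg_left h1 hK0.le
      _ = 1 := h2
  -- evaluate the tail majorant
  have hΦval : α * ∫ z in Set.Ioi c, Φ z = c * C := by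
    have h1 := aux_scale α hα K hK
    have h2 := aux_subst α hα
    rw [integral_const_mul] at h2
    rw [hΦ, h1, ← mul_assoc, mul_comm α c, mul_assoc, h2]
  -- rewrite the RHS interval integral
  have hRHS : (∫ t in (0:ℝ)..1, t ^ ((1 - 1/α) - 1) * Real.exp (-t)) = C := by
    rw [intervalIntegral.integral_of_le zero_le_one, integral_Ioc_eq_integral_Ioo]
  rw [hRHS]
  have hbound : α * (∫ z in Set.Ioi (0:ℝ), G z) ≤ α * (c * Real.exp (-1)) + c * C := by
    rw [hsplit, mul_add]
    have h1 : α * ∫ z in Set.Ioc (0:ℝ) c, G z ≤ α * (c * Real.exp (-1)) :=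
      mul_le_mul_of_nonneg_left hhead hα0.le
    have h2 : α * ∫ z in Set.Ioi c, G z ≤ α * ∫ z in Set.Ioi c, Φ z :=
      mul_le_mul_of_nonneg_left htail hα0.le
    linarith [hΦval]
  calc α * ∫ z in Set.Ioi (0:ℝ), G z ≤ α * (c * Real.exp (-1)) + c * C := hbound
    _ = (α * Real.exp (-1) + C) * c := by ring
end

section
/- Fix a real α > 1, an integer K ≥ 2, a vector μ ∈ [0, ∞)^K with μ₁ = 0, μ_i > 0 for all i ≥ 2, and Σ_{i=2}^K μ_i^{−α} ≤ 1, and nonnegative reals Δ₂, …, Δ_K. Then for every real b > 0, α ∫₀^∞ (Σ_{i=2}^K Δ_i (z + μ_i)^{−(α+1)}) · exp(−Σ_{j=1}^K (z + μ_j)^{−α}) dz ≥ (e^{−(1 + b^{−α})} / (1 + b)^α) · Σ_{i=2}^K Δ_i μ_i^{−α}. -/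
open Real MeasureTheory

lemma shift_integrableOn {p m c : ℝ} (hp : p < -1) (hmc : 0 < c + m) :
    IntegrableOn (fun z : ℝ => (z + m) ^ p) (Set.Ioi c) := by
  have e : MeasurableEmbedding (fun x : ℝ => x + m) :=
    (Homeomorph.addRight m).measurableEmbedding
  have hmap : Measure.map (fun x : ℝ => x + m) volume = volume :=
    (measurePreserving_add_right volume m).map_eq
  have h := integrableOn_Ioi_rpow_of_lt hp hmc
  rw [← hmap] at h
  have := (e.integrableOn_map_iff (f := fun t : ℝ => t ^ p) (s := Set.Ioi (c + m))).1 h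
  have hpre : (fun x : ℝ => x + m) ⁻¹' Set.Ioi (c + m) = Set.Ioi c := by
    ext x; simp [Set.mem_preimage]
  rw [hpre] at this
  exact this

lemma shift_integral {p m c : ℝ} (hp : p < -1) (hmc : 0 < c + m) :
    ∫ z in Set.Ioi c, (z + m) ^ p = -(c + m) ^ (p + 1) / (p + 1) := by
  have e : MeasurableEmbedding (fun x : ℝ => x + m) :=
    (Homeomorph.addRight m).measurableEmbedding
  have h := (measurePreserving_add_right volume m).setIntegral_preimage_emb e
    (fun t : ℝ => t ^ p) (Set.Ioi (c + m))
  have hpre : (fun x : ℝ => x + m) ⁻¹' Set.Ioi (c + m) = Set.Ioi c := by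
    ext x; simp [Set.mem_preimage]
  rw [hpre] at h
  rw [h, integral_Ioi_rpow_of_lt hp hmc]

/-- Regret lower bound term (case on event `F_t`): for `α > 1`, `K ≥ 2`,
`μ` with `μ₁ = 0`, `μ_i > 0` for `2 ≤ i ≤ K`, `Σ_{i=2}^K μ_i^(-α) ≤ 1`,
nonnegative `Δ_i`, and any `b > 0`,
`α ∫₀^∞ (Σ_{i=2}^K Δ_i (z+μ_i)^(-(α+1))) exp(-Σ_{j=1}^K (z+μ_j)^(-α)) dz
  ≥ (e^(-(1+b^(-α)))/(1+b)^α) Σ_{i=2}^K Δ_i μ_i^(-α)`. -/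
theorem stmt_13 (α : ℝ) (hα : 1 < α) (K : ℕ) (hK : 2 ≤ K)
    (μ : ℕ → ℝ) (hμ1 : μ 1 = 0) (hμpos : ∀ i ∈ Finset.Icc 2 K, 0 < μ i)
    (hμsum : ∑ i ∈ Finset.Icc 2 K, (μ i) ^ (-α) ≤ 1)
    (Δ : ℕ → ℝ) (hΔ : ∀ i ∈ Finset.Icc 2 K, 0 ≤ Δ i)
    (b : ℝ) (hb : 0 < b) :
    Real.exp (-(1 + b ^ (-α))) / (1 + b) ^ α *
        ∑ i ∈ Finset.Icc 2 K, Δ i * (μ i) ^ (-α) ≤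
      α * ∫ z in Set.Ioi (0:ℝ),
        (∑ i ∈ Finset.Icc 2 K, Δ i * (z + μ i) ^ (-(α + 1))) *
          Real.exp (-(∑ j ∈ Finset.Icc 1 K, (z + μ j) ^ (-α))) := by
  have hα0 : (0:ℝ) < α := by linarith
  set p : ℝ := -(α + 1) with hp_def
  have hp : p < -1 := by rw [hp_def]; linarith
  -- each μ i ≥ 1
  have hμ1' : ∀ i ∈ Finset.Icc 2 K, 1 ≤ μ i := by
    intro i hi
    by_contra h
    push_neg at h
    have h1 : μ i ^ (-α) ≤ 1 :=
      le_trans (Finset.single_le_sum (f := fun i => μ i ^ (-α))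
        (fun j hj => Real.rpow_nonneg (hμpos j hj).le _) hi) hμsum
    have h2 : 1 < μ i ^ (-α) := by
      rw [Real.one_lt_rpow_iff_of_pos (hμpos i hi)]
      right; exact ⟨h, by linarith⟩
    linarith
  have hμnn : ∀ j ∈ Finset.Icc 1 K, 0 ≤ μ j := by
    intro j hj
    rcases eq_or_ne j 1 with rfl | hne
    · rw [hμ1]
    · refine (hμpos j ?_).le
      simp only [Finset.mem_Icc] at hj ⊢; omega
  set g : ℝ → ℝ := fun z => ∑ i ∈ Finset.Icc 2 K, Δ i * (z + μ i) ^ p with hg_def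
  set E : ℝ → ℝ := fun z =>
    Real.exp (-(∑ j ∈ Finset.Icc 1 K, (z + μ j) ^ (-α))) with hE_def
  have hg_int : ∀ c : ℝ, 0 ≤ c → IntegrableOn g (Set.Ioi c) := by
    intro c hc
    apply MeasureTheory.integrable_finset_sum
    intro i hi
    exact (shift_integrableOn hp (by have := hμpos i hi; linarith)).const_mul (Δ i)
  have hg_nonneg : ∀ z ∈ Set.Ioi (0:ℝ), 0 ≤ g z := by
    intro z hz
    apply Finset.sum_nonneg
    intro i hi
    exact mul_nonneg (hΔ i hi) (Real.rpow_nonneg (by have := hμpos i hi; simp at hz; linarith) _)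
  have hE_nonneg : ∀ z : ℝ, 0 ≤ E z := fun z => (Real.exp_pos _).le
  have hE_le_one : ∀ z ∈ Set.Ioi (0:ℝ), E z ≤ 1 := by
    intro z hz
    rw [hE_def]
    simp only
    rw [Real.exp_le_one_iff, neg_nonpos]
    apply Finset.sum_nonneg
    intro j hj
    exact Real.rpow_nonneg (by have := hμnn j hj; simp at hz; linarith) _
  have hmeas : AEStronglyMeasurable (fun z => g z * E z)
      ((volume : Measure ℝ).restrict (Set.Ioi 0)) := by
    apply Measurable.aestronglyMeasurable
    fun_prop
  have hf_int : IntegrableOn (fun z => g z * E z) (Set.Ioi 0) := by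
    apply (hg_int 0 le_rfl).mono' hmeas
    filter_upwards [ae_restrict_mem measurableSet_Ioi] with z hz
    rw [Real.norm_eq_abs, abs_of_nonneg (mul_nonneg (hg_nonneg z hz) (hE_nonneg z))]
    calc g z * E z ≤ g z * 1 :=
          mul_le_mul_of_nonneg_left (hE_le_one z hz) (hg_nonneg z hz)
      _ = g z := mul_one _
  set C : ℝ := Real.exp (-(1 + b ^ (-α))) with hC_def
  have hC_pos : 0 < C := Real.exp_pos _
  -- split sum over Icc 1 K
  have hsplit : Finset.Icc 1 K = insert 1 (Finset.Icc 2 K) := by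
    ext j; simp only [Finset.mem_Icc, Finset.mem_insert]; omega
  have hCE : ∀ z ∈ Set.Ioi b, C ≤ E z := by
    intro z hz
    simp only [Set.mem_Ioi] at hz
    have hz0 : 0 < z := hb.trans hz
    rw [hC_def, hE_def]
    apply Real.exp_le_exp.2
    apply neg_le_neg
    rw [hsplit, Finset.sum_insert (by simp)]
    have h1 : (z + μ 1) ^ (-α) ≤ b ^ (-α) := by
      rw [hμ1, add_zero]
      exact Real.rpow_le_rpow_of_nonpos hb hz.le (by linarith)
    have h2 : ∑ j ∈ Finset.Icc 2 K, (z + μ j) ^ (-α) ≤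
        ∑ j ∈ Finset.Icc 2 K, (μ j) ^ (-α) := by
      apply Finset.sum_le_sum
      intro j hj
      exact Real.rpow_le_rpow_of_nonpos (hμpos j hj) (by linarith) (by linarith)
    linarith
  -- value of the shifted integrals
  have hIb : ∀ i ∈ Finset.Icc 2 K, ∫ z in Set.Ioi b, (z + μ i) ^ p
      = (b + μ i) ^ (-α) / α := by
    intro i hi
    rw [shift_integral hp (by have := hμpos i hi; linarith)]
    have : p + 1 = -α := by rw [hp_def]; ring
    rw [this, neg_div_neg_eq]
  -- step 1 : ∫_{Ioi b} C * g ≤ ∫_{Ioi b} g * E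
  have key1 : ∫ z in Set.Ioi b, C * g z ≤ ∫ z in Set.Ioi b, g z * E z := by
    apply setIntegral_mono_on ((hg_int b hb.le).const_mul C)
      (hf_int.mono_set (Set.Ioi_subset_Ioi hb.le)) measurableSet_Ioi
    intro z hz
    have hz0 : z ∈ Set.Ioi (0:ℝ) := Set.Ioi_subset_Ioi hb.le hz
    calc C * g z = g z * C := mul_comm _ _
      _ ≤ g z * E z := mul_le_mul_of_nonneg_left (hCE z hz) (hg_nonneg z hz0)
  -- step 2 : ∫_{Ioi b} g*E ≤ ∫_{Ioi 0} g*E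
  have key2 : ∫ z in Set.Ioi b, g z * E z ≤ ∫ z in Set.Ioi 0, g z * E z := by
    apply setIntegral_mono_set hf_int
    · filter_upwards [ae_restrict_mem measurableSet_Ioi] with z hz
      exact mul_nonneg (hg_nonneg z hz) (hE_nonneg z)
    · exact HasSubset.Subset.eventuallyLE (Set.Ioi_subset_Ioi hb.le)
  -- step 3 : value of ∫_{Ioi b} C*g
  have key3 : ∫ z in Set.Ioi b, C * g z
      = C * ∑ i ∈ Finset.Icc 2 K, Δ i * ((b + μ i) ^ (-α) / α) := by
    rw [MeasureTheory.integral_const_mul]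
    congr 1
    rw [hg_def]
    rw [MeasureTheory.integral_finset_sum _ (fun i hi =>
      (shift_integrableOn hp (by have := hμpos i hi; linarith)).const_mul (Δ i))]
    apply Finset.sum_congr rfl
    intro i hi
    rw [MeasureTheory.integral_const_mul, hIb i hi]
  -- arithmetic: LHS ≤ α * (C * ∑ Δ i ((b+μ i)^(-α)/α))
  have harith : C / (1 + b) ^ α * ∑ i ∈ Finset.Icc 2 K, Δ i * (μ i) ^ (-α)
      ≤ α * (C * ∑ i ∈ Finset.Icc 2 K, Δ i * ((b + μ i) ^ (-α) / α)) := by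
    have h1b : (0:ℝ) < 1 + b := by linarith
    have h1bα : (0:ℝ) < (1 + b) ^ α := Real.rpow_pos_of_pos h1b α
    have hterm : ∀ i ∈ Finset.Icc 2 K,
        Δ i * (μ i) ^ (-α) / (1 + b) ^ α ≤ Δ i * (b + μ i) ^ (-α) := by
      intro i hi
      have hμi := hμpos i hi
      have hμi1 := hμ1' i hi
      have hle : b + μ i ≤ (1 + b) * μ i := by nlinarith
      have h2 : ((1 + b) * μ i) ^ (-α) ≤ (b + μ i) ^ (-α) :=
        Real.rpow_le_rpow_of_nonpos (by linarith) hle (by linarith)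
      have h3 : ((1 + b) * μ i) ^ (-α) = (μ i) ^ (-α) / (1 + b) ^ α := by
        rw [Real.mul_rpow h1b.le hμi.le, Real.rpow_neg h1b.le]
        ring
      calc Δ i * (μ i) ^ (-α) / (1 + b) ^ α
          = Δ i * ((1 + b) * μ i) ^ (-α) := by rw [h3]; ring
        _ ≤ Δ i * (b + μ i) ^ (-α) := mul_le_mul_of_nonneg_left h2 (hΔ i hi)
    calc C / (1 + b) ^ α * ∑ i ∈ Finset.Icc 2 K, Δ i * (μ i) ^ (-α)
        = C * ∑ i ∈ Finset.Icc 2 K, Δ i * (μ i) ^ (-α) / (1 + b) ^ α := by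
          rw [Finset.mul_sum, Finset.mul_sum]
          apply Finset.sum_congr rfl; intro i _
          field_simp
      _ ≤ C * ∑ i ∈ Finset.Icc 2 K, Δ i * (b + μ i) ^ (-α) := by
          apply mul_le_mul_of_nonneg_left (Finset.sum_le_sum hterm) hC_pos.le
      _ = α * (C * ∑ i ∈ Finset.Icc 2 K, Δ i * ((b + μ i) ^ (-α) / α)) := by
          rw [Finset.mul_sum, Finset.mul_sum, Finset.mul_sum]
          apply Finset.sum_congr rfl; intro i _
          field_simp
  calc C / (1 + b) ^ α * ∑ i ∈ Finset.Icc 2 K, Δ i * (μ i) ^ (-α)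
      ≤ α * (C * ∑ i ∈ Finset.Icc 2 K, Δ i * ((b + μ i) ^ (-α) / α)) := harith
    _ = α * ∫ z in Set.Ioi b, C * g z := by rw [key3]
    _ ≤ α * ∫ z in Set.Ioi 0, g z * E z := by
        apply mul_le_mul_of_nonneg_left (key1.trans key2) hα0.le
end

section
/- Fix a real α > 1, an integer K ≥ 2, and a vector μ ∈ [0, ∞)^K with μ₁ = 0, μ_i > 0 for all i ≥ 2, and Σ_{i=2}^K μ_i^{−α} ≤ 1. Then ∫₀^∞ α z^{−(α+1)} · exp(−Σ_{j=1}^K (z + μ_j)^{−α}) dz ≥ 1/e. -/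
open Real MeasureTheory Set Filter

private noncomputable def auxF (α : ℝ) : ℝ → ℝ :=
  fun z => if z ≤ 0 then 0 else Real.exp (-(z ^ (-α)))

private lemma auxF_deriv {α : ℝ} (hα : 0 < α) {x : ℝ} (hx : 0 < x) :
    HasDerivAt (auxF α) (α * x ^ (-(α + 1)) * Real.exp (-(x ^ (-α)))) x := by
  have h1 : HasDerivAt (fun z : ℝ => z ^ (-α)) ((-α) * x ^ (-α - 1)) x :=
    Real.hasDerivAt_rpow_const (Or.inl hx.ne')
  have h2 := (h1.neg).exp
  have h3 : HasDerivAt (fun z : ℝ => Real.exp (-(z ^ (-α))))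
      (α * x ^ (-(α + 1)) * Real.exp (-(x ^ (-α)))) x := by
    convert h2 using 1
    rfl
    rw [show -(α + 1) = -α - 1 by ring]
    simp only [Pi.neg_apply]
    ring
  apply h3.congr_of_eventuallyEq
  filter_upwards [eventually_gt_nhds hx] with y hy
  simp [auxF, not_le.mpr hy]

private lemma aux_tendsto_rpow (α : ℝ) (hα : 0 < α) :
    Tendsto (fun z : ℝ => z ^ (-α)) (nhdsWithin 0 (Ioi 0)) atTop := by
  have h1 : Tendsto (fun z : ℝ => z ^ α) (nhdsWithin 0 (Ioi 0)) (nhdsWithin 0 (Ioi 0)) := by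
    apply tendsto_nhdsWithin_of_tendsto_nhds_of_eventually_within
    · have := (Real.continuousAt_rpow_const 0 α (Or.inr hα.le)).tendsto
      rw [Real.zero_rpow hα.ne'] at this
      exact this.mono_left nhdsWithin_le_nhds
    · filter_upwards [self_mem_nhdsWithin] with z hz
      exact Real.rpow_pos_of_pos hz α
  have h2 := h1.inv_tendsto_nhdsGT_zero
  apply h2.congr'
  filter_upwards [self_mem_nhdsWithin] with z (hz : 0 < z)
  simp only [Pi.inv_apply]
  rw [← Real.rpow_neg hz.le]

private lemma auxF_tendsto_zero {α : ℝ} (hα : 0 < α) :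
    ContinuousWithinAt (auxF α) (Ici 0) 0 := by
  have hIoi : Tendsto (auxF α) (nhdsWithin 0 (Ioi 0)) (nhds 0) := by
    have hb : Tendsto (fun z : ℝ => -(z ^ (-α))) (nhdsWithin 0 (Ioi 0)) atBot :=
      tendsto_neg_atTop_atBot.comp (aux_tendsto_rpow α hα)
    have h1 : Tendsto (fun z : ℝ => Real.exp (-(z ^ (-α)))) (nhdsWithin 0 (Ioi 0)) (nhds 0) :=
      Real.tendsto_exp_atBot.comp hb
    apply h1.congr'
    filter_upwards [self_mem_nhdsWithin] with z (hz : 0 < z)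
    simp [auxF, not_le.mpr hz]
  have hsing : Tendsto (auxF α) (nhdsWithin 0 ({0} : Set ℝ)) (nhds 0) := by
    rw [nhdsWithin_singleton]
    have := tendsto_pure_nhds (auxF α) (0 : ℝ)
    simpa [auxF] using this
  unfold ContinuousWithinAt
  have h0 : auxF α 0 = 0 := by simp [auxF]
  rw [h0]
  have hset : Ici (0:ℝ) = {0} ∪ Ioi 0 := by
    ext x; simp [le_iff_lt_or_eq, eq_comm, or_comm]
  rw [hset, nhdsWithin_union]
  exact Tendsto.sup hsing hIoi

private lemma auxF_tendsto_one {α : ℝ} (hα : 0 < α) :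
    Tendsto (auxF α) atTop (nhds 1) := by
  have h0 := (tendsto_rpow_neg_atTop hα).neg
  rw [neg_zero] at h0
  have h1 : Tendsto (fun z : ℝ => Real.exp (-(z ^ (-α)))) atTop (nhds 1) := by
    simpa [Function.comp_def] using (Real.continuous_exp.tendsto 0).comp h0
  apply h1.congr'
  filter_upwards [eventually_gt_atTop (0:ℝ)] with z hz
  simp [auxF, not_le.mpr hz]

private lemma aux_integrable {α : ℝ} (hα : 0 < α) :
    IntegrableOn (fun z : ℝ => α * z ^ (-(α + 1)) * Real.exp (-(z ^ (-α)))) (Ioi 0) := by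
  apply integrableOn_Ioi_deriv_of_nonneg (auxF_tendsto_zero hα)
    (fun x hx => auxF_deriv hα hx) _ (auxF_tendsto_one hα)
  intro x hx
  have hx' : (0:ℝ) < x := hx
  exact mul_nonneg (mul_nonneg hα.le (Real.rpow_nonneg hx'.le _)) (Real.exp_nonneg _)

private lemma aux_integral {α : ℝ} (hα : 0 < α) :
    ∫ z in Ioi (0:ℝ), α * z ^ (-(α + 1)) * Real.exp (-(z ^ (-α))) = 1 := by
  have := integral_Ioi_of_hasDerivAt_of_tendsto (auxF_tendsto_zero hα)
    (fun x hx => auxF_deriv hα hx) (aux_integrable hα) (auxF_tendsto_one hα)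
  simpa [auxF] using this

/-- Probability of the optimal arm on the event `F_t`: for `α > 1`, `K ≥ 2`,
`μ₁ = 0`, `μ_i > 0` for `2 ≤ i ≤ K`, and `Σ_{i=2}^K μ_i^(-α) ≤ 1`,
`∫₀^∞ α z^(-(α+1)) exp(-Σ_{j=1}^K (z+μ_j)^(-α)) dz ≥ 1/e`. -/
theorem stmt_14 (α : ℝ) (hα : 1 < α) (K : ℕ) (hK : 2 ≤ K)
    (μ : ℕ → ℝ) (hμ1 : μ 1 = 0) (hμpos : ∀ i ∈ Finset.Icc 2 K, 0 < μ i)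
    (hμsum : ∑ i ∈ Finset.Icc 2 K, (μ i) ^ (-α) ≤ 1) :
    1 / Real.exp 1 ≤
      ∫ z in Set.Ioi (0:ℝ), α * z ^ (-(α + 1)) *
        Real.exp (-(∑ j ∈ Finset.Icc 1 K, (z + μ j) ^ (-α))) := by
  have hα0 : 0 < α := lt_trans one_pos hα
  set f : ℝ → ℝ := fun z => α * z ^ (-(α + 1)) *
    Real.exp (-(∑ j ∈ Finset.Icc 1 K, (z + μ j) ^ (-α))) with hf
  set h : ℝ → ℝ := fun z => α * z ^ (-(α + 1)) * Real.exp (-(z ^ (-α))) with hh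
  -- positivity of bases
  have hbase : ∀ z : ℝ, 0 < z → ∀ j ∈ Finset.Icc 1 K, 0 < z + μ j := by
    intro z hz j hj
    rw [Finset.mem_Icc] at hj
    rcases eq_or_ne j 1 with rfl | hj1
    · rw [hμ1, add_zero]; exact hz
    · have : j ∈ Finset.Icc 2 K := by rw [Finset.mem_Icc]; omega
      have := hμpos j this
      linarith
  -- split the sum
  have hsplit : ∀ z : ℝ, ∑ j ∈ Finset.Icc 1 K, (z + μ j) ^ (-α)
      = z ^ (-α) + ∑ j ∈ Finset.Icc 2 K, (z + μ j) ^ (-α) := by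
    intro z
    have hins : Finset.Icc 1 K = insert 1 (Finset.Icc 2 K) := by
      ext i; simp only [Finset.mem_Icc, Finset.mem_insert]; omega
    rw [hins, Finset.sum_insert (by simp), hμ1, add_zero]
  -- bounds
  have hub : ∀ z ∈ Ioi (0:ℝ), f z ≤ h z := by
    intro z hz
    have hz' : (0:ℝ) < z := hz
    apply mul_le_mul_of_nonneg_left _
      (mul_nonneg hα0.le (Real.rpow_nonneg hz'.le _))
    apply Real.exp_le_exp.mpr
    rw [hsplit z, neg_le_neg_iff, le_add_iff_nonneg_right]
    apply Finset.sum_nonneg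
    intro i hi
    have hμi := hμpos i hi
    exact Real.rpow_nonneg (by linarith) _
  have hlb : ∀ z ∈ Ioi (0:ℝ), Real.exp (-1) * h z ≤ f z := by
    intro z hz
    have hz' : (0:ℝ) < z := hz
    have hsum2 : ∑ j ∈ Finset.Icc 2 K, (z + μ j) ^ (-α) ≤ 1 := by
      refine le_trans (Finset.sum_le_sum fun i hi => ?_) hμsum
      have hμi := hμpos i hi
      exact Real.rpow_le_rpow_of_nonpos hμi (by linarith) (by linarith)
    have hexp : Real.exp (-1) * Real.exp (-(z ^ (-α)))
        ≤ Real.exp (-(∑ j ∈ Finset.Icc 1 K, (z + μ j) ^ (-α))) := by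
      rw [← Real.exp_add]
      apply Real.exp_le_exp.mpr
      rw [hsplit z]
      linarith
    calc Real.exp (-1) * h z
        = α * z ^ (-(α + 1)) * (Real.exp (-1) * Real.exp (-(z ^ (-α)))) := by
          simp only [hh]; ring
      _ ≤ α * z ^ (-(α + 1)) * Real.exp (-(∑ j ∈ Finset.Icc 1 K, (z + μ j) ^ (-α))) :=
          mul_le_mul_of_nonneg_left hexp
            (mul_nonneg hα0.le (Real.rpow_nonneg hz'.le _))
      _ = f z := rfl
  -- integrability of f
  have hmeas : AEStronglyMeasurable f (volume.restrict (Ioi 0)) := by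
    apply ContinuousOn.aestronglyMeasurable _ measurableSet_Ioi
    intro z hz
    have hz' : (0:ℝ) < z := hz
    apply ContinuousAt.continuousWithinAt
    apply ContinuousAt.mul
    · exact continuousAt_const.mul (Real.continuousAt_rpow_const z _ (Or.inl hz'.ne'))
    · apply Real.continuous_exp.continuousAt.comp
      apply ContinuousAt.neg
      refine tendsto_finset_sum _ fun j hj => ?_
      have hbj := hbase z hz' j hj
      exact ContinuousAt.rpow_const ((continuous_id.add continuous_const).continuousAt)
        (Or.inl (by simpa using hbj.ne'))
  have hfint : IntegrableOn f (Ioi 0) := by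
    apply Integrable.mono' (aux_integrable hα0) hmeas
    filter_upwards [ae_restrict_mem measurableSet_Ioi] with z hz
    have hz' : (0:ℝ) < z := hz
    rw [Real.norm_eq_abs, abs_of_nonneg
      (mul_nonneg (mul_nonneg hα0.le (Real.rpow_nonneg hz'.le _)) (Real.exp_nonneg _))]
    exact hub z hz
  -- conclude
  have hgle : ∫ z in Ioi (0:ℝ), Real.exp (-1) * h z ≤ ∫ z in Ioi (0:ℝ), f z :=
    setIntegral_mono_on ((aux_integrable hα0).const_mul _) hfint measurableSet_Ioi hlb
  have hg : ∫ z in Ioi (0:ℝ), Real.exp (-1) * h z = Real.exp (-1) := by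
    rw [integral_const_mul]
    rw [hh]
    rw [aux_integral hα0, mul_one]
  rw [hg] at hgle
  calc 1 / Real.exp 1 = Real.exp (-1) := by rw [Real.exp_neg]; ring
    _ ≤ _ := hgle
end

section
/- Fix a real α > 1, an integer K ≥ 2, a vector μ ∈ [0, ∞)^K with μ₁ = 0, μ_i > 0 for all i ≥ 2, and Σ_{i=2}^K μ_i^{−α} ≥ 1, and nonnegative reals Δ₂, …, Δ_K with Δ = min_{2 ≤ i ≤ K} Δ_i. Then α ∫₀^∞ (Σ_{i=2}^K Δ_i (z + μ_i)^{−(α+1)}) · exp(−Σ_{j=1}^K (z + μ_j)^{−α}) dz ≥ Δ / (2^{α+1} + 1). -/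
open Real MeasureTheory Set Filter Topology

private lemma aux_deriv (α b : ℝ) (hb : 0 < b) (x : ℝ) (hx : 0 < x) :
    HasDerivAt (fun z : ℝ => b⁻¹ * Real.exp (-(b * z ^ (-α))))
      (α * x ^ (-α - 1) * Real.exp (-(b * x ^ (-α)))) x := by
  have h0 : HasDerivAt (fun z : ℝ => z ^ (-α)) (1 * (-α) * x ^ (-α - 1)) x :=
    (hasDerivAt_id x).rpow_const (Or.inl (ne_of_gt hx))
  have h2 := (((h0.const_mul b).neg).exp).const_mul b⁻¹
  refine h2.congr_deriv ?_
  simp only [Pi.neg_apply]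
  field_simp

private lemma aux_tendsto_top (α b : ℝ) (hα : 0 < α) :
    Tendsto (fun z : ℝ => b⁻¹ * Real.exp (-(b * z ^ (-α)))) atTop (𝓝 b⁻¹) := by
  have h1 := (((tendsto_rpow_neg_atTop hα).const_mul b).neg)
  have h2 := ((Real.continuous_exp.tendsto _).comp h1).const_mul b⁻¹
  simpa using h2

private lemma aux_int_Ioi (α b a : ℝ) (hα : 0 < α) (hb : 0 < b) (ha : 0 < a) :
    IntegrableOn (fun z : ℝ => α * z ^ (-α - 1) * Real.exp (-(b * z ^ (-α)))) (Set.Ioi a) ∧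
      ∫ z in Set.Ioi a, α * z ^ (-α - 1) * Real.exp (-(b * z ^ (-α)))
        = b⁻¹ - b⁻¹ * Real.exp (-(b * a ^ (-α))) := by
  have hderiv : ∀ x ∈ Set.Ioi a, HasDerivAt (fun z : ℝ => b⁻¹ * Real.exp (-(b * z ^ (-α))))
      (α * x ^ (-α - 1) * Real.exp (-(b * x ^ (-α)))) x :=
    fun x hx => aux_deriv α b hb x (ha.trans hx)
  have hpos : ∀ x ∈ Set.Ioi a, 0 ≤ α * x ^ (-α - 1) * Real.exp (-(b * x ^ (-α))) := by
    intro x hx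
    have : (0:ℝ) ≤ x ^ (-α - 1) := Real.rpow_nonneg (le_of_lt (ha.trans hx)) _
    positivity
  have hcont : ContinuousWithinAt (fun z : ℝ => b⁻¹ * Real.exp (-(b * z ^ (-α)))) (Set.Ici a) a :=
    (aux_deriv α b hb a ha).continuousAt.continuousWithinAt
  refine ⟨integrableOn_Ioi_deriv_of_nonneg hcont hderiv hpos (aux_tendsto_top α b hα), ?_⟩
  rw [integral_Ioi_of_hasDerivAt_of_nonneg hcont hderiv hpos (aux_tendsto_top α b hα)]

private lemma aux_tendsto_rpow_zero (α : ℝ) (hα : 0 < α) :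
    Tendsto (fun z : ℝ => z ^ (-α)) (nhdsWithin 0 (Set.Ioi 0)) atTop := by
  have h1 : Tendsto (fun z : ℝ => (z⁻¹) ^ α) (nhdsWithin 0 (Set.Ioi 0)) atTop :=
    (tendsto_rpow_atTop hα).comp tendsto_inv_nhdsGT_zero
  refine h1.congr' ?_
  filter_upwards [self_mem_nhdsWithin] with z hz
  rw [Real.inv_rpow (le_of_lt hz), ← Real.rpow_neg (le_of_lt hz)]

private lemma aux_int_Ioi_zero (α b : ℝ) (hα : 0 < α) (hb : 0 < b) :
    IntegrableOn (fun z : ℝ => α * z ^ (-α - 1) * Real.exp (-(b * z ^ (-α)))) (Set.Ioi 0) ∧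
      ∫ z in Set.Ioi 0, α * z ^ (-α - 1) * Real.exp (-(b * z ^ (-α))) = b⁻¹ := by
  set g : ℝ → ℝ := fun z => if z ≤ 0 then 0 else b⁻¹ * Real.exp (-(b * z ^ (-α))) with hg
  have hgeq : ∀ x : ℝ, 0 < x → g =ᶠ[𝓝 x] (fun z => b⁻¹ * Real.exp (-(b * z ^ (-α)))) := by
    intro x hx
    filter_upwards [Ioi_mem_nhds hx] with z hz
    simp [hg, not_le.mpr (Set.mem_Ioi.mp hz)]
  have hderiv : ∀ x ∈ Set.Ioi (0:ℝ), HasDerivAt g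
      (α * x ^ (-α - 1) * Real.exp (-(b * x ^ (-α)))) x := by
    intro x hx
    exact (aux_deriv α b hb x hx).congr_of_eventuallyEq (hgeq x hx)
  have hpos : ∀ x ∈ Set.Ioi (0:ℝ), 0 ≤ α * x ^ (-α - 1) * Real.exp (-(b * x ^ (-α))) := by
    intro x hx
    have : (0:ℝ) ≤ x ^ (-α - 1) := Real.rpow_nonneg (le_of_lt hx) _
    positivity
  have hcont : ContinuousWithinAt g (Set.Ici 0) 0 := by
    rw [← Set.Ioi_insert, continuousWithinAt_insert_self]
    have hg0 : g 0 = 0 := by simp [hg]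
    rw [ContinuousWithinAt, hg0]
    have h1 : Tendsto (fun z : ℝ => -(b * z ^ (-α))) (nhdsWithin 0 (Set.Ioi 0)) atBot := by
      refine tendsto_neg_atBot_iff.mpr ?_
      exact ((aux_tendsto_rpow_zero α hα).const_mul_atTop hb)
    have h2 : Tendsto (fun z : ℝ => b⁻¹ * Real.exp (-(b * z ^ (-α))))
        (nhdsWithin 0 (Set.Ioi 0)) (𝓝 0) := by
      have := (Real.tendsto_exp_atBot.comp h1).const_mul b⁻¹
      simpa using this
    refine h2.congr' ?_
    filter_upwards [self_mem_nhdsWithin] with z hz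
    simp [hg, not_le.mpr (Set.mem_Ioi.mp hz)]
  have htop : Tendsto g atTop (𝓝 b⁻¹) := by
    refine (aux_tendsto_top α b hα).congr' ?_
    filter_upwards [Ioi_mem_atTop 0] with z hz
    simp [hg, not_le.mpr (Set.mem_Ioi.mp hz)]
  refine ⟨integrableOn_Ioi_deriv_of_nonneg hcont hderiv hpos htop, ?_⟩
  rw [integral_Ioi_of_hasDerivAt_of_nonneg hcont hderiv hpos htop]
  simp [hg]
private lemma aux_int_sum (α : ℝ) (hα : 0 < α) (K : ℕ) (hK : 1 ≤ K) (μ : ℕ → ℝ)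
    (hμ : ∀ j ∈ Finset.Icc 1 K, 0 ≤ μ j) (hμ1 : μ 1 = 0) :
    IntegrableOn (fun z : ℝ => (∑ j ∈ Finset.Icc 1 K, α * (z + μ j) ^ (-α - 1)) *
        Real.exp (-(∑ j ∈ Finset.Icc 1 K, (z + μ j) ^ (-α)))) (Set.Ioi 0) ∧
      ∫ z in Set.Ioi 0, (∑ j ∈ Finset.Icc 1 K, α * (z + μ j) ^ (-α - 1)) *
        Real.exp (-(∑ j ∈ Finset.Icc 1 K, (z + μ j) ^ (-α))) = 1 := by
  have h1K : (1 : ℕ) ∈ Finset.Icc 1 K := by simp [Finset.mem_Icc]; omega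
  set S : ℝ → ℝ := fun z => ∑ j ∈ Finset.Icc 1 K, (z + μ j) ^ (-α) with hS
  set g : ℝ → ℝ := fun z => if z ≤ 0 then 0 else Real.exp (-(S z)) with hg
  -- derivative of S
  have hSd : ∀ x : ℝ, 0 < x → HasDerivAt S
      (∑ j ∈ Finset.Icc 1 K, (-α) * (x + μ j) ^ (-α - 1)) x := by
    intro x hx
    refine HasDerivAt.fun_sum (fun j hj => ?_)
    have hxj : 0 < x + μ j := by have := hμ j hj; linarith
    have h0 : HasDerivAt (fun z : ℝ => z + μ j) 1 x := (hasDerivAt_id x).add_const _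
    have := h0.rpow_const (p := -α) (Or.inl (ne_of_gt hxj))
    simpa using this
  have hderiv : ∀ x ∈ Set.Ioi (0:ℝ), HasDerivAt g
      ((∑ j ∈ Finset.Icc 1 K, α * (x + μ j) ^ (-α - 1)) * Real.exp (-(S x))) x := by
    intro x hx
    have hsm := ((hSd x hx).neg).exp
    have heq : g =ᶠ[𝓝 x] (fun z => Real.exp (-(S z))) := by
      filter_upwards [Ioi_mem_nhds hx] with z hz
      simp [hg, not_le.mpr (Set.mem_Ioi.mp hz)]
    have := hsm.congr_of_eventuallyEq heq
    refine this.congr_deriv ?_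
    have hs : -∑ j ∈ Finset.Icc 1 K, -α * (x + μ j) ^ (-α - 1)
        = ∑ j ∈ Finset.Icc 1 K, α * (x + μ j) ^ (-α - 1) := by
      rw [← Finset.sum_neg_distrib]
      exact Finset.sum_congr rfl fun j _ => by ring
    rw [mul_comm, ← hs]
    rfl
  have hpos : ∀ x ∈ Set.Ioi (0:ℝ), 0 ≤
      (∑ j ∈ Finset.Icc 1 K, α * (x + μ j) ^ (-α - 1)) * Real.exp (-(S x)) := by
    intro x hx
    refine mul_nonneg (Finset.sum_nonneg fun j hj => ?_) (Real.exp_nonneg _)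
    have hxj : (0:ℝ) ≤ x + μ j := by have := hμ j hj; simp at hx; linarith
    exact mul_nonneg hα.le (Real.rpow_nonneg hxj _)
  have hSlb : ∀ z : ℝ, 0 < z → z ^ (-α) ≤ S z := by
    intro z hz
    have : (z + μ 1) ^ (-α) = z ^ (-α) := by rw [hμ1, add_zero]
    calc z ^ (-α) = (z + μ 1) ^ (-α) := this.symm
      _ ≤ S z := Finset.single_le_sum (f := fun j => (z + μ j) ^ (-α))
          (fun j hj => Real.rpow_nonneg (by have := hμ j hj; linarith) _) h1K
  have hcont : ContinuousWithinAt g (Set.Ici 0) 0 := by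
    rw [← Set.Ioi_insert, continuousWithinAt_insert_self]
    have hg0 : g 0 = 0 := by simp [hg]
    rw [ContinuousWithinAt, hg0]
    have h1 : Tendsto (fun z : ℝ => Real.exp (-(z ^ (-α)))) (nhdsWithin 0 (Set.Ioi 0)) (𝓝 0) :=
      Real.tendsto_exp_atBot.comp (tendsto_neg_atBot_iff.mpr (aux_tendsto_rpow_zero α hα))
    refine squeeze_zero' ?_ ?_ h1
    · filter_upwards [self_mem_nhdsWithin] with z _
      by_cases h : z ≤ 0 <;> simp [hg, h, Real.exp_nonneg]
    · filter_upwards [self_mem_nhdsWithin] with z hz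
      simp only [hg, not_le.mpr (Set.mem_Ioi.mp hz), if_false]
      exact Real.exp_le_exp.mpr (by have := hSlb z hz; linarith)
  have htop : Tendsto g atTop (𝓝 1) := by
    have hS0 : Tendsto S atTop (𝓝 0) := by
      have := tendsto_finset_sum (Finset.Icc 1 K)
        (fun j _ => (tendsto_rpow_neg_atTop hα).comp
          (tendsto_atTop_add_const_right atTop (μ j) tendsto_id))
      simpa using this
    have h2 := (Real.continuous_exp.tendsto _).comp hS0.neg
    simp only [neg_zero, Real.exp_zero, Function.comp] at h2
    refine h2.congr' ?_
    filter_upwards [Ioi_mem_atTop 0] with z hz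
    simp [hg, not_le.mpr (Set.mem_Ioi.mp hz)]
  refine ⟨integrableOn_Ioi_deriv_of_nonneg hcont hderiv hpos htop, ?_⟩
  rw [integral_Ioi_of_hasDerivAt_of_nonneg hcont hderiv hpos htop]
  simp [hg]

set_option maxHeartbeats 1000000 in
/-- Regret lower bound term (case on event `F_tᶜ`): for `α > 1`, `K ≥ 2`,
`μ₁ = 0`, `μ_i > 0` for `2 ≤ i ≤ K`, `Σ_{i=2}^K μ_i^(-α) ≥ 1`, nonnegative
`Δ_i` with minimum `Δm`,
`α ∫₀^∞ (Σ_{i=2}^K Δ_i (z+μ_i)^(-(α+1))) exp(-Σ_{j=1}^K (z+μ_j)^(-α)) dz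
  ≥ Δm / (2^(α+1) + 1)`. -/
theorem stmt_15 (α : ℝ) (hα : 1 < α) (K : ℕ) (hK : 2 ≤ K)
    (μ : ℕ → ℝ) (hμ1 : μ 1 = 0) (hμpos : ∀ i ∈ Finset.Icc 2 K, 0 < μ i)
    (hμsum : 1 ≤ ∑ i ∈ Finset.Icc 2 K, (μ i) ^ (-α))
    (Δ : ℕ → ℝ) (hΔ : ∀ i ∈ Finset.Icc 2 K, 0 ≤ Δ i)
    (Δm : ℝ) (hΔm_le : ∀ i ∈ Finset.Icc 2 K, Δm ≤ Δ i)
    (hΔm_mem : ∃ i ∈ Finset.Icc 2 K, Δ i = Δm) :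
    Δm / ((2 : ℝ) ^ (α + 1) + 1) ≤
      α * ∫ z in Set.Ioi (0:ℝ),
        (∑ i ∈ Finset.Icc 2 K, Δ i * (z + μ i) ^ (-(α + 1))) *
          Real.exp (-(∑ j ∈ Finset.Icc 1 K, (z + μ j) ^ (-α))) := by
  classical
  have hα0 : (0:ℝ) < α := by linarith
  set c : ℝ := (2:ℝ) ^ (-α) with hcdef
  have hc0 : 0 < c := Real.rpow_pos_of_pos two_pos _
  have hΔm0 : 0 ≤ Δm := by
    obtain ⟨i, hi, hEq⟩ := hΔm_mem; rw [← hEq]; exact hΔ i hi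
  have hμnn : ∀ j ∈ Finset.Icc 1 K, 0 ≤ μ j := by
    intro j hj
    simp only [Finset.mem_Icc] at hj
    rcases Nat.eq_or_lt_of_le hj.1 with h | h
    · rw [← h, hμ1]
    · exact (hμpos j (Finset.mem_Icc.mpr ⟨h, hj.2⟩)).le
  have hins : Finset.Icc 1 K = insert 1 (Finset.Icc 2 K) := by
    ext j; simp only [Finset.mem_Icc, Finset.mem_insert]; omega
  have h1ni : (1:ℕ) ∉ Finset.Icc 2 K := by simp
  have hsum_split : ∀ f : ℕ → ℝ,
      ∑ j ∈ Finset.Icc 1 K, f j = f 1 + ∑ j ∈ Finset.Icc 2 K, f j := by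
    intro f; rw [hins, Finset.sum_insert h1ni]
  -- lower bound on the tail sum T
  have hminsum : 1 ≤ ∑ i ∈ Finset.Icc 2 K, min 1 ((μ i) ^ (-α)) := by
    by_cases hall : ∀ i ∈ Finset.Icc 2 K, 1 < μ i
    · calc (1:ℝ) ≤ ∑ i ∈ Finset.Icc 2 K, (μ i) ^ (-α) := hμsum
        _ = ∑ i ∈ Finset.Icc 2 K, min 1 ((μ i) ^ (-α)) := by
          refine Finset.sum_congr rfl fun i hi => ?_
          rw [min_eq_right
            (Real.rpow_le_one_of_one_le_of_nonpos (hall i hi).le (by linarith))]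
    · push_neg at hall
      obtain ⟨i0, hi0, hle⟩ := hall
      have h1 : (1:ℝ) ≤ (μ i0) ^ (-α) := by
        have h2 := Real.rpow_le_rpow_of_nonpos (hμpos i0 hi0) hle (by linarith : -α ≤ 0)
        simpa using h2
      calc (1:ℝ) = min 1 ((μ i0) ^ (-α)) := (min_eq_left h1).symm
        _ ≤ ∑ i ∈ Finset.Icc 2 K, min 1 ((μ i) ^ (-α)) :=
          Finset.single_le_sum (f := fun i => min 1 ((μ i) ^ (-α)))
            (fun i hi => le_min zero_le_one (Real.rpow_nonneg (hμpos i hi).le _)) hi0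
  have hterm : ∀ z : ℝ, 0 < z → ∀ i ∈ Finset.Icc 2 K,
      c * min 1 (z ^ (-α)) * min 1 ((μ i) ^ (-α)) ≤ (z + μ i) ^ (-α) := by
    intro z hz i hi
    have hμi := hμpos i hi
    have hzμ : 0 < z + μ i := by linarith
    have hmx : 0 < max z (μ i) := lt_max_of_lt_left hz
    have h2max : z + μ i ≤ 2 * max z (μ i) := by
      rcases le_total z (μ i) with h | h
      · rw [max_eq_right h]; linarith
      · rw [max_eq_left h]; linarith
    have key : (2 * max z (μ i)) ^ (-α) ≤ (z + μ i) ^ (-α) :=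
      Real.rpow_le_rpow_of_nonpos hzμ h2max (by linarith)
    refine le_trans ?_ key
    rw [Real.mul_rpow (by norm_num) hmx.le]
    have hminmax : min (z ^ (-α)) ((μ i) ^ (-α)) ≤ (max z (μ i)) ^ (-α) := by
      rcases le_total z (μ i) with h | h
      · rw [max_eq_right h]; exact min_le_right _ _
      · rw [max_eq_left h]; exact min_le_left _ _
    refine le_trans ?_ (mul_le_mul_of_nonneg_left hminmax hc0.le)
    rw [mul_assoc]
    refine mul_le_mul_of_nonneg_left ?_ hc0.le
    have ha : 0 < z ^ (-α) := Real.rpow_pos_of_pos hz _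
    have hb : 0 < (μ i) ^ (-α) := Real.rpow_pos_of_pos hμi _
    rcases le_total (z ^ (-α)) 1 with h1 | h1 <;>
      rcases le_total ((μ i) ^ (-α)) 1 with h2 | h2
    · rw [min_eq_right h1, min_eq_right h2]
      exact le_min (by nlinarith) (by nlinarith)
    · rw [min_eq_right h1, min_eq_left h2, mul_one]
      exact le_min le_rfl (h1.trans h2)
    · rw [min_eq_left h1, min_eq_right h2, one_mul]
      exact le_min (h2.trans h1) le_rfl
    · rw [min_eq_left h1, min_eq_left h2, one_mul]
      exact le_min h1 h2
  have hTlow : ∀ z : ℝ, 0 < z →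
      c * min 1 (z ^ (-α)) ≤ ∑ i ∈ Finset.Icc 2 K, (z + μ i) ^ (-α) := by
    intro z hz
    have hm0 : 0 ≤ c * min 1 (z ^ (-α)) :=
      mul_nonneg hc0.le (le_min zero_le_one (Real.rpow_nonneg hz.le _))
    calc c * min 1 (z ^ (-α)) = c * min 1 (z ^ (-α)) * 1 := (mul_one _).symm
      _ ≤ c * min 1 (z ^ (-α)) * ∑ i ∈ Finset.Icc 2 K, min 1 ((μ i) ^ (-α)) :=
          mul_le_mul_of_nonneg_left hminsum hm0
      _ = ∑ i ∈ Finset.Icc 2 K, c * min 1 (z ^ (-α)) * min 1 ((μ i) ^ (-α)) := by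
          rw [Finset.mul_sum]
      _ ≤ ∑ i ∈ Finset.Icc 2 K, (z + μ i) ^ (-α) := Finset.sum_le_sum (hterm z hz)
  -- S z ≥ z^(-α) + tail
  have hST : ∀ z : ℝ, ∑ j ∈ Finset.Icc 1 K, (z + μ j) ^ (-α)
      = z ^ (-α) + ∑ i ∈ Finset.Icc 2 K, (z + μ i) ^ (-α) := by
    intro z
    rw [hsum_split (fun j => (z + μ j) ^ (-α)), hμ1, add_zero]
  -- integral facts
  obtain ⟨hDint, hDval⟩ := aux_int_sum α hα0 K (by omega) μ hμnn hμ1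
  -- continuity / measurability of  E z = α * z^(-α-1) * exp(-(S z))
  have hScont : ContinuousOn (fun z : ℝ => ∑ j ∈ Finset.Icc 1 K, (z + μ j) ^ (-α))
      (Set.Ioi 0) := by
    refine continuousOn_finset_sum _ (fun j hj => ?_)
    refine ContinuousOn.rpow_const (by fun_prop) (fun x hx => Or.inl ?_)
    have h1 := hμnn j hj
    have h2 : (0:ℝ) < x := hx
    positivity
  have hEcont : ContinuousOn
      (fun z : ℝ => α * z ^ (-α - 1) *
        Real.exp (-(∑ j ∈ Finset.Icc 1 K, (z + μ j) ^ (-α)))) (Set.Ioi 0) := by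
    refine ContinuousOn.mul ?_ (Real.continuous_exp.comp_continuousOn hScont.neg)
    refine ContinuousOn.mul continuousOn_const ?_
    exact ContinuousOn.rpow_const continuousOn_id
      (fun x hx => Or.inl (ne_of_gt hx))
  have hEnn : ∀ z ∈ Set.Ioi (0:ℝ), 0 ≤ α * z ^ (-α - 1) *
      Real.exp (-(∑ j ∈ Finset.Icc 1 K, (z + μ j) ^ (-α))) := by
    intro z hz
    have h2 : (0:ℝ) < z := hz
    have : (0:ℝ) ≤ z ^ (-α - 1) := Real.rpow_nonneg h2.le _
    positivity
  have hE_le_D : ∀ z ∈ Set.Ioi (0:ℝ), α * z ^ (-α - 1) *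
      Real.exp (-(∑ j ∈ Finset.Icc 1 K, (z + μ j) ^ (-α)))
      ≤ (∑ j ∈ Finset.Icc 1 K, α * (z + μ j) ^ (-α - 1)) *
        Real.exp (-(∑ j ∈ Finset.Icc 1 K, (z + μ j) ^ (-α))) := by
    intro z hz
    have h2 : (0:ℝ) < z := hz
    refine mul_le_mul_of_nonneg_right ?_ (Real.exp_nonneg _)
    have heq : α * z ^ (-α - 1) = α * (z + μ 1) ^ (-α - 1) := by rw [hμ1, add_zero]
    rw [heq]
    refine Finset.single_le_sum (f := fun j => α * (z + μ j) ^ (-α - 1))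
      (fun j hj => mul_nonneg hα0.le
        (Real.rpow_nonneg (by have := hμnn j hj; linarith) _)) ?_
    simp only [Finset.mem_Icc]; omega
  have hEint : IntegrableOn
      (fun z : ℝ => α * z ^ (-α - 1) *
        Real.exp (-(∑ j ∈ Finset.Icc 1 K, (z + μ j) ^ (-α)))) (Set.Ioi 0) := by
    refine hDint.mono' (hEcont.aestronglyMeasurable measurableSet_Ioi) ?_
    rw [ae_restrict_iff' measurableSet_Ioi]
    filter_upwards with z hz
    rw [Real.norm_eq_abs, abs_of_nonneg (hEnn z hz)]
    exact hE_le_D z hz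
  -- split the integral of E at 1
  have hunion : Set.Ioc (0:ℝ) 1 ∪ Set.Ioi 1 = Set.Ioi 0 :=
    Set.Ioc_union_Ioi_eq_Ioi zero_le_one
  have hdisj : Disjoint (Set.Ioc (0:ℝ) 1) (Set.Ioi 1) := by
    rw [Set.disjoint_left]
    intro a ha ha'
    exact absurd ha.2 (not_le.mpr ha')
  have hsub1 : Set.Ioc (0:ℝ) 1 ⊆ Set.Ioi 0 := Set.Ioc_subset_Ioi_self
  have hsub2 : Set.Ioi (1:ℝ) ⊆ Set.Ioi 0 := Set.Ioi_subset_Ioi zero_le_one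
  have hEsplit : ∫ z in Set.Ioi (0:ℝ), α * z ^ (-α - 1) *
        Real.exp (-(∑ j ∈ Finset.Icc 1 K, (z + μ j) ^ (-α)))
      = (∫ z in Set.Ioc (0:ℝ) 1, α * z ^ (-α - 1) *
          Real.exp (-(∑ j ∈ Finset.Icc 1 K, (z + μ j) ^ (-α))))
        + ∫ z in Set.Ioi (1:ℝ), α * z ^ (-α - 1) *
            Real.exp (-(∑ j ∈ Finset.Icc 1 K, (z + μ j) ^ (-α))) := by
    rw [← hunion, setIntegral_union hdisj measurableSet_Ioi
      (hEint.mono_set hsub1) (hEint.mono_set hsub2)]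
  -- reference integrals
  obtain ⟨hI0int, hI0val⟩ := aux_int_Ioi_zero α 1 hα0 one_pos
  obtain ⟨hI1int, hI1val⟩ := aux_int_Ioi α 1 1 hα0 one_pos one_pos
  obtain ⟨hI2int, hI2val⟩ := aux_int_Ioi α (1 + c) 1 hα0 (by linarith) one_pos
  simp only [one_mul, inv_one, Real.one_rpow] at hI0int hI0val hI1int hI1val hI2val
  have hWsplit : ∫ z in Set.Ioi (0:ℝ), α * z ^ (-α - 1) * Real.exp (-z ^ (-α))
      = (∫ z in Set.Ioc (0:ℝ) 1, α * z ^ (-α - 1) * Real.exp (-z ^ (-α)))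
        + ∫ z in Set.Ioi (1:ℝ), α * z ^ (-α - 1) * Real.exp (-z ^ (-α)) := by
    rw [← hunion, setIntegral_union hdisj measurableSet_Ioi
      (hI0int.mono_set hsub1) (hI0int.mono_set hsub2)]
  have hIoc : ∫ z in Set.Ioc (0:ℝ) 1, α * z ^ (-α - 1) * Real.exp (-z ^ (-α))
      = Real.exp (-1) := by
    rw [hI0val, hI1val] at hWsplit
    linarith
  -- bound on (0,1]
  have hB1 : ∫ z in Set.Ioc (0:ℝ) 1, α * z ^ (-α - 1) *
        Real.exp (-(∑ j ∈ Finset.Icc 1 K, (z + μ j) ^ (-α)))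
      ≤ Real.exp (-c) * Real.exp (-1) := by
    have hmono : ∀ z ∈ Set.Ioc (0:ℝ) 1, α * z ^ (-α - 1) *
        Real.exp (-(∑ j ∈ Finset.Icc 1 K, (z + μ j) ^ (-α)))
        ≤ Real.exp (-c) * (α * z ^ (-α - 1) * Real.exp (-z ^ (-α))) := by
      intro z hz
      have hz0 : (0:ℝ) < z := hz.1
      have hz1 : z ≤ 1 := hz.2
      have hmin1 : min 1 (z ^ (-α)) = 1 := by
        refine min_eq_left ?_
        have := Real.rpow_le_rpow_of_nonpos hz0 hz1 (by linarith : -α ≤ 0)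
        simpa using this
      have hexp : Real.exp (-(∑ j ∈ Finset.Icc 1 K, (z + μ j) ^ (-α)))
          ≤ Real.exp (-c) * Real.exp (-z ^ (-α)) := by
        rw [← Real.exp_add]
        refine Real.exp_le_exp.mpr ?_
        have h1 := hTlow z hz0
        rw [hmin1, mul_one] at h1
        rw [hST z]
        linarith
      have hznn : (0:ℝ) ≤ α * z ^ (-α - 1) :=
        mul_nonneg hα0.le (Real.rpow_nonneg hz0.le _)
      calc α * z ^ (-α - 1) * Real.exp (-(∑ j ∈ Finset.Icc 1 K, (z + μ j) ^ (-α)))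
          ≤ α * z ^ (-α - 1) * (Real.exp (-c) * Real.exp (-z ^ (-α))) :=
            mul_le_mul_of_nonneg_left hexp hznn
        _ = Real.exp (-c) * (α * z ^ (-α - 1) * Real.exp (-z ^ (-α))) := by ring
    calc ∫ z in Set.Ioc (0:ℝ) 1, α * z ^ (-α - 1) *
          Real.exp (-(∑ j ∈ Finset.Icc 1 K, (z + μ j) ^ (-α)))
        ≤ ∫ z in Set.Ioc (0:ℝ) 1,
            Real.exp (-c) * (α * z ^ (-α - 1) * Real.exp (-z ^ (-α))) :=
          setIntegral_mono_on (hEint.mono_set hsub1)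
            ((hI0int.mono_set hsub1).const_mul _) measurableSet_Ioc hmono
      _ = Real.exp (-c) * ∫ z in Set.Ioc (0:ℝ) 1,
            α * z ^ (-α - 1) * Real.exp (-z ^ (-α)) := integral_const_mul _ _
      _ = Real.exp (-c) * Real.exp (-1) := by rw [hIoc]
  -- bound on (1,∞)
  have hB2 : ∫ z in Set.Ioi (1:ℝ), α * z ^ (-α - 1) *
        Real.exp (-(∑ j ∈ Finset.Icc 1 K, (z + μ j) ^ (-α)))
      ≤ (1 + c)⁻¹ - (1 + c)⁻¹ * Real.exp (-(1 + c)) := by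
    have hmono : ∀ z ∈ Set.Ioi (1:ℝ), α * z ^ (-α - 1) *
        Real.exp (-(∑ j ∈ Finset.Icc 1 K, (z + μ j) ^ (-α)))
        ≤ α * z ^ (-α - 1) * Real.exp (-((1 + c) * z ^ (-α))) := by
      intro z hz
      have hz1 : (1:ℝ) < z := hz
      have hz0 : (0:ℝ) < z := by linarith
      have hmin1 : min 1 (z ^ (-α)) = z ^ (-α) :=
        min_eq_right (Real.rpow_le_one_of_one_le_of_nonpos hz1.le (by linarith))
      have hexp : Real.exp (-(∑ j ∈ Finset.Icc 1 K, (z + μ j) ^ (-α)))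
          ≤ Real.exp (-((1 + c) * z ^ (-α))) := by
        refine Real.exp_le_exp.mpr ?_
        have h1 := hTlow z hz0
        rw [hmin1] at h1
        rw [hST z]
        nlinarith [Real.rpow_nonneg hz0.le (-α)]
      exact mul_le_mul_of_nonneg_left hexp
        (mul_nonneg hα0.le (Real.rpow_nonneg hz0.le _))
    calc ∫ z in Set.Ioi (1:ℝ), α * z ^ (-α - 1) *
          Real.exp (-(∑ j ∈ Finset.Icc 1 K, (z + μ j) ^ (-α)))
        ≤ ∫ z in Set.Ioi (1:ℝ), α * z ^ (-α - 1) * Real.exp (-((1 + c) * z ^ (-α))) :=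
          setIntegral_mono_on (hEint.mono_set hsub2) hI2int measurableSet_Ioi hmono
      _ = (1 + c)⁻¹ - (1 + c)⁻¹ * Real.exp (-(1 + c)) := by rw [hI2val]; rw [mul_one]
  -- rewrite the goal exponent
  rw [show -(α + 1) = -α - 1 from by ring]
  set M : ℝ → ℝ := fun z => (∑ i ∈ Finset.Icc 2 K, Δ i * (z + μ i) ^ (-α - 1)) *
      Real.exp (-(∑ j ∈ Finset.Icc 1 K, (z + μ j) ^ (-α))) with hMdef
  have hsub21 : Finset.Icc 2 K ⊆ Finset.Icc 1 K := Finset.Icc_subset_Icc (by omega) le_rfl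
  have htnn : ∀ z : ℝ, 0 < z → ∀ j ∈ Finset.Icc 1 K, (0:ℝ) ≤ (z + μ j) ^ (-α - 1) := by
    intro z hz j hj
    exact Real.rpow_nonneg (by have := hμnn j hj; linarith) _
  -- integrability of M
  have hMcont : ContinuousOn M (Set.Ioi 0) := by
    refine ContinuousOn.mul ?_ (Real.continuous_exp.comp_continuousOn hScont.neg)
    refine continuousOn_finset_sum _ (fun i hi => ?_)
    refine ContinuousOn.mul continuousOn_const ?_
    refine ContinuousOn.rpow_const (by fun_prop) (fun x hx => Or.inl ?_)
    have h1 := (hμpos i hi)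
    have h2 : (0:ℝ) < x := hx
    positivity
  have hMnn : ∀ z ∈ Set.Ioi (0:ℝ), 0 ≤ M z := by
    intro z hz
    have hz0 : (0:ℝ) < z := hz
    refine mul_nonneg (Finset.sum_nonneg fun i hi => ?_) (Real.exp_nonneg _)
    exact mul_nonneg (hΔ i hi) (htnn z hz0 i (hsub21 hi))
  have hM_le : ∀ z ∈ Set.Ioi (0:ℝ), M z ≤ ((∑ i ∈ Finset.Icc 2 K, Δ i) * α⁻¹) *
      ((∑ j ∈ Finset.Icc 1 K, α * (z + μ j) ^ (-α - 1)) *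
        Real.exp (-(∑ j ∈ Finset.Icc 1 K, (z + μ j) ^ (-α)))) := by
    intro z hz
    have hz0 : (0:ℝ) < z := hz
    have halt : (∑ j ∈ Finset.Icc 1 K, α * (z + μ j) ^ (-α - 1))
        = α * ∑ j ∈ Finset.Icc 1 K, (z + μ j) ^ (-α - 1) := by rw [Finset.mul_sum]
    have hsum_le : ∑ i ∈ Finset.Icc 2 K, Δ i * (z + μ i) ^ (-α - 1)
        ≤ (∑ i ∈ Finset.Icc 2 K, Δ i) * ∑ j ∈ Finset.Icc 1 K, (z + μ j) ^ (-α - 1) := by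
      rw [Finset.sum_mul]
      refine Finset.sum_le_sum (fun i hi => ?_)
      refine mul_le_mul_of_nonneg_left ?_ (hΔ i hi)
      exact Finset.single_le_sum (htnn z hz0) (hsub21 hi)
    calc M z ≤ ((∑ i ∈ Finset.Icc 2 K, Δ i) * ∑ j ∈ Finset.Icc 1 K, (z + μ j) ^ (-α - 1)) *
          Real.exp (-(∑ j ∈ Finset.Icc 1 K, (z + μ j) ^ (-α))) :=
        mul_le_mul_of_nonneg_right hsum_le (Real.exp_nonneg _)
      _ = ((∑ i ∈ Finset.Icc 2 K, Δ i) * α⁻¹) *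
          ((∑ j ∈ Finset.Icc 1 K, α * (z + μ j) ^ (-α - 1)) *
            Real.exp (-(∑ j ∈ Finset.Icc 1 K, (z + μ j) ^ (-α)))) := by
        rw [halt]
        field_simp
  have hMint : IntegrableOn M (Set.Ioi 0) := by
    refine (hDint.const_mul ((∑ i ∈ Finset.Icc 2 K, Δ i) * α⁻¹)).mono'
      (hMcont.aestronglyMeasurable measurableSet_Ioi) ?_
    rw [ae_restrict_iff' measurableSet_Ioi]
    filter_upwards with z hz
    rw [Real.norm_eq_abs, abs_of_nonneg (hMnn z hz)]
    exact hM_le z hz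
  -- pointwise lower bound
  have hMlow : ∀ z ∈ Set.Ioi (0:ℝ), (Δm * α⁻¹) *
      (((∑ j ∈ Finset.Icc 1 K, α * (z + μ j) ^ (-α - 1)) *
          Real.exp (-(∑ j ∈ Finset.Icc 1 K, (z + μ j) ^ (-α))))
        - α * z ^ (-α - 1) * Real.exp (-(∑ j ∈ Finset.Icc 1 K, (z + μ j) ^ (-α))))
      ≤ M z := by
    intro z hz
    have hz0 : (0:ℝ) < z := hz
    have hsplit2 : (∑ j ∈ Finset.Icc 1 K, α * (z + μ j) ^ (-α - 1))
        = α * z ^ (-α - 1) + ∑ i ∈ Finset.Icc 2 K, α * (z + μ i) ^ (-α - 1) := by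
      rw [hsum_split (fun j => α * (z + μ j) ^ (-α - 1)), hμ1, add_zero]
    rw [hsplit2]
    have heq : (Δm * α⁻¹) * ((α * z ^ (-α - 1) + ∑ i ∈ Finset.Icc 2 K, α * (z + μ i) ^ (-α - 1)) *
          Real.exp (-(∑ j ∈ Finset.Icc 1 K, (z + μ j) ^ (-α)))
        - α * z ^ (-α - 1) * Real.exp (-(∑ j ∈ Finset.Icc 1 K, (z + μ j) ^ (-α))))
        = (∑ i ∈ Finset.Icc 2 K, Δm * (z + μ i) ^ (-α - 1)) *
          Real.exp (-(∑ j ∈ Finset.Icc 1 K, (z + μ j) ^ (-α))) := by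
      have hαne : α ≠ 0 := ne_of_gt hα0
      have hfa : (∑ i ∈ Finset.Icc 2 K, α * (z + μ i) ^ (-α - 1))
          = α * ∑ i ∈ Finset.Icc 2 K, (z + μ i) ^ (-α - 1) := by rw [Finset.mul_sum]
      have hfb : (∑ i ∈ Finset.Icc 2 K, Δm * (z + μ i) ^ (-α - 1))
          = Δm * ∑ i ∈ Finset.Icc 2 K, (z + μ i) ^ (-α - 1) := by rw [Finset.mul_sum]
      rw [hfa, hfb]
      field_simp
      ring
    rw [heq]
    refine mul_le_mul_of_nonneg_right ?_ (Real.exp_nonneg _)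
    refine Finset.sum_le_sum (fun i hi => ?_)
    exact mul_le_mul_of_nonneg_right (hΔm_le i hi) (htnn z hz0 i (hsub21 hi))
  -- integral comparison
  have hcomp : (Δm * α⁻¹) *
      (1 - ∫ z in Set.Ioi (0:ℝ), α * z ^ (-α - 1) *
        Real.exp (-(∑ j ∈ Finset.Icc 1 K, (z + μ j) ^ (-α))))
      ≤ ∫ z in Set.Ioi (0:ℝ), M z := by
    have h1 := setIntegral_mono_on (((hDint.sub hEint).const_mul (Δm * α⁻¹))) hMint
      measurableSet_Ioi hMlow
    rw [integral_const_mul] at h1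
    simp only [Pi.sub_apply] at h1
    rw [integral_sub hDint hEint, hDval] at h1
    exact h1
  -- collect the bound on the middle integral
  have hBbd : ∫ z in Set.Ioi (0:ℝ), α * z ^ (-α - 1) *
        Real.exp (-(∑ j ∈ Finset.Icc 1 K, (z + μ j) ^ (-α)))
      ≤ Real.exp (-(1 + c)) + ((1 + c)⁻¹ - (1 + c)⁻¹ * Real.exp (-(1 + c))) := by
    rw [hEsplit]
    calc (∫ z in Set.Ioc (0:ℝ) 1, α * z ^ (-α - 1) *
            Real.exp (-(∑ j ∈ Finset.Icc 1 K, (z + μ j) ^ (-α))))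
          + ∫ z in Set.Ioi (1:ℝ), α * z ^ (-α - 1) *
              Real.exp (-(∑ j ∈ Finset.Icc 1 K, (z + μ j) ^ (-α)))
        ≤ Real.exp (-c) * Real.exp (-1) + ((1 + c)⁻¹ - (1 + c)⁻¹ * Real.exp (-(1 + c))) :=
          add_le_add hB1 hB2
      _ = Real.exp (-(1 + c)) + ((1 + c)⁻¹ - (1 + c)⁻¹ * Real.exp (-(1 + c))) := by
          rw [← Real.exp_add, show -c + -1 = -(1 + c) from by ring]
  -- final arithmetic
  set Eo : ℝ := Real.exp (-(1 + c)) with hEodef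
  have hEo0 : 0 < Eo := Real.exp_pos _
  have hkey : Eo * (2 + c) ≤ 1 := by
    have h1 : (1 + c) + 1 ≤ Real.exp (1 + c) := Real.add_one_le_exp _
    have h2 : Eo = (Real.exp (1 + c))⁻¹ := by rw [hEodef, Real.exp_neg]
    rw [h2, inv_mul_le_iff₀ (Real.exp_pos _)]
    nlinarith [h1]
  have hP : ((2:ℝ) ^ (α + 1)) * c = 2 := by
    rw [hcdef, ← Real.rpow_add two_pos, show α + 1 + -α = 1 from by ring, Real.rpow_one]
  have hP0 : (0:ℝ) < (2:ℝ) ^ (α + 1) := Real.rpow_pos_of_pos two_pos _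
  have h1c : (0:ℝ) < 1 + c := by linarith
  have hscal : ((2:ℝ) ^ (α + 1) + 1)⁻¹ ≤ 1 - (Eo + ((1 + c)⁻¹ - (1 + c)⁻¹ * Eo)) := by
    set J : ℝ := (1 + c)⁻¹ with hJdef
    have hJ : J * (1 + c) = 1 := inv_mul_cancel₀ (ne_of_gt h1c)
    have hJ0 : (0:ℝ) ≤ J := inv_nonneg.mpr h1c.le
    have hPinv : ((2:ℝ) ^ (α + 1) + 1)⁻¹ = c / (2 + c) := by
      rw [inv_eq_one_div, div_eq_div_iff (by linarith) (by linarith)]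
      linear_combination -hP
    rw [hPinv, div_le_iff₀ (by linarith : (0:ℝ) < 2 + c)]
    have h5 : 1 + c ≤ (1 - Eo) * (2 + c) := by nlinarith [hkey]
    have h6 : 1 ≤ J * ((1 - Eo) * (2 + c)) := by
      calc (1:ℝ) = J * (1 + c) := hJ.symm
        _ ≤ J * ((1 - Eo) * (2 + c)) := mul_le_mul_of_nonneg_left h5 hJ0
    have h7 : c ≤ c * (J * ((1 - Eo) * (2 + c))) := by nlinarith [h6, hc0.le]
    have h8 : 1 - J = J * c := by linarith [hJ]
    calc c ≤ c * (J * ((1 - Eo) * (2 + c))) := h7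
      _ = (1 - (Eo + (J - J * Eo))) * (2 + c) := by linear_combination (-(1 - Eo) * (2 + c)) * h8
  -- chain everything
  have hEnonneg_int : 1 - (Eo + ((1 + c)⁻¹ - (1 + c)⁻¹ * Eo)) ≤
      1 - ∫ z in Set.Ioi (0:ℝ), α * z ^ (-α - 1) *
        Real.exp (-(∑ j ∈ Finset.Icc 1 K, (z + μ j) ^ (-α))) := by linarith [hBbd]
  have hchain : Δm * (((2:ℝ) ^ (α + 1) + 1)⁻¹) ≤ α * ∫ z in Set.Ioi (0:ℝ), M z := by
    calc Δm * (((2:ℝ) ^ (α + 1) + 1)⁻¹)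
        ≤ Δm * (1 - (Eo + ((1 + c)⁻¹ - (1 + c)⁻¹ * Eo))) :=
          mul_le_mul_of_nonneg_left hscal hΔm0
      _ ≤ Δm * (1 - ∫ z in Set.Ioi (0:ℝ), α * z ^ (-α - 1) *
            Real.exp (-(∑ j ∈ Finset.Icc 1 K, (z + μ j) ^ (-α)))) :=
          mul_le_mul_of_nonneg_left hEnonneg_int hΔm0
      _ = α * ((Δm * α⁻¹) * (1 - ∫ z in Set.Ioi (0:ℝ), α * z ^ (-α - 1) *
            Real.exp (-(∑ j ∈ Finset.Icc 1 K, (z + μ j) ^ (-α))))) := by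
          field_simp
      _ ≤ α * ∫ z in Set.Ioi (0:ℝ), M z :=
          mul_le_mul_of_nonneg_left hcomp hα0.le
  rw [div_eq_mul_inv]
  exact hchain
end

section
/- For every real n > 0 and every real x > 0, one has x · (1 + x²/n)^{−(n+1)/2} ≤ n · ∫ₓ^∞ (1 + t²/n)^{−(n+1)/2} dt. (Equivalently, the Student-t distribution with n degrees of freedom satisfies x f(x)/(1 − F(x)) ≤ n for all x > 0, where f and F are its density and distribution functions.) -/
open Real MeasureTheory

/-- The Student-t distribution with `n` degrees of freedom satisfies
`x f(x)/(1 - F(x)) ≤ n` for `x > 0`; after cancelling the normalizing constant: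
`x (1 + x²/n)^(-(n+1)/2) ≤ n ∫ₓ^∞ (1 + t²/n)^(-(n+1)/2) dt`. -/
theorem stmt_16 (n x : ℝ) (hn : 0 < n) (hx : 0 < x) :
    x * (1 + x ^ 2 / n) ^ (-((n + 1) / 2)) ≤
      n * ∫ t in Set.Ioi x, (1 + t ^ 2 / n) ^ (-((n + 1) / 2)) := by
  set p : ℝ := -((n + 1) / 2) with hp
  have hp0 : p ≤ 0 := by rw [hp]; nlinarith
  have hu : ∀ t : ℝ, 0 < 1 + t ^ 2 / n := fun t => by positivity
  set f : ℝ → ℝ := fun t => (1 + t ^ 2 / n) ^ p with hfdef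
  set g : ℝ → ℝ := fun t => (1 + t ^ 2 / n) ^ (p - 1) with hgdef
  -- the split of u^p
  have hup : ∀ t : ℝ, f t = (1 + t ^ 2 / n) * g t := by
    intro t
    have := Real.rpow_add (hu t) 1 (p - 1)
    rw [show (1 : ℝ) + (p - 1) = p by ring, Real.rpow_one] at this
    simpa [hfdef, hgdef] using this
  -- derivative of F(t) = t * f t
  have hderiv : ∀ t : ℝ, HasDerivAt (fun s => s * f s) (-n * f t + (n + 1) * g t) t := by
    intro t
    have h1 : HasDerivAt (fun s : ℝ => 1 + s ^ 2 / n) (2 * t / n) t := by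
      have := ((hasDerivAt_pow 2 t).div_const n).const_add 1
      simpa using this
    have h2 : HasDerivAt f (2 * t / n * p * (1 + t ^ 2 / n) ^ (p - 1)) t :=
      h1.rpow_const (Or.inl (hu t).ne')
    have h3 : HasDerivAt (fun s => s * f s) (1 * f t + t * (2 * t / n * p * (1 + t ^ 2 / n) ^ (p - 1))) t :=
      (hasDerivAt_id' t).mul h2
    convert h3 using 1
    have := hup t
    simp only [hgdef] at this ⊢
    rw [this, hp]
    field_simp
    ring
  -- pointwise bound: f t ≤ n^(-p) * t^(2*p) for t > 0
  have hbound : ∀ t : ℝ, 0 < t → f t ≤ n ^ (-p) * t ^ (2 * p) := by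
    intro t ht
    have h1 : f t ≤ (t ^ 2 / n) ^ p :=
      Real.rpow_le_rpow_of_nonpos (by positivity) (by linarith) hp0
    have h2 : (t ^ 2 / n) ^ p = n ^ (-p) * t ^ (2 * p) := by
      rw [Real.div_rpow (by positivity) hn.le, ← Real.rpow_natCast t 2,
        ← Real.rpow_mul ht.le, Real.rpow_neg hn.le, div_eq_inv_mul]
      rw [hp]
      ring_nf
      rw [inv_inv]
    linarith [h1, h2.le]
  -- limit of F at infinity
  have hlim : Filter.Tendsto (fun t => t * f t) Filter.atTop (nhds 0) := by
    have h2 : Filter.Tendsto (fun t : ℝ => n ^ (-p) * t ^ (-n)) Filter.atTop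
        (nhds (n ^ (-p) * 0)) := (tendsto_rpow_neg_atTop hn).const_mul _
    rw [mul_zero] at h2
    refine tendsto_of_tendsto_of_tendsto_of_le_of_le' tendsto_const_nhds h2 ?_ ?_
    · filter_upwards [Filter.eventually_gt_atTop 0] with t ht
      have : 0 ≤ f t := Real.rpow_nonneg (hu t).le _
      positivity
    · filter_upwards [Filter.eventually_gt_atTop 0] with t ht
      have h1 : t * f t ≤ t * (n ^ (-p) * t ^ (2 * p)) :=
        mul_le_mul_of_nonneg_left (hbound t ht) ht.le
      have h3 : t * t ^ (2 * p) = t ^ (-n) := by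
        rw [show -n = 1 + 2 * p by rw [hp]; ring, Real.rpow_add ht, Real.rpow_one]
      calc t * f t ≤ t * (n ^ (-p) * t ^ (2 * p)) := h1
        _ = n ^ (-p) * (t * t ^ (2 * p)) := by ring
        _ = n ^ (-p) * t ^ (-n) := by rw [h3]
  -- integrability of f
  have hfmeas : Continuous f := by
    apply Continuous.rpow_const
    · continuity
    · exact fun t => Or.inl (hu t).ne'
  have hf_int : IntegrableOn f (Set.Ioi x) := by
    have hmaj : IntegrableOn (fun t : ℝ => n ^ (-p) * t ^ (2 * p)) (Set.Ioi x) :=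
      (integrableOn_Ioi_rpow_of_lt (by rw [hp]; linarith) hx).const_mul _
    refine hmaj.mono' hfmeas.aestronglyMeasurable ?_
    filter_upwards [ae_restrict_mem measurableSet_Ioi] with t ht
    rw [Real.norm_eq_abs, abs_of_nonneg (Real.rpow_nonneg (hu t).le _)]
    exact hbound t (hx.trans ht)
  -- integrability of g
  have hg_int : IntegrableOn g (Set.Ioi x) := by
    refine hf_int.mono' ?_ ?_
    · exact (Continuous.rpow_const (by continuity) (fun t => Or.inl (hu t).ne')).aestronglyMeasurable
    · filter_upwards with t
      rw [Real.norm_eq_abs, abs_of_nonneg (Real.rpow_nonneg (hu t).le _)]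
      have h0 : (0:ℝ) ≤ t ^ 2 / n := by positivity
      exact Real.rpow_le_rpow_of_exponent_le (by linarith) (by linarith)
  -- FTC
  have hint : IntegrableOn (fun t => -n * f t + (n + 1) * g t) (Set.Ioi x) :=
    (hf_int.const_mul (-n)).add (hg_int.const_mul (n + 1))
  have hFTC := integral_Ioi_of_hasDerivAt_of_tendsto' (fun t _ => hderiv t) hint hlim
  rw [integral_add (hf_int.const_mul (-n)) (hg_int.const_mul (n + 1)),
    integral_const_mul, integral_const_mul, zero_sub] at hFTC
  have hg0 : 0 ≤ ∫ t in Set.Ioi x, g t :=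
    integral_nonneg fun t => Real.rpow_nonneg (hu t).le _
  show x * f x ≤ n * ∫ t in Set.Ioi x, f t
  nlinarith [hFTC, hg0, hn]
end

section
/- For all reals m > 0, n > 0, and x > 0, one has x^{m/2} · (1 + (m/n) x)^{−(m+n)/2} ≤ (n/2) · ∫ₓ^∞ t^{m/2 − 1} (1 + (m/n) t)^{−(m+n)/2} dt. (Equivalently, Snedecor's F distribution with parameters m, n satisfies x f(x)/(1 − F(x)) ≤ n/2 for all x > 0, where f and F are its density and distribution functions.) -/
open Real MeasureTheory
open Set Filter Topology

/-- Snedecor's F distribution with parameters `m, n` satisfies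
`x f(x)/(1 - F(x)) ≤ n/2` for `x > 0`; after cancelling the normalizing constant:
`x^(m/2) (1 + (m/n) x)^(-(m+n)/2) ≤ (n/2) ∫ₓ^∞ t^(m/2-1) (1 + (m/n) t)^(-(m+n)/2) dt`. -/
theorem stmt_17 (m n x : ℝ) (hm : 0 < m) (hn : 0 < n) (hx : 0 < x) :
    x ^ (m / 2) * (1 + m / n * x) ^ (-((m + n) / 2)) ≤
      n / 2 * ∫ t in Set.Ioi x, t ^ (m / 2 - 1) * (1 + m / n * t) ^ (-((m + n) / 2)) := by
  set c : ℝ := m / n with hc_def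
  have hc : 0 < c := div_pos hm hn
  set p : ℝ := (m + n) / 2 with hp_def
  have hp : 0 < p := by positivity
  obtain ⟨f, hf_def⟩ : ∃ f' : ℝ → ℝ, f' = fun t => t ^ (m / 2 - 1) * (1 + c * t) ^ (-p) :=
    ⟨_, rfl⟩
  obtain ⟨g, hg_def⟩ : ∃ g' : ℝ → ℝ, g' = fun t => -(t ^ (m / 2) * (1 + c * t) ^ (-p)) :=
    ⟨_, rfl⟩
  obtain ⟨D, hD_def⟩ : ∃ D' : ℝ → ℝ, D' = fun t =>
      p * c * t ^ (m / 2) * (1 + c * t) ^ (-p - 1)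
        - m / 2 * t ^ (m / 2 - 1) * (1 + c * t) ^ (-p) := ⟨_, rfl⟩
  -- derivative of g
  have hderiv : ∀ t ∈ Ici x, HasDerivAt g (D t) t := by
    intro t ht
    simp only [hg_def, hD_def]
    have ht0 : 0 < t := lt_of_lt_of_le hx ht
    have hb : 0 < 1 + c * t := by positivity
    have h1 : HasDerivAt (fun t : ℝ => t ^ (m / 2)) (m / 2 * t ^ (m / 2 - 1)) t := by
      simpa [mul_comm] using Real.hasDerivAt_rpow_const (x := t) (p := m / 2) (Or.inl ht0.ne')
    have h2 : HasDerivAt (fun t : ℝ => 1 + c * t) c t := by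
      simpa using ((hasDerivAt_id t).const_mul c).const_add 1
    have h3 : HasDerivAt (fun t : ℝ => (1 + c * t) ^ (-p))
        (c * (-p) * (1 + c * t) ^ (-p - 1)) t := h2.rpow_const (Or.inl hb.ne')
    have := (h1.mul h3).neg
    refine HasDerivAt.congr_deriv this ?_
    ring
  -- pointwise positivity facts
  have hfpos : ∀ t ∈ Ioi x, 0 ≤ f t := by
    intro t ht
    simp only [hf_def]
    have ht0 : 0 < t := hx.trans ht
    have hb : 0 < 1 + c * t := by positivity
    positivity
  -- key pointwise bound : D t ≤ n/2 * f t on Ici x, and |D t| ≤ (m/2 + p) * f t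
  have hkey : ∀ t : ℝ, x ≤ t → D t ≤ n / 2 * f t ∧ |D t| ≤ (m / 2 + p) * f t := by
    intro t ht
    have ht0 : 0 < t := lt_of_lt_of_le hx ht
    have hb : 0 < 1 + c * t := by positivity
    have hA : 0 < t ^ (m / 2 - 1) := rpow_pos_of_pos ht0 _
    have hB : 0 < (1 + c * t) ^ (-p - 1) := rpow_pos_of_pos hb _
    have e1 : t ^ (m / 2) = t * t ^ (m / 2 - 1) := by
      conv_lhs => rw [show m / 2 = 1 + (m / 2 - 1) by ring, Real.rpow_add ht0, Real.rpow_one]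
    have e2 : (1 + c * t) ^ (-p) = (1 + c * t) * (1 + c * t) ^ (-p - 1) := by
      conv_lhs => rw [show -p = 1 + (-p - 1) by ring, Real.rpow_add hb, Real.rpow_one]
    have hD : D t = t ^ (m / 2 - 1) * (1 + c * t) ^ (-p - 1) * (m / 2 * (t - 1)) := by
      have hpc : p * c - m / 2 * c = m / 2 := by
        rw [hp_def, hc_def]; field_simp; ring
      simp only [hD_def, e1, e2]
      linear_combination t ^ (m / 2 - 1) * (1 + c * t) ^ (-p - 1) * t * hpc
    have hf' : f t = t ^ (m / 2 - 1) * (1 + c * t) ^ (-p - 1) * (1 + c * t) := by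
      simp only [hf_def, e2]; ring
    constructor
    · rw [hD, hf']
      have h1 : m / 2 * (t - 1) ≤ n / 2 * (1 + c * t) := by
        have hnc : n * c = m := by rw [hc_def]; field_simp
        nlinarith
      nlinarith [mul_pos hA hB]
    · rw [hD, hf', abs_mul, abs_of_pos (mul_pos hA hB)]
      have hnc : n * c = m := by rw [hc_def]; field_simp
      have hpc2 : m / 2 ≤ p * c := by
        have : p * c = (m + n) / 2 * (m / n) := by rw [hp_def, hc_def]
        nlinarith [div_pos hm hn, mul_pos hm (div_pos hm hn)]
      have h2 : |m / 2 * (t - 1)| ≤ (m / 2 + p) * (1 + c * t) := by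
        rw [abs_le]
        constructor
        · nlinarith [mul_pos hc ht0, mul_pos hp (mul_pos hc ht0)]
        · nlinarith [mul_pos hc ht0, mul_le_mul_of_nonneg_right hpc2 ht0.le]
      nlinarith [mul_pos hA hB, abs_nonneg (m / 2 * (t - 1))]
  -- integrability of f on Ioi x
  have hfint : IntegrableOn f (Ioi x) := by
    have hmeas : AEStronglyMeasurable f (volume.restrict (Ioi x)) := by
      rw [hf_def]
      apply Measurable.aestronglyMeasurable
      exact ((measurable_id.pow measurable_const)).mul
        ((measurable_const.add (measurable_id.const_mul c)).pow measurable_const)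
    have hint : IntegrableOn (fun t : ℝ => c ^ (-p) * t ^ (-(n / 2) - 1)) (Ioi x) :=
      (integrableOn_Ioi_rpow_of_lt (by linarith) hx).const_mul _
    refine hint.mono' hmeas ?_
    filter_upwards [ae_restrict_mem measurableSet_Ioi] with t ht
    have ht0 : 0 < t := hx.trans ht
    have hb : 0 < 1 + c * t := by positivity
    have hbe : (1 + c * t) ^ (-p) ≤ (c * t) ^ (-p) :=
      Real.rpow_le_rpow_of_nonpos (by positivity) (by linarith) (by linarith)
    rw [Real.norm_eq_abs, abs_of_nonneg (hfpos t ht), hf_def]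
    calc t ^ (m / 2 - 1) * (1 + c * t) ^ (-p) ≤ t ^ (m / 2 - 1) * (c * t) ^ (-p) :=
          mul_le_mul_of_nonneg_left hbe (le_of_lt (rpow_pos_of_pos ht0 _))
      _ = c ^ (-p) * t ^ (-(n / 2) - 1) := by
          rw [Real.mul_rpow hc.le ht0.le,
            show t ^ (m / 2 - 1) * (c ^ (-p) * t ^ (-p))
              = c ^ (-p) * (t ^ (m / 2 - 1) * t ^ (-p)) by ring,
            ← Real.rpow_add ht0, show m / 2 - 1 + -p = -(n / 2) - 1 by rw [hp_def]; ring]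
  -- integrability of D on Ioi x
  have hDint : IntegrableOn D (Ioi x) := by
    have hmeas : AEStronglyMeasurable D (volume.restrict (Ioi x)) := by
      rw [hD_def]
      apply Measurable.aestronglyMeasurable
      apply Measurable.sub
      · exact ((measurable_const.mul (measurable_id.pow measurable_const)).mul
          ((measurable_const.add (measurable_id.const_mul c)).pow measurable_const))
      · exact (measurable_const.mul (measurable_id.pow measurable_const)).mul
          ((measurable_const.add (measurable_id.const_mul c)).pow measurable_const)
    refine (hfint.const_mul (m / 2 + p)).mono' hmeas ?_
    filter_upwards [ae_restrict_mem measurableSet_Ioi] with t ht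
    rw [Real.norm_eq_abs]
    exact (hkey t (le_of_lt ht)).2
  -- limit of g at infinity
  have hlim : Tendsto g atTop (𝓝 0) := by
    have h1 : Tendsto (fun t : ℝ => (t⁻¹ + c) ^ (-p) * t ^ (-(n / 2))) atTop (𝓝 0) := by
      have ha : Tendsto (fun t : ℝ => (t⁻¹ + c) ^ (-p)) atTop (𝓝 (c ^ (-p))) := by
        have : Tendsto (fun t : ℝ => t⁻¹ + c) atTop (𝓝 (0 + c)) :=
          tendsto_inv_atTop_zero.add tendsto_const_nhds
        rw [zero_add] at this
        exact (Real.continuousAt_rpow_const c (-p) (Or.inl hc.ne')).tendsto.comp this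
      have hb2 : Tendsto (fun t : ℝ => t ^ (-(n / 2))) atTop (𝓝 0) :=
        tendsto_rpow_neg_atTop (by positivity)
      have h4 := ha.mul hb2
      rw [mul_zero] at h4
      exact h4
    have h2 : Tendsto (fun t : ℝ => t ^ (m / 2) * (1 + c * t) ^ (-p)) atTop (𝓝 0) := by
      refine h1.congr' ?_
      filter_upwards [eventually_gt_atTop 0] with t ht0
      have hb : 0 < 1 + c * t := by positivity
      have e0 : (1 + c * t) = t * (t⁻¹ + c) := by field_simp
      have e : t ^ (m / 2) * (1 + c * t) ^ (-p) = (t⁻¹ + c) ^ (-p) * t ^ (-(n / 2)) := by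
        rw [e0, Real.mul_rpow ht0.le (by positivity),
          show t ^ (m / 2) * (t ^ (-p) * (t⁻¹ + c) ^ (-p))
            = (t⁻¹ + c) ^ (-p) * (t ^ (m / 2) * t ^ (-p)) by ring,
          ← Real.rpow_add ht0, show m / 2 + -p = -(n / 2) by rw [hp_def]; ring]
      exact e.symm
    have h3 := h2.neg
    rw [neg_zero] at h3
    rw [hg_def]
    exact h3
  -- FTC
  have hFTC : ∫ t in Ioi x, D t = 0 - g x :=
    integral_Ioi_of_hasDerivAt_of_tendsto' hderiv hDint hlim
  have hgx : g x = -(x ^ (m / 2) * (1 + c * x) ^ (-p)) := by rw [hg_def]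
  have hmono : ∫ t in Ioi x, D t ≤ ∫ t in Ioi x, n / 2 * f t := by
    refine setIntegral_mono_on hDint (hfint.const_mul _) measurableSet_Ioi ?_
    intro t ht
    exact (hkey t (le_of_lt ht)).1
  rw [integral_const_mul] at hmono
  have : x ^ (m / 2) * (1 + c * x) ^ (-p) = ∫ t in Ioi x, D t := by
    rw [hFTC, hgx]; ring
  calc x ^ (m / 2) * (1 + m / n * x) ^ (-((m + n) / 2))
      = ∫ t in Ioi x, D t := this
    _ ≤ n / 2 * ∫ t in Ioi x, f t := hmono
    _ = n / 2 * ∫ t in Ioi x, t ^ (m / 2 - 1) * (1 + c * t) ^ (-p) := by simp only [hf_def]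
end

section
/- Fix reals m > 0 and n > 0, let f(t) = t^{m/2 − 1} (1 + (m/n) t)^{−(m+n)/2} for t > 0, and let F(x) = ∫₀ˣ f(t) dt. Then the ratio f(x)/F(x) is monotonically nonincreasing on (0, ∞); that is, for all 0 < y ≤ x one has f(x) F(y) ≤ f(y) F(x). -/
open Real MeasureTheory

/-- For the (unnormalized) Snedecor-F density
`f(t) = t^(m/2-1) (1 + (m/n) t)^(-(m+n)/2)` with `F(x) = ∫₀ˣ f(t) dt`, the ratio
`f/F` is monotonically nonincreasing on `(0, ∞)`: for `0 < y ≤ x`,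
`f(x) F(y) ≤ f(y) F(x)`. -/
theorem stmt_18 (m n : ℝ) (hm : 0 < m) (hn : 0 < n)
    (f : ℝ → ℝ) (hf : ∀ t, f t = t ^ (m / 2 - 1) * (1 + m / n * t) ^ (-((m + n) / 2)))
    (F : ℝ → ℝ) (hF : ∀ x, F x = ∫ t in (0:ℝ)..x, f t)
    (x y : ℝ) (hy : 0 < y) (hyx : y ≤ x) :
    f x * F y ≤ f y * F x := by
  have hx : 0 < x := hy.trans_le hyx
  set a := m / 2 - 1 with ha
  set b := (m + n) / 2 with hb
  set c := m / n with hc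
  have hc0 : 0 < c := div_pos hm hn
  have hb0 : 0 < b := by rw [hb]; linarith
  have ha1 : -1 < a := by rw [ha]; linarith
  set l := y / x with hl
  have hl0 : 0 < l := div_pos hy hx
  have hl1 : l ≤ 1 := (div_le_one hx).mpr hyx
  have hlx : l * x = y := div_mul_cancel₀ y hx.ne'
  -- integrability of f on [0, T] for T ≥ 0
  have hfi : ∀ T : ℝ, 0 ≤ T → IntervalIntegrable f volume 0 T := by
    intro T hT
    have h1 : IntervalIntegrable (fun t : ℝ => t ^ a) volume 0 T :=
      intervalIntegral.intervalIntegrable_rpow' ha1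
    have h2 : ContinuousOn (fun t : ℝ => (1 + c * t) ^ (-b)) (Set.uIcc 0 T) := by
      apply ContinuousOn.rpow_const
      · fun_prop
      · intro t ht
        rw [Set.uIcc_of_le hT] at ht
        have ht0 : 0 ≤ t := ht.1
        exact Or.inl (by positivity)
    have h3 := h1.mul_continuousOn h2
    exact h3.congr (fun t _ => (hf t).symm)
  -- integrability of s ↦ f (l * s) on [0, x]
  have hyl : y / l = x := by rw [hl]; field_simp
  have hcomp : IntervalIntegrable (fun s => f (l * s)) volume 0 x := by
    have h := (hfi y hy.le).comp_mul_left (c := l)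
    rwa [zero_div, hyl] at h
  -- substitution
  have hsub : (∫ s in (0:ℝ)..x, f (l * s)) = l⁻¹ * F y := by
    rw [intervalIntegral.integral_comp_mul_left f hl0.ne', mul_zero, hlx, hF y, smul_eq_mul]
  -- pointwise inequality
  have key : ∀ s ∈ Set.Icc (0:ℝ) x, f x * (l * f (l * s)) ≤ f y * f s := by
    intro s hs
    obtain ⟨hs0, hsx⟩ := hs
    have h1x : (0:ℝ) ≤ 1 + c * x := by positivity
    have h1ls : (0:ℝ) ≤ 1 + c * (l * s) := by positivity
    have h1y : (0:ℝ) < 1 + c * y := by positivity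
    have h1s : (0:ℝ) ≤ 1 + c * s := by positivity
    have hQ0 : (0:ℝ) < (1 + c * y) * (1 + c * s) := by positivity
    have hQP : (1 + c * y) * (1 + c * s) ≤ (1 + c * x) * (1 + c * (l * s)) := by
      nlinarith [mul_nonneg hc0.le (mul_nonneg (sub_nonneg.2 hl1) (sub_nonneg.2 hsx)), hlx]
    have hkey : l * (((1 + c * x) * (1 + c * (l * s))) ^ (-b))
        ≤ ((1 + c * y) * (1 + c * s)) ^ (-b) := by
      calc l * ((1 + c * x) * (1 + c * (l * s))) ^ (-b)
          ≤ 1 * ((1 + c * x) * (1 + c * (l * s))) ^ (-b) :=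
            mul_le_mul_of_nonneg_right hl1 (Real.rpow_nonneg (by positivity) _)
        _ = ((1 + c * x) * (1 + c * (l * s))) ^ (-b) := one_mul _
        _ ≤ ((1 + c * y) * (1 + c * s)) ^ (-b) :=
            Real.rpow_le_rpow_of_nonpos hQ0 hQP (neg_nonpos.2 hb0.le)
    have hya : y ^ a = l ^ a * x ^ a := by
      rw [← hlx, Real.mul_rpow hl0.le hx.le]
    have e1 : f x * (l * f (l * s))
        = (x ^ a * l ^ a * s ^ a) * (l * (((1 + c * x) * (1 + c * (l * s))) ^ (-b))) := by
      rw [hf x, hf (l * s), Real.mul_rpow hl0.le hs0, Real.mul_rpow h1x h1ls]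
      ring
    have e2 : f y * f s
        = (x ^ a * l ^ a * s ^ a) * (((1 + c * y) * (1 + c * s)) ^ (-b)) := by
      rw [hf y, hf s, hya, Real.mul_rpow h1y.le h1s]
      ring
    rw [e1, e2]
    exact mul_le_mul_of_nonneg_left hkey (by positivity)
  calc f x * F y
      = ∫ s in (0:ℝ)..x, f x * (l * f (l * s)) := by
        rw [intervalIntegral.integral_const_mul, intervalIntegral.integral_const_mul, hsub,
          mul_inv_cancel_left₀ hl0.ne']
    _ ≤ ∫ s in (0:ℝ)..x, f y * f s :=
        intervalIntegral.integral_mono_on hx.le ((hcomp.const_mul l).const_mul (f x))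
          ((hfi x hx.le).const_mul (f y)) key
    _ = f y * F x := by rw [intervalIntegral.integral_const_mul, hF x]
end
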